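/- arXiv:0712.2688 — 8 statements merged into one kernel-verified Lean document; each statement's English description precedes it below -/
import Mathlib

section
/- Let G be a finite simple graph on n vertices with at least one edge, and let t be the vertex cover number of G. Then cub(G) ≤ t + ⌈log₂(n − t)⌉ − 1. -/
/-- A `k`-cube representation of `G`: an assignment of unit cubes (given by their
lower corners) to vertices so that distinct vertices are adjacent iff all their
coordinate unit intervals intersect. -/
def HasCubeRep {V : Type*} (G : SimpleGraph V) (k : ℕ) : Prop :=
  ∃ c : V → Fin k → ℝ,
    ∀ u v : V, u ≠ v → (G.Adj u v ↔ ∀ i : Fin k, |c u i - c v i| ≤ 1)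

/-- The cubicity of `G`: the least `k` such that `G` has a `k`-cube representation. -/
noncomputable def cubicity {V : Type*} (G : SimpleGraph V) : ℕ :=
  sInf {k : ℕ | HasCubeRep G k}

/-- `Q` is a vertex cover of `G`. -/
def IsVertexCover {V : Type*} (G : SimpleGraph V) (Q : Finset V) : Prop :=
  ∀ ⦃u v : V⦄, G.Adj u v → u ∈ Q ∨ v ∈ Q

/-- The vertex cover number of `G`. -/
noncomputable def vertexCoverNumber {V : Type*} [Fintype V] (G : SimpleGraph V) : ℕ :=
  sInf {t : ℕ | ∃ Q : Finset V, IsVertexCover G Q ∧ Q.card = t}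

/-- Transport a cube representation along an equivalence of index types. -/
lemma hasCubeRep_of_equiv {V : Type*} (G : SimpleGraph V) {ι : Type*} {k : ℕ} (e : ι ≃ Fin k)
    (c : V → ι → ℝ)
    (h : ∀ u v : V, u ≠ v → (G.Adj u v ↔ ∀ i : ι, |c u i - c v i| ≤ 1)) :
    HasCubeRep G k := by
  refine ⟨fun v i => c v (e.symm i), fun u v huv => ?_⟩
  rw [h u v huv]
  constructor
  · exact fun h' i => h' _
  · intro h' i
    simpa using h' (e i)

/-- The main construction: given a vertex cover `Q`, a distinguished vertex `qs ∈ Q`,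
and an injective binary code on the complement of `Q` such that every non-neighbor
of `qs` outside `Q` has a nonzero code, the graph has a cube representation in
`(Q.erase qs).card + L` dimensions. -/
lemma cube_construction {V : Type*} [Fintype V] [DecidableEq V] (G : SimpleGraph V)
    [DecidableRel G.Adj]
    (Q : Finset V) (hQcov : IsVertexCover G Q) (qs : V) (hqs : qs ∈ Q) (L : ℕ)
    (code : V → Fin L → Bool)
    (hinj : ∀ v w, v ∉ Q → w ∉ Q → code v = code w → v = w)
    (hB : ∀ v, v ∉ Q → ¬ G.Adj qs v → ∃ j, code v j = true) :
    HasCubeRep G ((Q.erase qs).card + L) := by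
  classical
  set c : V → ({q : V // q ∈ Q.erase qs} ⊕ Fin L) → ℝ := fun v i =>
    Sum.elim
      (fun q : {q : V // q ∈ Q.erase qs} =>
        if v = (q : V) then (0:ℝ) else if G.Adj (q : V) v then 1 else 2)
      (fun j : Fin L =>
        if v = qs then 3/4 else if v ∈ Q then 1
        else if code v j then (if G.Adj qs v then 3/2 else 2) else 0) i
    with hc
  have hmain : ∀ u v : V, u ≠ v →
      (G.Adj u v ↔ ∀ i, |c u i - c v i| ≤ 1) := by
    intro u v huv
    constructor
    · intro hadj i
      rcases i with q | j
      · simp only [hc, Sum.elim_inl]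
        by_cases hu : u = (q : V)
        · rw [if_pos hu, if_neg (show v ≠ (q : V) from fun h => huv (hu.trans h.symm)),
            if_pos (hu ▸ hadj)]
          norm_num [abs_le]
        · by_cases hv : v = (q : V)
          · rw [if_neg hu, if_pos hv, if_pos (hv ▸ hadj.symm)]
            norm_num [abs_le]
          · have hbound : ∀ w, w ≠ (q : V) →
                (1:ℝ) ≤ (if w = (q : V) then (0:ℝ) else if G.Adj (q : V) w then 1 else 2) ∧
                (if w = (q : V) then (0:ℝ) else if G.Adj (q : V) w then 1 else 2) ≤ 2 := by
              intro w hw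
              rw [if_neg hw]
              split_ifs <;> norm_num
            obtain ⟨h1, h2⟩ := hbound u hu
            obtain ⟨h3, h4⟩ := hbound v hv
            rw [abs_sub_le_iff]
            constructor <;> linarith
      · have key : ∀ x y : V, G.Adj x y → x ∈ Q →
            |(if x = qs then (3:ℝ)/4 else if x ∈ Q then 1
              else if code x j then (if G.Adj qs x then 3/2 else 2) else 0) -
             (if y = qs then (3:ℝ)/4 else if y ∈ Q then 1
              else if code y j then (if G.Adj qs y then 3/2 else 2) else 0)| ≤ 1 := by
          intro x y hxy hxQ
          by_cases hxqs : x = qs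
          · rw [if_pos hxqs]
            by_cases hyqs : y = qs
            · exact absurd (hxqs.trans hyqs.symm) (G.ne_of_adj hxy)
            · rw [if_neg hyqs]
              by_cases hyQ : y ∈ Q
              · rw [if_pos hyQ]; norm_num [abs_le]
              · rw [if_neg hyQ, if_pos (show G.Adj qs y from hxqs ▸ hxy)]
                split_ifs <;> norm_num [abs_le]
          · rw [if_neg hxqs, if_pos hxQ]
            have hb : (0:ℝ) ≤ (if y = qs then (3:ℝ)/4 else if y ∈ Q then 1
                else if code y j then (if G.Adj qs y then 3/2 else 2) else 0) ∧
                (if y = qs then (3:ℝ)/4 else if y ∈ Q then 1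
                else if code y j then (if G.Adj qs y then 3/2 else 2) else 0) ≤ 2 := by
              split_ifs <;> norm_num
            rw [abs_sub_le_iff]
            constructor <;> linarith [hb.1, hb.2]
        simp only [hc, Sum.elim_inr]
        rcases hQcov hadj with hu | hv
        · exact key u v hadj hu
        · rw [abs_sub_comm]
          exact key v u hadj.symm hv
    · intro hall
      by_contra hnadj
      by_cases h1 : u ∈ Q ∧ u ≠ qs
      · have hm : u ∈ Q.erase qs := Finset.mem_erase.mpr ⟨h1.2, h1.1⟩
        have h0 := hall (Sum.inl ⟨u, hm⟩)
        have e1 : c u (Sum.inl ⟨u, hm⟩) = 0 := by simp [hc]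
        have e2 : c v (Sum.inl ⟨u, hm⟩) = 2 := by
          simp [hc, (show v ≠ u from fun h => huv h.symm), hnadj]
        rw [e1, e2] at h0
        norm_num [abs_le] at h0
      · by_cases h2 : v ∈ Q ∧ v ≠ qs
        · have hm : v ∈ Q.erase qs := Finset.mem_erase.mpr ⟨h2.2, h2.1⟩
          have hnadj' : ¬ G.Adj v u := fun h => hnadj h.symm
          have h0 := hall (Sum.inl ⟨v, hm⟩)
          have e1 : c u (Sum.inl ⟨v, hm⟩) = 2 := by simp [hc, huv, hnadj']
          have e2 : c v (Sum.inl ⟨v, hm⟩) = 0 := by simp [hc]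
          rw [e1, e2] at h0
          norm_num [abs_le] at h0
        · push_neg at h1 h2
          by_cases huQ : u ∈ Q
          · have hu : u = qs := h1 huQ
            by_cases hvQ : v ∈ Q
            · exact huv (hu.trans (h2 hvQ).symm)
            · have hnq : ¬ G.Adj qs v := by rw [← hu]; exact hnadj
              obtain ⟨j, hj⟩ := hB v hvQ hnq
              have h0 := hall (Sum.inr j)
              have hvqs : v ≠ qs := fun h => hvQ (by rw [h]; exact hqs)
              have e1 : c u (Sum.inr j) = 3/4 := by simp [hc, hu]
              have e2 : c v (Sum.inr j) = 2 := by simp [hc, hvqs, hvQ, hj, hnq]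
              rw [e1, e2] at h0
              norm_num [abs_le] at h0
          · by_cases hvQ : v ∈ Q
            · have hv : v = qs := h2 hvQ
              have hnq : ¬ G.Adj qs u := by rw [← hv]; exact fun h => hnadj h.symm
              obtain ⟨j, hj⟩ := hB u huQ hnq
              have h0 := hall (Sum.inr j)
              have huqs : u ≠ qs := fun h => huQ (by rw [h]; exact hqs)
              have e1 : c u (Sum.inr j) = 2 := by simp [hc, huqs, huQ, hj, hnq]
              have e2 : c v (Sum.inr j) = 3/4 := by simp [hc, hv]
              rw [e1, e2] at h0
              norm_num [abs_le] at h0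
            · have huqs : u ≠ qs := fun h => huQ (by rw [h]; exact hqs)
              have hvqs : v ≠ qs := fun h => hvQ (by rw [h]; exact hqs)
              have hne : code u ≠ code v := fun h => huv (hinj _ _ huQ hvQ h)
              have hj' : ∃ j, code u j ≠ code v j := by
                by_contra h
                push_neg at h
                exact hne (funext h)
              obtain ⟨j, hj⟩ := hj'
              have h0 := hall (Sum.inr j)
              cases hcu : code u j <;> cases hcv : code v j
              · exact hj (by rw [hcu, hcv])
              · have e1 : c u (Sum.inr j) = 0 := by simp [hc, huqs, huQ, hcu]
                have e2 : c v (Sum.inr j) = if G.Adj qs v then 3/2 else 2 := by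
                  simp [hc, hvqs, hvQ, hcv]
                rw [e1, e2] at h0
                split_ifs at h0 <;> norm_num [abs_le] at h0
              · have e1 : c u (Sum.inr j) = if G.Adj qs u then 3/2 else 2 := by
                  simp [hc, huqs, huQ, hcu]
                have e2 : c v (Sum.inr j) = 0 := by simp [hc, hvqs, hvQ, hcv]
                rw [e1, e2] at h0
                split_ifs at h0 <;> norm_num [abs_le] at h0
              · exact hj (by rw [hcu, hcv])
  have hcards : Fintype.card ({q : V // q ∈ Q.erase qs} ⊕ Fin L) =
      (Q.erase qs).card + L := by
    rw [Fintype.card_sum, Fintype.card_coe, Fintype.card_fin]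
  exact hasCubeRep_of_equiv G (Fintype.equivFinOfCardEq hcards) c hmain

/-- Cubicity is at most `t + ⌈log₂ (n - t)⌉ - 1` where `t` is the vertex cover
number and `n` the number of vertices, for any graph with at least one edge. -/
theorem cubicity_le_vertexCover {V : Type*} [Fintype V] (G : SimpleGraph V)
    (hE : G.edgeSet.Nonempty) (n t : ℕ)
    (hn : n = Fintype.card V) (ht : t = vertexCoverNumber G) :
    cubicity G ≤ t + Nat.clog 2 (n - t) - 1 := by
  classical
  obtain ⟨a, b, hab⟩ : ∃ a b, G.Adj a b := by
    obtain ⟨e, he⟩ := hE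
    revert he
    refine Sym2.ind (fun x y hxy => ?_) e
    exact ⟨x, y, (SimpleGraph.mem_edgeSet G).mp hxy⟩
  subst hn ht
  set t := vertexCoverNumber G with htdef
  set L := Nat.clog 2 (Fintype.card V - t) with hLdef
  have hSne : {k : ℕ | ∃ Q : Finset V, IsVertexCover G Q ∧ Q.card = k}.Nonempty :=
    ⟨Fintype.card V, Finset.univ, fun u v _ => Or.inl (Finset.mem_univ u), by simp⟩
  have hts : t = sInf {k : ℕ | ∃ Q : Finset V, IsVertexCover G Q ∧ Q.card = k} := rfl
  obtain ⟨Q, hQcov, hQcard⟩ := Nat.sInf_mem hSne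
  rw [← hts] at hQcard
  have hmin : ∀ k ∈ {k : ℕ | ∃ Q : Finset V, IsVertexCover G Q ∧ Q.card = k}, t ≤ k := by
    intro k hk
    rw [hts]
    exact Nat.sInf_le hk
  have h1t : 1 ≤ t := by
    rcases hQcov hab with h | h
    · exact hQcard ▸ Finset.card_pos.mpr ⟨a, h⟩
    · exact hQcard ▸ Finset.card_pos.mpr ⟨b, h⟩
  have hnbr : ∀ q ∈ Q, ∃ u, u ∉ Q ∧ G.Adj q u := by
    intro q hq
    by_contra h
    push_neg at h
    have hcov' : IsVertexCover G (Q.erase q) := by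
      intro x y hxy
      rcases hQcov hxy with hx | hy
      · by_cases hxq : x = q
        · right
          have hyQ : y ∈ Q := by
            by_contra hyQ
            exact h y hyQ (hxq ▸ hxy)
          exact Finset.mem_erase.mpr ⟨fun hyq => G.ne_of_adj hxy (hxq.trans hyq.symm), hyQ⟩
        · exact Or.inl (Finset.mem_erase.mpr ⟨hxq, hx⟩)
      · by_cases hyq : y = q
        · left
          have hxQ : x ∈ Q := by
            by_contra hxQ
            exact h x hxQ (hyq ▸ hxy.symm)
          exact Finset.mem_erase.mpr ⟨fun hxq => G.ne_of_adj hxy (hxq.trans hyq.symm), hxQ⟩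
        · exact Or.inr (Finset.mem_erase.mpr ⟨hyq, hy⟩)
    have hle := hmin _ ⟨Q.erase q, hcov', rfl⟩
    rw [Finset.card_erase_of_mem hq, hQcard] at hle
    omega
  obtain ⟨qs, hqs⟩ : ∃ q, q ∈ Q := by
    rcases hQcov hab with h | h
    · exact ⟨a, h⟩
    · exact ⟨b, h⟩
  obtain ⟨us, husQ, hadjs⟩ := hnbr qs hqs
  have hcard : Fintype.card {v : V // v ∉ Q} ≤ Fintype.card (Fin L → Bool) := by
    have h1 : Fintype.card {v : V // v ∉ Q} = Fintype.card V - t := by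
      rw [Fintype.card_subtype_compl, Fintype.card_coe, hQcard]
    rw [h1, Fintype.card_fun, Fintype.card_bool, Fintype.card_fin]
    exact Nat.le_pow_clog one_lt_two _
  obtain ⟨emb⟩ := Function.Embedding.nonempty_of_card_le hcard
  set code : V → Fin L → Bool := fun v j =>
    if h : v ∈ Q then false else (emb ⟨v, h⟩ j != emb ⟨us, husQ⟩ j) with hcode
  have hinj : ∀ v w, v ∉ Q → w ∉ Q → code v = code w → v = w := by
    intro v w hv hw hvw
    have hxor : ∀ x y z : Bool, (x != z) = (y != z) → x = y := by decide
    have key : ∀ j, emb ⟨v, hv⟩ j = emb ⟨w, hw⟩ j := by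
      intro j
      have h1 : code v j = code w j := congrFun hvw j
      rw [hcode] at h1
      simp only [dif_neg hv, dif_neg hw] at h1
      exact hxor _ _ _ h1
    have := emb.injective (funext key)
    exact congrArg Subtype.val this
  have hcus : code us = fun _ => false := by
    funext j
    rw [hcode]
    simp [husQ]
  have hBc : ∀ v, v ∉ Q → ¬ G.Adj qs v → ∃ j, code v j = true := by
    intro v hv hnadj
    have hvus : v ≠ us := fun h => hnadj (by rw [h]; exact hadjs)
    have hne : code v ≠ code us := fun h => hvus (hinj v us hv husQ h)
    by_contra hall
    push_neg at hall
    apply hne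
    funext j
    rw [hcus]
    simpa using hall j
  have hrep := cube_construction G Q hQcov qs hqs L code hinj hBc
  have hle : cubicity G ≤ (Q.erase qs).card + L := Nat.sInf_le hrep
  rw [Finset.card_erase_of_mem hqs, hQcard] at hle
  omega
end

section
/- Let G be a finite simple graph on a nonempty vertex set, and let t be the vertex cover number of G. Then box(G) ≤ ⌊t/2⌋ + 1. -/
/-- A `k`-box representation of `G`: assignments of axis-parallel boxes
(given by lower and upper corners) to vertices so that distinct vertices are
adjacent iff all their coordinate intervals intersect. -/
def HasBoxRep {V : Type*} (G : SimpleGraph V) (k : ℕ) : Prop :=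
  ∃ a b : V → Fin k → ℝ,
    (∀ v i, a v i ≤ b v i) ∧
    ∀ u v : V, u ≠ v →
      (G.Adj u v ↔ ∀ i : Fin k, (Set.Icc (a u i) (b u i) ∩ Set.Icc (a v i) (b v i)).Nonempty)

/-- The boxicity of `G`: the least `k` such that `G` has a `k`-box representation. -/
noncomputable def boxicity {V : Type*} (G : SimpleGraph V) : ℕ :=
  sInf {k : ℕ | HasBoxRep G k}

section BoxAux

attribute [local instance] Classical.propDecidable

variable {V : Type*}

/-- The point assigned to vertices outside the cover in the last coordinate. -/
noncomputable def bxpt (G : SimpleGraph V) (z : Option V) (f : V → ℝ) (v : V) : ℝ :=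
  (if ∃ w, z = some w ∧ G.Adj w v then (0:ℝ) else 2) + f v

/-- The point assigned to vertices outside the cover in an adjacent-pair coordinate. -/
noncomputable def bxpt2 (G : SimpleGraph V) (x y v : V) : ℝ :=
  if G.Adj v x then (if G.Adj v y then 0 else -1) else (if G.Adj v y then 1 else 3)

/-- Lower corners of the box representation. -/
noncomputable def bxlo (G : SimpleGraph V) (Q : Finset V) (z : Option V) (f : V → ℝ) :
    (V × V) ⊕ Unit → V → ℝ
  | Sum.inl (x, y) => fun v =>
      if G.Adj x y then
        (if v = x then -2 else if v = y then 0 else if v ∈ Q then -2 else bxpt2 G x y v)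
      else
        (if v = x then -2 else if v = y then 1 else if G.Adj v x then -1 else 0)
  | Sum.inr _ => fun v => if v ∈ Q then -1 else bxpt G z f v

/-- Upper corners of the box representation. -/
noncomputable def bxhi (G : SimpleGraph V) (Q : Finset V) (z : Option V) (f : V → ℝ) :
    (V × V) ⊕ Unit → V → ℝ
  | Sum.inl (x, y) => fun v =>
      if G.Adj x y then
        (if v = x then 0 else if v = y then 2 else if v ∈ Q then 3 else bxpt2 G x y v)
      else
        (if v = x then -1 else if v = y then 2 else if G.Adj v y then 1 else 0)
  | Sum.inr _ => fun v => if v ∈ Q then (if z = some v then 3/2 else 3) else bxpt G z f v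

variable {G : SimpleGraph V} {Q : Finset V} {z : Option V} {f : V → ℝ}

lemma bxpt_nonneg (hf : ∀ v, 0 ≤ f v) (v : V) : 0 ≤ bxpt G z f v := by
  unfold bxpt; split_ifs <;> nlinarith [hf v]

lemma bxpt_lt_three (hf1 : ∀ v, f v < 1) (v : V) : bxpt G z f v < 3 := by
  unfold bxpt; split_ifs <;> nlinarith [hf1 v]

lemma bxpt_lt_one (hf1 : ∀ v, f v < 1) {u v : V} (hz : z = some u) (h : G.Adj u v) :
    bxpt G z f v < 1 := by
  unfold bxpt; rw [if_pos ⟨u, hz, h⟩]; nlinarith [hf1 v]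

lemma two_le_bxpt (hf : ∀ v, 0 ≤ f v) {u v : V} (hz : z = some u) (h : ¬ G.Adj u v) :
    2 ≤ bxpt G z f v := by
  unfold bxpt
  rw [if_neg]
  · nlinarith [hf v]
  · rintro ⟨w, hw, hadj⟩
    rw [hz] at hw
    exact h (Option.some.inj hw ▸ hadj)

lemma bxpt_inj (hf : ∀ v, 0 ≤ f v) (hf1 : ∀ v, f v < 1) (hinj : Function.Injective f)
    {u v : V} (h : bxpt G z f u = bxpt G z f v) : u = v := by
  unfold bxpt at h
  apply hinj
  split_ifs at h with h1 h2 h2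
  · linarith
  · exfalso; nlinarith [hf u, hf v, hf1 u, hf1 v]
  · exfalso; nlinarith [hf u, hf v, hf1 u, hf1 v]
  · linarith

lemma bxpt2_neg_one_le (x y v : V) : (-1:ℝ) ≤ bxpt2 G x y v := by
  unfold bxpt2; split_ifs <;> norm_num

lemma bxpt2_le_three (x y v : V) : bxpt2 G x y v ≤ 3 := by
  unfold bxpt2; split_ifs <;> norm_num

lemma bxpt2_nonpos {x v : V} (h : G.Adj v x) (y : V) : bxpt2 G x y v ≤ 0 := by
  unfold bxpt2; rw [if_pos h]; split_ifs <;> norm_num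

lemma bxpt2_mem_y {x y v : V} (h : G.Adj v y) : 0 ≤ bxpt2 G x y v ∧ bxpt2 G x y v ≤ 1 := by
  unfold bxpt2; rw [if_pos h, if_pos h]; split_ifs <;> norm_num

lemma one_le_bxpt2_of_not_adj_x {x v : V} (h : ¬ G.Adj v x) (y : V) :
    1 ≤ bxpt2 G x y v := by
  unfold bxpt2; rw [if_neg h]; split_ifs <;> norm_num

lemma bxpt2_of_not_adj_y {x y v : V} (h : ¬ G.Adj v y) :
    bxpt2 G x y v = -1 ∨ bxpt2 G x y v = 3 := by
  unfold bxpt2; rw [if_neg h, if_neg h]; split_ifs <;> [left; right] <;> norm_num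

lemma bxlo_le_bxhi (hf : ∀ v, 0 ≤ f v) (j : (V × V) ⊕ Unit) (v : V) :
    bxlo G Q z f j v ≤ bxhi G Q z f j v := by
  obtain ⟨⟨x, y⟩⟩ | _ := j <;> simp only [bxlo, bxhi] <;> split_ifs <;> norm_num

/-- cross inequality: for an edge, lower corner of `u` is below upper corner of `v` -/
lemma bx_cross (hcov : ∀ ⦃u v : V⦄, G.Adj u v → u ∈ Q ∨ v ∈ Q)
    (hf : ∀ v, 0 ≤ f v) (hf1 : ∀ v, f v < 1)
    (j : (V × V) ⊕ Unit) {u v : V} (huv : G.Adj u v) :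
    bxlo G Q z f j u ≤ bxhi G Q z f j v := by
  have huv' : G.Adj v u := huv.symm
  obtain ⟨⟨x, y⟩⟩ | _ := j
  · by_cases hxy : G.Adj x y
    · simp only [bxlo, bxhi, if_pos hxy]
      split_ifs <;> subst_vars <;>
        first
        | (norm_num; done)
        | (exfalso; rcases hcov huv with hmem | hmem <;> contradiction)
        | linarith [bxpt2_neg_one_le (G := G) x y v]
        | linarith [bxpt2_le_three (G := G) x y u]
        | linarith [(bxpt2_mem_y (G := G) (x := x) huv').1]
        | linarith [bxpt2_nonpos (G := G) huv y]
        | linarith [(bxpt2_mem_y (G := G) (x := x) huv).1]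
        | linarith [(bxpt2_mem_y (G := G) (x := x) huv).2]
        | (simp_all; done)
    · simp only [bxlo, bxhi, if_neg hxy]
      split_ifs <;> subst_vars <;>
        first
        | (norm_num; done)
        | (simp_all; done)
  · simp only [bxlo, bxhi]
    split_ifs <;> subst_vars <;>
      first
      | (norm_num; done)
      | (exfalso; rcases hcov huv with hmem | hmem <;> contradiction)
      | linarith [bxpt_nonneg (G := G) (z := z) hf v]
      | linarith [bxpt_lt_three (G := G) (z := z) hf1 u]
      | linarith [bxpt_lt_one (G := G) (z := some v) (f := f) hf1 rfl huv']
      | linarith [bxpt_lt_three (G := G) (z := some v) hf1 u]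

/-- every edge intersects in every coordinate -/
lemma bx_edge (hcov : ∀ ⦃u v : V⦄, G.Adj u v → u ∈ Q ∨ v ∈ Q)
    (hf : ∀ v, 0 ≤ f v) (hf1 : ∀ v, f v < 1)
    (j : (V × V) ⊕ Unit) {u v : V} (huv : G.Adj u v) :
    (Set.Icc (bxlo G Q z f j u) (bxhi G Q z f j u) ∩
      Set.Icc (bxlo G Q z f j v) (bxhi G Q z f j v)).Nonempty := by
  rw [Set.Icc_inter_Icc, Set.nonempty_Icc, max_le_iff, le_min_iff, le_min_iff]
  exact ⟨⟨bxlo_le_bxhi hf j u, bx_cross hcov hf hf1 j huv⟩,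
    ⟨bx_cross hcov hf hf1 j huv.symm, bxlo_le_bxhi hf j v⟩⟩

/-- disjointness helper -/
lemma bx_disj {au bu av bv : ℝ} (h : bv < au ∨ bu < av) :
    Set.Icc au bu ∩ Set.Icc av bv = ∅ := by
  rw [Set.Icc_inter_Icc, Set.Icc_eq_empty_iff]
  rcases h with h | h <;> intro hc <;>
    [exact absurd (le_trans (le_max_left _ _) (le_trans hc (min_le_right _ _))) (not_le.2 h);
     exact absurd (le_trans (le_max_right _ _) (le_trans hc (min_le_left _ _))) (not_le.2 h)]

/-- separation in a non-adjacent-pair coordinate, from an endpoint of the pair -/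
lemma bx_sep1 {x y u v : V} (hxy : ¬ G.Adj x y) (hu : u = x ∨ u = y)
    (hne : u ≠ v) (hnadj : ¬ G.Adj u v) :
    Set.Icc (bxlo G Q z f (Sum.inl (x,y)) u) (bxhi G Q z f (Sum.inl (x,y)) u) ∩
      Set.Icc (bxlo G Q z f (Sum.inl (x,y)) v) (bxhi G Q z f (Sum.inl (x,y)) v) = ∅ := by
  have hnadj' : ¬ G.Adj v u := fun h => hnadj h.symm
  simp only [bxlo, bxhi, if_neg hxy]
  rcases hu with rfl | rfl <;>
    split_ifs <;>
      first
      | (apply bx_disj; first | (left; norm_num; done) | (right; norm_num; done))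
      | (exfalso; subst_vars; simp_all)

/-- separation in an adjacent-pair coordinate, endpoint vs vertex outside `Q` -/
lemma bx_sep2 {x y u v : V} (hxy : G.Adj x y) (hx : x ∈ Q) (hy : y ∈ Q)
    (hu : u = x ∨ u = y) (hv : v ∉ Q) (hnadj : ¬ G.Adj u v) :
    Set.Icc (bxlo G Q z f (Sum.inl (x,y)) u) (bxhi G Q z f (Sum.inl (x,y)) u) ∩
      Set.Icc (bxlo G Q z f (Sum.inl (x,y)) v) (bxhi G Q z f (Sum.inl (x,y)) v) = ∅ := by
  have hnadj' : ¬ G.Adj v u := fun h => hnadj h.symm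
  have hvx : v ≠ x := fun h => hv (h ▸ hx)
  have hvy : v ≠ y := fun h => hv (h ▸ hy)
  simp only [bxlo, bxhi, if_pos hxy]
  rcases hu with rfl | rfl
  · rw [if_pos rfl, if_pos rfl, if_neg hvx, if_neg hvy, if_neg hvy, if_neg hv, if_neg hv,
      if_neg hvx]
    apply bx_disj; right
    linarith [one_le_bxpt2_of_not_adj_x (G := G) hnadj' y]
  · have huy : (u:V) ≠ x := (G.ne_of_adj hxy).symm
    rw [if_neg huy, if_pos rfl, if_neg huy, if_pos rfl, if_neg hvx, if_neg hvy, if_neg hv,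
      if_neg hvx, if_neg hvy, if_neg hv]
    rcases bxpt2_of_not_adj_y (G := G) (x := x) hnadj' with h | h <;> rw [h] <;>
      apply bx_disj <;> [left; right] <;> norm_num

/-- separation in the last coordinate: the special vertex vs a non-neighbour outside `Q` -/
lemma bx_sep3 (hf : ∀ v, 0 ≤ f v) {u v : V} (hz : z = some u) (hu : u ∈ Q) (hv : v ∉ Q)
    (hnadj : ¬ G.Adj u v) :
    Set.Icc (bxlo G Q z f (Sum.inr ()) u) (bxhi G Q z f (Sum.inr ()) u) ∩
      Set.Icc (bxlo G Q z f (Sum.inr ()) v) (bxhi G Q z f (Sum.inr ()) v) = ∅ := by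
  simp only [bxlo, bxhi, if_pos hu, if_pos hz, if_neg hv]
  apply bx_disj; right
  have := two_le_bxpt (G := G) (f := f) hf hz hnadj
  linarith

/-- separation in the last coordinate: two vertices outside `Q` -/
lemma bx_sep4 (hf : ∀ v, 0 ≤ f v) (hf1 : ∀ v, f v < 1) (hinj : Function.Injective f)
    {u v : V} (hu : u ∉ Q) (hv : v ∉ Q) (hne : u ≠ v) :
    Set.Icc (bxlo G Q z f (Sum.inr ()) u) (bxhi G Q z f (Sum.inr ()) u) ∩
      Set.Icc (bxlo G Q z f (Sum.inr ()) v) (bxhi G Q z f (Sum.inr ()) v) = ∅ := by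
  simp only [bxlo, bxhi, if_neg hu, if_neg hv]
  have : bxpt G z f u ≠ bxpt G z f v := fun h => hne (bxpt_inj hf hf1 hinj h)
  rcases this.lt_or_gt with h | h
  · exact bx_disj (Or.inr h)
  · exact bx_disj (Or.inl h)

/-- Pair up the vertices of `Q`, preferring non-adjacent pairs, leaving at most one
vertex `z` unmatched, such that every non-adjacent pair inside `Q` has an endpoint
in some non-adjacent matched pair. -/
lemma bx_pairing (G : SimpleGraph V) : ∀ n (Q : Finset V), Q.card ≤ n →
    ∃ (P : Finset (V × V)) (z : Option V),
      (∀ p ∈ P, p.1 ∈ Q ∧ p.2 ∈ Q ∧ p.1 ≠ p.2) ∧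
      (∀ q ∈ Q, (∃ p ∈ P, q = p.1 ∨ q = p.2) ∨ z = some q) ∧
      (∀ u v : V, u ∈ Q → v ∈ Q → u ≠ v → ¬G.Adj u v →
        ∃ p ∈ P, ¬G.Adj p.1 p.2 ∧ (u = p.1 ∨ u = p.2 ∨ v = p.1 ∨ v = p.2)) ∧
      2 * P.card ≤ Q.card ∧ (∀ w, z = some w → w ∈ Q) := by
  intro n
  induction n with
  | zero =>
    intro Q hQ
    have : Q = ∅ := Finset.card_eq_zero.1 (Nat.le_zero.1 hQ)
    subst this
    exact ⟨∅, none, by simp, by simp, by simp, by simp, by simp⟩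
  | succ n ih =>
    intro Q hQ
    by_cases hpair : ∃ u v : V, u ∈ Q ∧ v ∈ Q ∧ u ≠ v
    · -- at least two vertices: pick a pair, preferring a non-adjacent one
      have hex : ∃ u v : V, u ∈ Q ∧ v ∈ Q ∧ u ≠ v ∧
          ((∃ a b : V, a ∈ Q ∧ b ∈ Q ∧ a ≠ b ∧ ¬G.Adj a b) → ¬G.Adj u v) := by
        by_cases hnon : ∃ a b : V, a ∈ Q ∧ b ∈ Q ∧ a ≠ b ∧ ¬G.Adj a b
        · obtain ⟨a, b, ha, hb, hab, hnadj⟩ := hnon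
          exact ⟨a, b, ha, hb, hab, fun _ => hnadj⟩
        · obtain ⟨u, v, hu, hv, huv⟩ := hpair
          exact ⟨u, v, hu, hv, huv, fun h => absurd h hnon⟩
      obtain ⟨u, v, hu, hv, huv, hbest⟩ := hex
      set Q' := (Q.erase u).erase v with hQ'
      have hvQ : v ∈ Q.erase u := Finset.mem_erase.2 ⟨huv.symm, hv⟩
      have hcard' : Q'.card = Q.card - 2 := by
        rw [hQ', Finset.card_erase_of_mem hvQ, Finset.card_erase_of_mem hu]; omega
      have hQ2 : 2 ≤ Q.card := by
        have := Finset.one_lt_card.2 ⟨u, hu, v, hv, huv⟩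
        omega
      obtain ⟨P', z', h1, h2, h3, h4, h5⟩ := ih Q' (by omega)
      have hsub : Q' ⊆ Q := (Finset.erase_subset _ _).trans (Finset.erase_subset _ _)
      have hnotP' : (u, v) ∉ P' := by
        intro hmem
        have := (h1 _ hmem).1
        simp [hQ', Finset.mem_erase] at this
      refine ⟨insert (u, v) P', z', ?_, ?_, ?_, ?_, fun w hw => hsub (h5 w hw)⟩
      · intro p hp
        rcases Finset.mem_insert.1 hp with rfl | hp
        · exact ⟨hu, hv, huv⟩
        · obtain ⟨a, b, c⟩ := h1 p hp
          exact ⟨hsub a, hsub b, c⟩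
      · intro q hq
        by_cases hqu : q = u
        · exact Or.inl ⟨(u, v), Finset.mem_insert_self _ _, Or.inl hqu⟩
        by_cases hqv : q = v
        · exact Or.inl ⟨(u, v), Finset.mem_insert_self _ _, Or.inr hqv⟩
        have hq' : q ∈ Q' := by simp [hQ', Finset.mem_erase, hqu, hqv, hq]
        rcases h2 q hq' with ⟨p, hp, hor⟩ | hz
        · exact Or.inl ⟨p, Finset.mem_insert_of_mem hp, hor⟩
        · exact Or.inr hz
      · intro a b ha hb hab hnadj
        have hGuv : ¬G.Adj u v := hbest ⟨a, b, ha, hb, hab, hnadj⟩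
        by_cases hmem : a = u ∨ a = v ∨ b = u ∨ b = v
        · refine ⟨(u, v), Finset.mem_insert_self _ _, hGuv, ?_⟩
          tauto
        · push_neg at hmem
          obtain ⟨h1', h2', h3', h4'⟩ := hmem
          have ha' : a ∈ Q' := by simp [hQ', Finset.mem_erase, h1', h2', ha]
          have hb' : b ∈ Q' := by simp [hQ', Finset.mem_erase, h3', h4', hb]
          obtain ⟨p, hp, hx, hor⟩ := h3 a b ha' hb' hab hnadj
          exact ⟨p, Finset.mem_insert_of_mem hp, hx, hor⟩
      · have := Finset.card_insert_of_notMem hnotP'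
        omega
    · -- at most one vertex
      push_neg at hpair
      by_cases hne : Q.Nonempty
      · obtain ⟨w, hw⟩ := hne
        refine ⟨∅, some w, by simp, ?_, ?_, by simp, by simpa using hw⟩
        · intro q hq
          exact Or.inr (by rw [hpair q w hq hw])
        · intro a b ha hb hab _
          exact absurd (hpair a b ha hb) hab
      · rw [Finset.not_nonempty_iff_eq_empty] at hne
        subst hne
        exact ⟨∅, none, by simp, by simp, by simp, by simp, by simp⟩

lemma hasBoxRep_mono {G : SimpleGraph V} {k m : ℕ}
    (h : HasBoxRep G k) (hkm : k ≤ m) : HasBoxRep G m := by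
  obtain ⟨a, b, hab, hiff⟩ := h
  refine ⟨fun v i => if h : (i : ℕ) < k then a v ⟨i, h⟩ else 0,
          fun v i => if h : (i : ℕ) < k then b v ⟨i, h⟩ else 0, ?_, ?_⟩
  · intro v i; dsimp only; split_ifs with h
    exacts [hab v ⟨i, h⟩, le_refl 0]
  · intro u v huv
    rw [hiff u v huv]
    constructor
    · intro h i
      dsimp only
      by_cases hik : (i : ℕ) < k
      · simp only [dif_pos hik]
        exact h ⟨i, hik⟩
      · simp only [dif_neg hik]
        exact ⟨0, by simp⟩
    · intro h j
      have h2 := h ⟨(j : ℕ), lt_of_lt_of_le j.2 hkm⟩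
      dsimp only at h2
      simp only [dif_pos j.2] at h2
      simpa using h2

/-- The main construction: a box representation with `|Q|/2 + 1` coordinates. -/
lemma bx_main [Fintype V] (G : SimpleGraph V) (Q : Finset V)
    (hcov : ∀ ⦃u v : V⦄, G.Adj u v → u ∈ Q ∨ v ∈ Q) :
    HasBoxRep G (Q.card / 2 + 1) := by
  classical
  obtain ⟨P, z, h1, h2, h3, h4, h5⟩ := bx_pairing G Q.card Q le_rfl
  set n := Fintype.card V with hn
  let e0 := Fintype.equivFin V
  set f : V → ℝ := fun v => ((e0 v : ℕ) : ℝ) / (n + 1) with hf_def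
  have hf : ∀ v, 0 ≤ f v := fun v => by
    rw [hf_def]; positivity
  have hf1 : ∀ v, f v < 1 := fun v => by
    rw [hf_def]
    rw [div_lt_one (by positivity)]
    have h0 : (e0 v : ℕ) < n := (e0 v).2
    have : ((e0 v : ℕ) : ℝ) < (n : ℝ) := Nat.cast_lt.2 h0
    linarith
  have hinj : Function.Injective f := by
    intro a b h
    rw [hf_def] at h
    have hpos : ((n:ℝ)+1) ≠ 0 := by positivity
    have h2 : (e0 a : ℕ) = (e0 b : ℕ) := by
      field_simp at h
      exact_mod_cast h
    exact e0.injective (Fin.val_injective h2)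
  have hcard : Fintype.card (↥P ⊕ Unit) = P.card + 1 := by simp
  let e : Fin (P.card + 1) ≃ ↥P ⊕ Unit := (Fintype.equivFinOfCardEq hcard).symm
  let idx : Fin (P.card + 1) → (V × V) ⊕ Unit := fun i => Sum.map Subtype.val id (e i)
  have hidx_inl : ∀ p, p ∈ P → ∃ i, idx i = Sum.inl p := fun p hp =>
    ⟨e.symm (Sum.inl ⟨p, hp⟩), by simp only [idx, Equiv.apply_symm_apply, Sum.map_inl]⟩
  have hidx_inr : ∃ i, idx i = Sum.inr () :=
    ⟨e.symm (Sum.inr ()), by simp only [idx, Equiv.apply_symm_apply, Sum.map_inr, id]⟩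
  have hrep : HasBoxRep G (P.card + 1) := by
    refine ⟨fun v i => bxlo G Q z f (idx i) v, fun v i => bxhi G Q z f (idx i) v,
      fun v i => bxlo_le_bxhi hf (idx i) v, ?_⟩
    intro u v hne
    constructor
    · intro hadj i
      exact bx_edge hcov hf hf1 (idx i) hadj
    · intro hall
      by_contra hnadj
      have hsep : ∃ i : Fin (P.card + 1),
          Set.Icc (bxlo G Q z f (idx i) u) (bxhi G Q z f (idx i) u) ∩
            Set.Icc (bxlo G Q z f (idx i) v) (bxhi G Q z f (idx i) v) = ∅ := by
        have key : ∀ a b : V, a ≠ b → ¬G.Adj a b → a ∈ Q → b ∉ Q →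
            ∃ i : Fin (P.card + 1),
              Set.Icc (bxlo G Q z f (idx i) a) (bxhi G Q z f (idx i) a) ∩
                Set.Icc (bxlo G Q z f (idx i) b) (bxhi G Q z f (idx i) b) = ∅ := by
          intro a b hab hnab haQ hbQ
          rcases h2 a haQ with ⟨p, hp, hor⟩ | hz
          · obtain ⟨i, hi⟩ := hidx_inl p hp
            by_cases hadjp : G.Adj p.1 p.2
            · exact ⟨i, by rw [hi]; exact bx_sep2 hadjp (h1 p hp).1 (h1 p hp).2.1 hor hbQ hnab⟩
            · exact ⟨i, by rw [hi]; exact bx_sep1 hadjp hor hab hnab⟩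
          · obtain ⟨i, hi⟩ := hidx_inr
            exact ⟨i, by rw [hi]; exact bx_sep3 hf hz (h5 a hz) hbQ hnab⟩
        have hnadj' : ¬ G.Adj v u := fun h => hnadj h.symm
        by_cases huQ : u ∈ Q <;> by_cases hvQ : v ∈ Q
        · obtain ⟨p, hp, hpn, hor⟩ := h3 u v huQ hvQ hne hnadj
          obtain ⟨i, hi⟩ := hidx_inl p hp
          rcases hor with h | h | h | h
          · exact ⟨i, by rw [hi]; exact bx_sep1 hpn (Or.inl h) hne hnadj⟩
          · exact ⟨i, by rw [hi]; exact bx_sep1 hpn (Or.inr h) hne hnadj⟩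
          · exact ⟨i, by rw [hi, Set.inter_comm]; exact bx_sep1 hpn (Or.inl h) hne.symm hnadj'⟩
          · exact ⟨i, by rw [hi, Set.inter_comm]; exact bx_sep1 hpn (Or.inr h) hne.symm hnadj'⟩
        · exact key u v hne hnadj huQ hvQ
        · obtain ⟨i, hi⟩ := key v u hne.symm hnadj' hvQ huQ
          exact ⟨i, by rw [Set.inter_comm]; exact hi⟩
        · obtain ⟨i, hi⟩ := hidx_inr
          exact ⟨i, by rw [hi]; exact bx_sep4 hf hf1 hinj huQ hvQ hne⟩
      obtain ⟨i, hi⟩ := hsep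
      exact (hall i).ne_empty hi
  exact hasBoxRep_mono hrep (by omega)

end BoxAux

/-- Boxicity is at most `⌊t/2⌋ + 1` where `t` is the vertex cover number. -/
theorem boxicity_le_vertexCover {V : Type*} [Fintype V] [Nonempty V]
    (G : SimpleGraph V) (t : ℕ) (ht : t = vertexCoverNumber G) :
    boxicity G ≤ t / 2 + 1 := by
  classical
  have hne : {t : ℕ | ∃ Q : Finset V, IsVertexCover G Q ∧ Q.card = t}.Nonempty :=
    ⟨(Finset.univ : Finset V).card, Finset.univ,
      fun u v _ => Or.inl (Finset.mem_univ u), rfl⟩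
  have hmem := Nat.sInf_mem hne
  obtain ⟨Q, hQcov, hQcard⟩ := hmem
  have hrep : HasBoxRep G (Q.card / 2 + 1) := bx_main G Q hQcov
  have hle : boxicity G ≤ Q.card / 2 + 1 := Nat.sInf_le hrep
  rw [ht]
  unfold vertexCoverNumber
  rw [← hQcard]
  exact hle
end

section
/- Let G be a finite simple graph on a nonempty vertex set, and let ν(G) be the minimum cardinality of a maximal matching of G. Then box(G) ≤ ν(G) + 1. -/
/-- `M` is a matching of `G`: a set of edges of `G`, pairwise sharing no vertex. -/
def IsMatchingSet {V : Type*} (G : SimpleGraph V) (M : Finset (Sym2 V)) : Prop :=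
  (↑M : Set (Sym2 V)) ⊆ G.edgeSet ∧
  ∀ e ∈ M, ∀ f ∈ M, e ≠ f → ∀ x : V, x ∈ e → x ∉ f

/-- `M` is a maximal matching of `G`: a matching such that no edge of `G`
can be added to it while keeping it a matching. -/
def IsMaximalMatchingSet {V : Type*} [DecidableEq V] (G : SimpleGraph V)
    (M : Finset (Sym2 V)) : Prop :=
  IsMatchingSet G M ∧ ∀ e ∈ G.edgeSet, e ∉ M → ¬ IsMatchingSet G (insert e M)

/-- `ν(G)`: the minimum cardinality of a maximal matching of `G`. -/
noncomputable def minMaximalMatching {V : Type*} [DecidableEq V] (G : SimpleGraph V) : ℕ :=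
  sInf {k : ℕ | ∃ M : Finset (Sym2 V), IsMaximalMatchingSet G M ∧ M.card = k}

attribute [local instance] Classical.propDecidable



namespace BoxAux

variable {V : Type*}

lemma meet_iff {a₁ b₁ a₂ b₂ : ℝ} :
    (Set.Icc a₁ b₁ ∩ Set.Icc a₂ b₂).Nonempty ↔ a₁ ≤ b₁ ∧ a₂ ≤ b₂ ∧ a₁ ≤ b₂ ∧ a₂ ≤ b₁ := by
  rw [Set.Icc_inter_Icc, Set.nonempty_Icc, sup_le_iff, le_inf_iff, le_inf_iff]
  tauto

noncomputable section

def lf1 (G : SimpleGraph V) (S : Set V) (x y v : V) : ℝ :=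
  if v = x then 1 else if v = y then 3 else if v ∈ S then -10 else
  if G.Adj v x then -10 else if G.Adj v y then 4 else 6

def rg1 (G : SimpleGraph V) (S : Set V) (x y v : V) : ℝ :=
  if v = x then 3 else if v = y then 5 else if v ∈ S then 10 else
  if G.Adj v x then (if G.Adj v y then 10 else 2) else 10

def lf2 (G : SimpleGraph V) (x y v : V) : ℝ :=
  if v = x then -1 else if v = y then 10 else if G.Adj v x then -(1/2) else 1

def rg2 (G : SimpleGraph V) (x y v : V) : ℝ :=
  if v = x then 0 else if v = y then 11 else if G.Adj v y then 21/2 else 9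

lemma lf1_le_rg1 (G : SimpleGraph V) (S : Set V) (x y v : V) :
    lf1 G S x y v ≤ rg1 G S x y v := by
  unfold lf1 rg1; split_ifs <;> norm_num

lemma lf2_le_rg2 (G : SimpleGraph V) (x y v : V) :
    lf2 G x y v ≤ rg2 G x y v := by
  unfold lf2 rg2; split_ifs <;> norm_num

variable {G : SimpleGraph V} {S : Set V} {x y u v : V}

lemma claimA1 (hxy : x ≠ y) (hI : ∀ a b, G.Adj a b → a ∈ S ∨ b ∈ S)
    (huv : G.Adj u v) : lf1 G S x y u ≤ rg1 G S x y v := by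
  have hne := huv.ne
  have hvu := huv.symm
  have hIor := hI u v huv
  unfold lf1 rg1
  split_ifs <;> subst_vars <;>
    first
      | contradiction
      | (rcases hIor with h | h <;> contradiction)
      | norm_num
      | simp_all

lemma claimA2 (hne2 : ¬ G.Adj x y) (huv : G.Adj u v) : lf2 G x y u ≤ rg2 G x y v := by
  have hne := huv.ne
  have hvu := huv.symm
  have hyx : ¬ G.Adj y x := fun h => hne2 h.symm
  unfold lf2 rg2
  split_ifs <;> subst_vars <;>
    first
      | contradiction
      | norm_num
      | simp_all

lemma kill1x (hvS : v ∉ S) (hvx : v ≠ x) (hvy : v ≠ y) (h : ¬ G.Adj v x) :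
    ¬ (Set.Icc (lf1 G S x y x) (rg1 G S x y x) ∩
        Set.Icc (lf1 G S x y v) (rg1 G S x y v)).Nonempty := by
  have e2 : rg1 G S x y x = 3 := if_pos rfl
  have e3 : (4:ℝ) ≤ lf1 G S x y v := by
    unfold lf1
    rw [if_neg hvx, if_neg hvy, if_neg hvS, if_neg h]
    split_ifs <;> norm_num
  rintro ⟨w, ⟨-, hw2⟩, hw3, -⟩
  rw [e2] at hw2
  linarith

lemma kill1y (hxy : x ≠ y) (hvS : v ∉ S) (hvx : v ≠ x) (hvy : v ≠ y) (h : ¬ G.Adj v y) :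
    ¬ (Set.Icc (lf1 G S x y y) (rg1 G S x y y) ∩
        Set.Icc (lf1 G S x y v) (rg1 G S x y v)).Nonempty := by
  have e1 : lf1 G S x y y = 3 := by unfold lf1; rw [if_neg hxy.symm, if_pos rfl]
  have e2 : rg1 G S x y y = 5 := by unfold rg1; rw [if_neg hxy.symm, if_pos rfl]
  have e3 : rg1 G S x y v ≤ 2 ∨ (6:ℝ) ≤ lf1 G S x y v := by
    unfold lf1 rg1
    rw [if_neg hvx, if_neg hvy, if_neg hvS, if_neg hvx, if_neg hvy, if_neg hvS]
    split_ifs <;> norm_num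
  rintro ⟨w, ⟨hw1, hw2⟩, hw3, hw4⟩
  rw [e1] at hw1; rw [e2] at hw2
  rcases e3 with e3 | e3 <;> linarith

lemma kill2x (hvx : v ≠ x) (h : ¬ G.Adj v x) :
    ¬ (Set.Icc (lf2 G x y x) (rg2 G x y x) ∩
        Set.Icc (lf2 G x y v) (rg2 G x y v)).Nonempty := by
  have e2 : rg2 G x y x = 0 := if_pos rfl
  have e3 : (1:ℝ) ≤ lf2 G x y v := by
    unfold lf2
    rw [if_neg hvx]
    split_ifs <;> first | contradiction | norm_num
  rintro ⟨w, ⟨-, hw2⟩, hw3, -⟩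
  rw [e2] at hw2
  linarith

lemma kill2y (hxy : x ≠ y) (hvy : v ≠ y) (h : ¬ G.Adj v y) :
    ¬ (Set.Icc (lf2 G x y y) (rg2 G x y y) ∩
        Set.Icc (lf2 G x y v) (rg2 G x y v)).Nonempty := by
  have e1 : lf2 G x y y = 10 := by unfold lf2; rw [if_neg hxy.symm, if_pos rfl]
  have e3 : rg2 G x y v ≤ 9 := by
    unfold rg2
    split_ifs <;> first | contradiction | norm_num
  rintro ⟨w, ⟨hw1, -⟩, -, hw4⟩
  rw [e1] at hw1
  linarith

end




def Vmem (p : V × V) (v : V) : Prop := v = p.1 ∨ v = p.2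

def GoodPairing (G : SimpleGraph V) (S : Set V) (P : Finset (V × V)) : Prop :=
  (∀ p ∈ P, p.1 ≠ p.2) ∧
  (∀ p ∈ P, ∀ q ∈ P, p ≠ q → ∀ v, Vmem p v → ¬ Vmem q v) ∧
  (∀ v, v ∈ S ↔ ∃ p ∈ P, Vmem p v)

def CliqueCond (G : SimpleGraph V) (P : Finset (V × V)) : Prop :=
  ∀ p ∈ P, G.Adj p.1 p.2 → ∀ q ∈ P, G.Adj q.1 q.2 →
    ∀ x, Vmem p x → ∀ y, Vmem q y → x ≠ y → G.Adj x y

variable {G : SimpleGraph V} {S : Set V} {P : Finset (V × V)}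

lemma vmem_pair {a b v : V} : Vmem (a, b) v ↔ (v = a ∨ v = b) := Iff.rfl

lemma swap_step {p q : V × V} {a b c d : V}
    (hgood : GoodPairing G S P) (hp : p ∈ P) (hq : q ∈ P) (hpq : p ≠ q)
    (hpadj : G.Adj p.1 p.2) (hqadj : G.Adj q.1 q.2)
    (hab : p = (a, b) ∨ p = (b, a)) (hcd : q = (c, d) ∨ q = (d, c))
    (hnadj : ¬ G.Adj a c) :
    ∃ Q : Finset (V × V), GoodPairing G S Q ∧ Q.card = P.card ∧
      (Q.filter (fun r => G.Adj r.1 r.2)).card < (P.filter (fun r => G.Adj r.1 r.2)).card := by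
  obtain ⟨h1, h2, h3⟩ := hgood
  have hvp : ∀ v, Vmem p v ↔ (v = a ∨ v = b) := by
    intro v; rcases hab with h | h <;> subst h <;> rw [vmem_pair] <;> tauto
  have hvq : ∀ v, Vmem q v ↔ (v = c ∨ v = d) := by
    intro v; rcases hcd with h | h <;> subst h <;> rw [vmem_pair] <;> tauto
  have hVa : Vmem p a := (hvp a).mpr (Or.inl rfl)
  have hVb : Vmem p b := (hvp b).mpr (Or.inr rfl)
  have hVc : Vmem q c := (hvq c).mpr (Or.inl rfl)
  have hVd : Vmem q d := (hvq d).mpr (Or.inr rfl)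
  have hab' : a ≠ b := by
    have h := h1 p hp
    rcases hab with hh | hh <;> rw [hh] at h <;> simp only [ne_eq] at h
    · simpa using h
    · intro e
      have h2' : ¬ b = a := by simpa using h
      exact h2' e.symm
  have hcd' : c ≠ d := by
    have h := h1 q hq
    rcases hcd with hh | hh <;> rw [hh] at h <;> simp only [ne_eq] at h
    · simpa using h
    · intro e
      have h2' : ¬ d = c := by simpa using h
      exact h2' e.symm
  have hnqa : ¬ Vmem q a := h2 p hp q hq hpq a hVa
  have hnqb : ¬ Vmem q b := h2 p hp q hq hpq b hVb
  have hac : a ≠ c := fun h => hnqa ((hvq a).mpr (Or.inl h))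
  have had : a ≠ d := fun h => hnqa ((hvq a).mpr (Or.inr h))
  have hbc : b ≠ c := fun h => hnqb ((hvq b).mpr (Or.inl h))
  have hbd : b ≠ d := fun h => hnqb ((hvq b).mpr (Or.inr h))
  set r0 : Finset (V × V) := (P.erase p).erase q with hr0
  have hr0mem : ∀ r, r ∈ r0 ↔ r ∈ P ∧ r ≠ p ∧ r ≠ q := by
    intro r; simp only [hr0, Finset.mem_erase]; tauto
  have hr0dis : ∀ r ∈ r0, ¬ Vmem r a ∧ ¬ Vmem r b ∧ ¬ Vmem r c ∧ ¬ Vmem r d := by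
    intro r hr
    obtain ⟨hrP, hrp, hrq⟩ := (hr0mem r).mp hr
    exact ⟨fun h => h2 p hp r hrP (Ne.symm hrp) a hVa h,
           fun h => h2 p hp r hrP (Ne.symm hrp) b hVb h,
           fun h => h2 q hq r hrP (Ne.symm hrq) c hVc h,
           fun h => h2 q hq r hrP (Ne.symm hrq) d hVd h⟩
  have hacP : (a, c) ∉ P := by
    intro h
    by_cases hh : (a, c) = p
    · have hpc : Vmem p c := by rw [← hh]; exact Or.inr rfl
      exact h2 p hp q hq hpq c hpc hVc
    · exact h2 (a, c) h p hp hh a (Or.inl rfl) hVa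
  have hbdP : (b, d) ∉ P := by
    intro h
    by_cases hh : (b, d) = p
    · have hpd : Vmem p d := by rw [← hh]; exact Or.inr rfl
      exact h2 p hp q hq hpq d hpd hVd
    · exact h2 (b, d) h p hp hh b (Or.inl rfl) hVb
  set Q : Finset (V × V) := insert (a, c) (insert (b, d) r0) with hQdef
  have hQmem : ∀ r, r ∈ Q ↔ r = (a, c) ∨ r = (b, d) ∨ r ∈ r0 := by
    intro r; simp only [hQdef, Finset.mem_insert]
  have hacbd : ((a, c) : V × V) ≠ (b, d) := fun h => hab' (congrArg Prod.fst h)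
  have hacr0 : (a, c) ∉ r0 := fun h => hacP ((hr0mem _).mp h).1
  have hbdr0 : (b, d) ∉ r0 := fun h => hbdP ((hr0mem _).mp h).1
  refine ⟨Q, ⟨?_, ?_, ?_⟩, ?_, ?_⟩
  · -- nondiag
    intro r hr
    rcases (hQmem r).mp hr with rfl | rfl | hr0'
    · exact hac
    · exact hbd
    · exact h1 r ((hr0mem r).mp hr0').1
  · -- disjoint
    intro r hr r' hr' hne v hv hv'
    rcases (hQmem r).mp hr with rfl | rfl | hrr <;>
      rcases (hQmem r').mp hr' with rfl | rfl | hrr'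
    · exact hne rfl
    · rcases hv with rfl | rfl <;> rcases hv' with rfl | rfl
      · exact hab' rfl
      · exact had rfl
      · exact hbc rfl
      · exact hcd' rfl
    · rcases hv with rfl | rfl
      · exact (hr0dis r' hrr').1 hv'
      · exact (hr0dis r' hrr').2.2.1 hv'
    · rcases hv with rfl | rfl <;> rcases hv' with rfl | rfl
      · exact hab' rfl
      · exact hbc rfl
      · exact had rfl
      · exact hcd' rfl
    · exact hne rfl
    · rcases hv with rfl | rfl
      · exact (hr0dis r' hrr').2.1 hv'
      · exact (hr0dis r' hrr').2.2.2 hv'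
    · rcases hv' with rfl | rfl
      · exact (hr0dis r hrr).1 hv
      · exact (hr0dis r hrr).2.2.1 hv
    · rcases hv' with rfl | rfl
      · exact (hr0dis r hrr).2.1 hv
      · exact (hr0dis r hrr).2.2.2 hv
    · have ha' := (hr0mem r).mp hrr
      have hb' := (hr0mem r').mp hrr'
      exact h2 r ha'.1 r' hb'.1 hne v hv hv'
  · -- support
    intro v
    rw [h3 v]
    constructor
    · rintro ⟨r, hr, hvr⟩
      by_cases hrp : r = p
      · subst hrp
        rcases (hvp v).mp hvr with h | h
        · exact ⟨(a, c), (hQmem _).mpr (Or.inl rfl), Or.inl h⟩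
        · exact ⟨(b, d), (hQmem _).mpr (Or.inr (Or.inl rfl)), Or.inl h⟩
      · by_cases hrq : r = q
        · subst hrq
          rcases (hvq v).mp hvr with h | h
          · exact ⟨(a, c), (hQmem _).mpr (Or.inl rfl), Or.inr h⟩
          · exact ⟨(b, d), (hQmem _).mpr (Or.inr (Or.inl rfl)), Or.inr h⟩
        · exact ⟨r, (hQmem _).mpr (Or.inr (Or.inr ((hr0mem _).mpr ⟨hr, hrp, hrq⟩))), hvr⟩
    · rintro ⟨r, hr, hvr⟩
      rcases (hQmem r).mp hr with rfl | rfl | hrr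
      · rcases hvr with rfl | rfl
        · exact ⟨p, hp, hVa⟩
        · exact ⟨q, hq, hVc⟩
      · rcases hvr with rfl | rfl
        · exact ⟨p, hp, hVb⟩
        · exact ⟨q, hq, hVd⟩
      · exact ⟨r, ((hr0mem r).mp hrr).1, hvr⟩
  · -- card
    have hq' : q ∈ P.erase p := Finset.mem_erase.mpr ⟨Ne.symm hpq, hq⟩
    have hr0card : r0.card = P.card - 2 := by
      rw [hr0, Finset.card_erase_of_mem hq', Finset.card_erase_of_mem hp]
      omega
    have h2le : 2 ≤ P.card := by
      have := Finset.one_lt_card.mpr ⟨p, hp, q, hq, hpq⟩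
      omega
    have hplus : (a, c) ∉ insert (b, d) r0 := by
      simp only [Finset.mem_insert]
      push_neg
      exact ⟨hacbd, hacr0⟩
    have hcq : Q.card = r0.card + 2 := by
      rw [hQdef, Finset.card_insert_of_notMem hplus, Finset.card_insert_of_notMem hbdr0]
    omega
  · -- bad count decreases
    have hpbad : p ∈ P.filter (fun r => G.Adj r.1 r.2) := Finset.mem_filter.mpr ⟨hp, hpadj⟩
    have hqbad : q ∈ P.filter (fun r => G.Adj r.1 r.2) := Finset.mem_filter.mpr ⟨hq, hqadj⟩
    have hsub : Q.filter (fun r => G.Adj r.1 r.2) ⊆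
        insert (b, d) (((P.filter (fun r => G.Adj r.1 r.2)).erase p).erase q) := by
      intro r hr
      rw [Finset.mem_filter] at hr
      obtain ⟨hrQ, hradj⟩ := hr
      rcases (hQmem r).mp hrQ with rfl | rfl | hrr
      · exact absurd hradj hnadj
      · exact Finset.mem_insert_self _ _
      · obtain ⟨hrP, hrp, hrq⟩ := (hr0mem r).mp hrr
        exact Finset.mem_insert_of_mem (Finset.mem_erase.mpr ⟨hrq,
          Finset.mem_erase.mpr ⟨hrp, Finset.mem_filter.mpr ⟨hrP, hradj⟩⟩⟩)
    have hcard1 := Finset.card_le_card hsub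
    have hcard2 := Finset.card_insert_le ((b, d) : V × V)
      (((P.filter (fun r => G.Adj r.1 r.2)).erase p).erase q)
    have hq'' : q ∈ (P.filter (fun r => G.Adj r.1 r.2)).erase p :=
      Finset.mem_erase.mpr ⟨Ne.symm hpq, hqbad⟩
    have he1 : (((P.filter (fun r => G.Adj r.1 r.2)).erase p).erase q).card =
        (P.filter (fun r => G.Adj r.1 r.2)).card - 2 := by
      rw [Finset.card_erase_of_mem hq'', Finset.card_erase_of_mem hpbad]
      omega
    have h2le : 2 ≤ (P.filter (fun r => G.Adj r.1 r.2)).card := by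
      have := Finset.one_lt_card.mpr ⟨p, hpbad, q, hqbad, hpq⟩
      omega
    omega

lemma repair (G : SimpleGraph V) (S : Set V) :
    ∀ n (P : Finset (V × V)), GoodPairing G S P →
      (P.filter (fun r => G.Adj r.1 r.2)).card ≤ n →
      ∃ Q, GoodPairing G S Q ∧ Q.card = P.card ∧ CliqueCond G Q := by
  intro n
  induction n with
  | zero =>
    intro P hgood hle
    by_cases hc : CliqueCond G P
    · exact ⟨P, hgood, rfl, hc⟩
    · exfalso
      unfold CliqueCond at hc
      push_neg at hc
      obtain ⟨p, hp, hpadj, q, hq, hqadj, x, hx, y, hy, hxy, hnadj⟩ := hc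
      have hmem : p ∈ P.filter (fun r => G.Adj r.1 r.2) := Finset.mem_filter.mpr ⟨hp, hpadj⟩
      have := Finset.card_pos.mpr ⟨p, hmem⟩
      omega
  | succ n ih =>
    intro P hgood hle
    by_cases hc : CliqueCond G P
    · exact ⟨P, hgood, rfl, hc⟩
    · unfold CliqueCond at hc
      push_neg at hc
      obtain ⟨p, hp, hpadj, q, hq, hqadj, x, hx, y, hy, hxy, hnadj⟩ := hc
      have hpq : p ≠ q := by
        rintro rfl
        apply hnadj
        rcases hx with rfl | rfl <;> rcases hy with rfl | rfl
        · exact absurd rfl hxy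
        · exact hpadj
        · exact hpadj.symm
        · exact absurd rfl hxy
      have hab' : ∃ x', p = (x, x') ∨ p = (x', x) := by
        rcases hx with rfl | rfl
        · exact ⟨p.2, Or.inl rfl⟩
        · exact ⟨p.1, Or.inr rfl⟩
      have hcd' : ∃ y', q = (y, y') ∨ q = (y', y) := by
        rcases hy with rfl | rfl
        · exact ⟨q.2, Or.inl rfl⟩
        · exact ⟨q.1, Or.inr rfl⟩
      obtain ⟨x', habx⟩ := hab'
      obtain ⟨y', hcdy⟩ := hcd'
      obtain ⟨Q, hQgood, hQcard, hQlt⟩ :=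
        swap_step hgood hp hq hpq hpadj hqadj habx hcdy hnadj
      obtain ⟨R, hRgood, hRcard, hRclique⟩ := ih Q hQgood (by omega)
      exact ⟨R, hRgood, by omega, hRclique⟩


noncomputable section
variable [Fintype V]

def emb (v : V) : ℝ := ((Fintype.equivFin V v : ℕ) : ℝ)

def lf0 (S : Set V) (v : V) : ℝ := if v ∈ S then -1 else emb v

def rg0 (S : Set V) (v : V) : ℝ := if v ∈ S then (Fintype.card V : ℝ) else emb v

lemma emb_nonneg (v : V) : 0 ≤ emb v := Nat.cast_nonneg _

lemma emb_le (v : V) : emb v ≤ (Fintype.card V : ℝ) := by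
  unfold emb
  have := (Fintype.equivFin V v).isLt
  exact_mod_cast this.le

lemma emb_inj {u v : V} (h : emb u = emb v) : u = v := by
  unfold emb at h
  have h2 : ((Fintype.equivFin V u : Fin _) : ℕ) = ((Fintype.equivFin V v : Fin _) : ℕ) := by
    exact_mod_cast h
  exact (Fintype.equivFin V).injective (Fin.ext h2)

lemma lf0_le_rg0 (S : Set V) (v : V) : lf0 S v ≤ rg0 S v := by
  unfold lf0 rg0
  split_ifs
  · have : (0:ℝ) ≤ (Fintype.card V : ℝ) := Nat.cast_nonneg _
    linarith
  · exact le_refl _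

lemma claimA0 {G : SimpleGraph V} {S : Set V} {u v : V}
    (hI : ∀ a b, G.Adj a b → a ∈ S ∨ b ∈ S) (huv : G.Adj u v) :
    lf0 S u ≤ rg0 S v := by
  unfold lf0 rg0
  split_ifs
  · have : (0:ℝ) ≤ (Fintype.card V : ℝ) := Nat.cast_nonneg _
    linarith
  · have := emb_nonneg v; linarith
  · exact emb_le u
  · rcases hI u v huv with h | h <;> contradiction

lemma kill0 {S : Set V} {u v : V} (huv : u ≠ v) (hu : u ∉ S) (hv : v ∉ S) :
    ¬ (Set.Icc (lf0 S u) (rg0 S u) ∩ Set.Icc (lf0 S v) (rg0 S v)).Nonempty := by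
  have e1 : lf0 S u = emb u := if_neg hu
  have e2 : rg0 S u = emb u := if_neg hu
  have e3 : lf0 S v = emb v := if_neg hv
  have e4 : rg0 S v = emb v := if_neg hv
  rintro ⟨w, ⟨hw1, hw2⟩, hw3, hw4⟩
  rw [e1] at hw1; rw [e2] at hw2; rw [e3] at hw3; rw [e4] at hw4
  exact huv (emb_inj (by linarith))

end

lemma exists_maximal_matching (G : SimpleGraph V) [Fintype V] [DecidableEq V] :
    ∃ M : Finset (Sym2 V), IsMaximalMatchingSet G M := by
  classical
  have hne : (Finset.univ.filter (fun M : Finset (Sym2 V) => IsMatchingSet G M)).Nonempty := by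
    refine ⟨∅, Finset.mem_filter.mpr ⟨Finset.mem_univ _, ?_, ?_⟩⟩
    · simp
    · intro e he; simp at he
  obtain ⟨M, hMmem, hmax⟩ := Finset.exists_max_image _ (fun M => M.card) hne
  rw [Finset.mem_filter] at hMmem
  refine ⟨M, hMmem.2, ?_⟩
  intro e he hnm hins
  have hmem : insert e M ∈ Finset.univ.filter (fun M : Finset (Sym2 V) => IsMatchingSet G M) :=
    Finset.mem_filter.mpr ⟨Finset.mem_univ _, hins⟩
  have hle := hmax _ hmem
  rw [Finset.card_insert_of_notMem hnm] at hle
  omega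

lemma hasBoxRep_of_maximal (G : SimpleGraph V) [Fintype V] [DecidableEq V]
    (M : Finset (Sym2 V)) (hM : IsMaximalMatchingSet G M) :
    HasBoxRep G (M.card + 1) := by
  classical
  set S : Set V := {v | ∃ e ∈ M, v ∈ e} with hSdef
  have hI : ∀ a b, G.Adj a b → a ∈ S ∨ b ∈ S := by
    intro a b hab
    by_contra hcon
    push_neg at hcon
    obtain ⟨ha, hb⟩ := hcon
    have he : s(a, b) ∈ G.edgeSet := hab
    have hnm : s(a, b) ∉ M := fun h => ha ⟨_, h, Sym2.mem_mk_left a b⟩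
    apply hM.2 _ he hnm
    constructor
    · intro e he'
      rw [Finset.coe_insert, Set.mem_insert_iff] at he'
      rcases he' with rfl | he'
      · exact he
      · exact hM.1.1 he'
    · intro e he' f hf' hef z hz hzf
      rw [Finset.mem_insert] at he' hf'
      rcases he' with rfl | he' <;> rcases hf' with rfl | hf'
      · exact hef rfl
      · rcases Sym2.mem_iff.mp hz with rfl | rfl
        · exact ha ⟨f, hf', hzf⟩
        · exact hb ⟨f, hf', hzf⟩
      · rcases Sym2.mem_iff.mp hzf with rfl | rfl
        · exact ha ⟨e, he', hz⟩
        · exact hb ⟨e, he', hz⟩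
      · exact hM.1.2 e he' f hf' hef z hz hzf
  have memout : ∀ (e : Sym2 V) (v : V), v ∈ e ↔ Vmem (Quot.out e) v := by
    intro e v
    show v ∈ e ↔ _ ∨ _
    conv_lhs => rw [← Quot.out_eq e]
    exact Sym2.mem_iff
  have houtinj : Function.Injective (Quot.out : Sym2 V → V × V) := fun e f h => by
    rw [← Quot.out_eq e, ← Quot.out_eq f, h]
  set P0 : Finset (V × V) := M.image Quot.out with hP0
  have hmemP0 : ∀ p, p ∈ P0 ↔ ∃ e ∈ M, Quot.out e = p := by
    intro p; simp [hP0]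
  have hgood : GoodPairing G S P0 := by
    refine ⟨?_, ?_, ?_⟩
    · intro p hp
      obtain ⟨e, heM, rfl⟩ := (hmemP0 p).mp hp
      have hdiag : ¬ e.IsDiag := G.not_isDiag_of_mem_edgeSet (hM.1.1 heM)
      rw [← Quot.out_eq e, Sym2.mk_isDiag_iff] at hdiag
      exact hdiag
    · intro p hp q hq hpq v hvp hvq
      obtain ⟨e, heM, rfl⟩ := (hmemP0 p).mp hp
      obtain ⟨f, hfM, rfl⟩ := (hmemP0 q).mp hq
      have hef : e ≠ f := fun h => hpq (by rw [h])
      exact hM.1.2 e heM f hfM hef v ((memout e v).mpr hvp) ((memout f v).mpr hvq)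
    · intro v
      constructor
      · rintro ⟨e, heM, hv⟩
        exact ⟨Quot.out e, (hmemP0 _).mpr ⟨e, heM, rfl⟩, (memout e v).mp hv⟩
      · rintro ⟨p, hp, hvp⟩
        obtain ⟨e, heM, rfl⟩ := (hmemP0 p).mp hp
        exact ⟨e, heM, (memout e v).mpr hvp⟩
  have hcard0 : P0.card = M.card := Finset.card_image_of_injective _ houtinj
  obtain ⟨Q, hQ, hQcard, hclique⟩ := repair G S _ P0 hgood le_rfl
  have hQM : Q.card = M.card := by rw [hQcard, hcard0]
  obtain ⟨hQ1, hQ2, hQ3⟩ := hQ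
  have hmemS : ∀ p ∈ Q, p.1 ∈ S ∧ p.2 ∈ S := by
    intro p hp
    exact ⟨(hQ3 p.1).mpr ⟨p, hp, Or.inl rfl⟩, (hQ3 p.2).mpr ⟨p, hp, Or.inr rfl⟩⟩
  have hrep : HasBoxRep G (Q.card + 1) := by
    set pairL : V × V → V → ℝ :=
      fun p v => if G.Adj p.1 p.2 then lf1 G S p.1 p.2 v else lf2 G p.1 p.2 v with hpairL
    set pairR : V × V → V → ℝ :=
      fun p v => if G.Adj p.1 p.2 then rg1 G S p.1 p.2 v else rg2 G p.1 p.2 v with hpairR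
    set fa : V → Fin (Q.card + 1) → ℝ :=
      fun v i => Fin.cases (lf0 S v) (fun j => pairL (Q.equivFin.symm j).1 v) i with hfa
    set fb : V → Fin (Q.card + 1) → ℝ :=
      fun v i => Fin.cases (rg0 S v) (fun j => pairR (Q.equivFin.symm j).1 v) i with hfb
    have hfa0 : ∀ v, fa v 0 = lf0 S v := fun v => rfl
    have hfb0 : ∀ v, fb v 0 = rg0 S v := fun v => rfl
    have hfas : ∀ v j, fa v (Fin.succ j) = pairL (Q.equivFin.symm j).1 v := fun v j => by
      simp [hfa]
    have hfbs : ∀ v j, fb v (Fin.succ j) = pairR (Q.equivFin.symm j).1 v := fun v j => by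
      simp [hfb]
    -- helper: kill at a vertex of a good (non-adjacent) pair
    have helper1 : ∀ w z, ∀ p, ∀ hp : p ∈ Q, ¬ G.Adj p.1 p.2 → Vmem p w → z ≠ w →
        ¬ G.Adj z w → ∃ i : Fin (Q.card + 1),
          ¬ (Set.Icc (fa w i) (fb w i) ∩ Set.Icc (fa z i) (fb z i)).Nonempty := by
      intro w z p hp hpadj hwp hzw hnadjzw
      refine ⟨Fin.succ (Q.equivFin ⟨p, hp⟩), ?_⟩
      rw [hfas, hfas, hfbs, hfbs, Equiv.symm_apply_apply]
      simp only [hpairL, hpairR, if_neg hpadj]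
      rcases hwp with hwp | hwp
      · rw [hwp] at hzw hnadjzw ⊢
        exact kill2x hzw hnadjzw
      · rw [hwp] at hzw hnadjzw ⊢
        exact kill2y (hQ1 p hp) hzw hnadjzw
    -- helper: kill at a vertex of a bad (adjacent) pair against z outside S
    have helper2 : ∀ w z, ∀ p, ∀ hp : p ∈ Q, G.Adj p.1 p.2 → Vmem p w → z ∉ S →
        z ≠ p.1 → z ≠ p.2 → ¬ G.Adj z w → ∃ i : Fin (Q.card + 1),
          ¬ (Set.Icc (fa w i) (fb w i) ∩ Set.Icc (fa z i) (fb z i)).Nonempty := by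
      intro w z p hp hpadj hwp hzS hz1 hz2 hnadjzw
      refine ⟨Fin.succ (Q.equivFin ⟨p, hp⟩), ?_⟩
      rw [hfas, hfas, hfbs, hfbs, Equiv.symm_apply_apply]
      simp only [hpairL, hpairR, if_pos hpadj]
      rcases hwp with hwp | hwp
      · rw [hwp] at hnadjzw ⊢
        exact kill1x hzS hz1 hz2 hnadjzw
      · rw [hwp] at hnadjzw ⊢
        exact kill1y (hQ1 p hp) hzS hz1 hz2 hnadjzw
    refine ⟨fa, fb, ?_, ?_⟩
    · intro v i
      refine Fin.cases ?_ ?_ i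
      · rw [hfa0, hfb0]; exact lf0_le_rg0 S v
      · intro j
        rw [hfas, hfbs]
        simp only [hpairL, hpairR]
        by_cases h : G.Adj (Q.equivFin.symm j).1.1 (Q.equivFin.symm j).1.2
        · rw [if_pos h, if_pos h]; exact lf1_le_rg1 G S _ _ v
        · rw [if_neg h, if_neg h]; exact lf2_le_rg2 G _ _ v
    · intro u v huv
      constructor
      · intro hadj i
        refine Fin.cases ?_ ?_ i
        · rw [hfa0, hfa0, hfb0, hfb0]
          exact meet_iff.mpr ⟨lf0_le_rg0 S u, lf0_le_rg0 S v, claimA0 hI hadj,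
            claimA0 hI hadj.symm⟩
        · intro j
          rw [hfas, hfas, hfbs, hfbs]
          simp only [hpairL, hpairR]
          have hpQ : (Q.equivFin.symm j).1 ∈ Q := (Q.equivFin.symm j).2
          have hp12 := hQ1 _ hpQ
          by_cases h : G.Adj (Q.equivFin.symm j).1.1 (Q.equivFin.symm j).1.2
          · rw [if_pos h, if_pos h, if_pos h, if_pos h]
            exact meet_iff.mpr ⟨lf1_le_rg1 G S _ _ u, lf1_le_rg1 G S _ _ v,
              claimA1 hp12 hI hadj, claimA1 hp12 hI hadj.symm⟩
          · rw [if_neg h, if_neg h, if_neg h, if_neg h]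
            exact meet_iff.mpr ⟨lf2_le_rg2 G _ _ u, lf2_le_rg2 G _ _ v,
              claimA2 h hadj, claimA2 h hadj.symm⟩
      · intro hall
        by_contra hnadj
        have hnadj' : ¬ G.Adj v u := fun h => hnadj h.symm
        have hkill : ∃ i : Fin (Q.card + 1),
            ¬ (Set.Icc (fa u i) (fb u i) ∩ Set.Icc (fa v i) (fb v i)).Nonempty := by
          by_cases huS : u ∈ S
          · obtain ⟨p, hpQ, hup⟩ := (hQ3 u).mp huS
            by_cases hpadj : G.Adj p.1 p.2
            · by_cases hvS : v ∈ S
              · obtain ⟨q, hqQ, hvq⟩ := (hQ3 v).mp hvS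
                by_cases hqadj : G.Adj q.1 q.2
                · exact absurd (hclique p hpQ hpadj q hqQ hqadj u hup v hvq huv) hnadj
                · obtain ⟨i, hi⟩ := helper1 v u q hqQ hqadj hvq huv hnadj
                  exact ⟨i, fun hcc => hi (by rwa [Set.inter_comm] at hcc)⟩
              · have hv1 : v ≠ p.1 := fun h => hvS (h ▸ (hmemS p hpQ).1)
                have hv2 : v ≠ p.2 := fun h => hvS (h ▸ (hmemS p hpQ).2)
                exact helper2 u v p hpQ hpadj hup hvS hv1 hv2 hnadj'
            · exact helper1 u v p hpQ hpadj hup (Ne.symm huv) hnadj'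
          · by_cases hvS : v ∈ S
            · obtain ⟨q, hqQ, hvq⟩ := (hQ3 v).mp hvS
              by_cases hqadj : G.Adj q.1 q.2
              · have hu1 : u ≠ q.1 := fun h => huS (h ▸ (hmemS q hqQ).1)
                have hu2 : u ≠ q.2 := fun h => huS (h ▸ (hmemS q hqQ).2)
                obtain ⟨i, hi⟩ := helper2 v u q hqQ hqadj hvq huS hu1 hu2 hnadj
                exact ⟨i, fun hcc => hi (by rwa [Set.inter_comm] at hcc)⟩
              · obtain ⟨i, hi⟩ := helper1 v u q hqQ hqadj hvq huv hnadj
                exact ⟨i, fun hcc => hi (by rwa [Set.inter_comm] at hcc)⟩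
            · exact ⟨0, by rw [hfa0, hfa0, hfb0, hfb0]; exact kill0 huv huS hvS⟩
        obtain ⟨i, hi⟩ := hkill
        exact hi (hall i)
  rwa [hQM] at hrep

end BoxAux

/-- Boxicity is at most `ν(G) + 1`, where `ν(G)` is the minimum cardinality of a
maximal matching of `G`. -/
theorem boxicity_le_minMaximalMatching {V : Type*} [Fintype V] [DecidableEq V] [Nonempty V]
    (G : SimpleGraph V) :
    boxicity G ≤ minMaximalMatching G + 1 := by
  classical
  obtain ⟨M0, hM0⟩ := BoxAux.exists_maximal_matching G
  have hne : {k : ℕ | ∃ M : Finset (Sym2 V), IsMaximalMatchingSet G M ∧ M.card = k}.Nonempty :=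
    ⟨M0.card, M0, hM0, rfl⟩
  obtain ⟨M, hM, hMc⟩ := Nat.sInf_mem hne
  have hbox : HasBoxRep G (M.card + 1) := BoxAux.hasBoxRep_of_maximal G M hM
  have hν : minMaximalMatching G = M.card := hMc.symm
  refine Nat.sInf_le ?_
  show HasBoxRep G (minMaximalMatching G + 1)
  rw [hν]
  exact hbox
end

section
/- Let G be a finite simple graph on a nonempty vertex set. Then box(G) ≤ min{ν(G) + 1, ν(Ḡ)}, where Ḡ denotes the complement of G, except that when Ḡ has no edges (i.e., G is complete) the term ν(Ḡ) = 0 and indeed box(G) = 0. -/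
/- ### Auxiliary lemmas -/

lemma icc_nonempty_iff {a b c d : ℝ} (h1 : a ≤ b) (h2 : c ≤ d) :
    (Set.Icc a b ∩ Set.Icc c d).Nonempty ↔ a ≤ d ∧ c ≤ b := by
  rw [Set.Icc_inter_Icc, Set.nonempty_Icc, sup_le_iff, le_inf_iff, le_inf_iff]
  tauto

lemma exists_maximalMatchingSet {V : Type*} [Fintype V] [DecidableEq V] (G : SimpleGraph V) :
    ∃ M : Finset (Sym2 V), IsMaximalMatchingSet G M := by
  classical
  have h0 : IsMatchingSet G (∅ : Finset (Sym2 V)) := ⟨by simp, by simp⟩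
  obtain ⟨M, hM, hmax⟩ := Finset.exists_max_image
      (Finset.univ.filter fun M : Finset (Sym2 V) => IsMatchingSet G M) Finset.card
      ⟨∅, by simp [h0]⟩
  rw [Finset.mem_filter] at hM
  refine ⟨M, hM.2, ?_⟩
  intro e _ heM hins
  have hle : (insert e M).card ≤ M.card := hmax _ (by simp [hins])
  rw [Finset.card_insert_of_notMem heM] at hle
  omega

lemma exists_min_maximalMatchingSet {V : Type*} [Fintype V] [DecidableEq V]
    (G : SimpleGraph V) :
    ∃ M : Finset (Sym2 V), IsMaximalMatchingSet G M ∧ M.card = minMaximalMatching G := by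
  have hne : {k : ℕ | ∃ M : Finset (Sym2 V), IsMaximalMatchingSet G M ∧ M.card = k}.Nonempty := by
    obtain ⟨M, hM⟩ := exists_maximalMatchingSet G
    exact ⟨M.card, M, hM, rfl⟩
  exact Nat.sInf_mem hne

/-- From a matching we can extract, for each edge, an ordered pair of endpoints. -/
lemma matching_pairs {V : Type*} [Fintype V] [DecidableEq V] {H : SimpleGraph V}
    {M : Finset (Sym2 V)} (hM : IsMaximalMatchingSet H M) :
    ∃ p q : Fin M.card → V,
      (∀ i, H.Adj (p i) (q i)) ∧
      (∀ i j, i ≠ j → p i ≠ p j ∧ p i ≠ q j ∧ q i ≠ p j ∧ q i ≠ q j) ∧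
      (∀ v, (∃ e ∈ M, v ∈ e) ↔ ∃ i, v = p i ∨ v = q i) := by
  classical
  obtain ⟨⟨hsub, hdisj⟩, _⟩ := hM
  have hAll : ∀ e ∈ M, ∃ xy : V × V, H.Adj xy.1 xy.2 ∧ e = s(xy.1, xy.2) := by
    intro e he
    induction e using Sym2.ind with
    | _ x y => exact ⟨(x, y), H.mem_edgeSet.mp (hsub (Finset.mem_coe.mpr he)), rfl⟩
  choose F hF1 hF2 using hAll
  have hmem1 : ∀ (e : Sym2 V) (he : e ∈ M), (F e he).1 ∈ e ∧ (F e he).2 ∈ e := by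
    intro e he
    have h2 := hF2 e he
    obtain ⟨z, hz⟩ : ∃ z, F e he = z := ⟨_, rfl⟩
    rw [hz] at h2 ⊢
    rw [h2]
    exact ⟨Sym2.mem_mk_left _ _, Sym2.mem_mk_right _ _⟩
  have hv2 : ∀ (e : Sym2 V) (he : e ∈ M) (v : V), v ∈ e → v = (F e he).1 ∨ v = (F e he).2 := by
    intro e he v hv
    have h2 := hF2 e he
    obtain ⟨z, hz⟩ : ∃ z, F e he = z := ⟨_, rfl⟩
    rw [hz] at h2 ⊢
    rw [h2] at hv
    exact Sym2.mem_iff.mp hv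
  let E : Fin M.card → Sym2 V := fun i => (M.equivFin.symm i : Sym2 V)
  have hEmem : ∀ i, E i ∈ M := fun i => (M.equivFin.symm i).2
  have hEinj : ∀ i j, E i = E j → i = j := by
    intro i j h
    exact M.equivFin.symm.injective (Subtype.ext h)
  refine ⟨fun i => (F (E i) (hEmem i)).1, fun i => (F (E i) (hEmem i)).2, ?_, ?_, ?_⟩
  · intro i; exact hF1 (E i) (hEmem i)
  · intro i j hij
    have hEne : E i ≠ E j := fun hc => hij (hEinj _ _ hc)
    have hd := hdisj (E i) (hEmem i) (E j) (hEmem j) hEne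
    have h1 := (hmem1 (E i) (hEmem i)).1
    have h2 := (hmem1 (E i) (hEmem i)).2
    have h1' := (hmem1 (E j) (hEmem j)).1
    have h2' := (hmem1 (E j) (hEmem j)).2
    refine ⟨?_, ?_, ?_, ?_⟩
    · show (F (E i) (hEmem i)).1 ≠ (F (E j) (hEmem j)).1
      intro hc; exact hd _ h1 (hc ▸ h1')
    · show (F (E i) (hEmem i)).1 ≠ (F (E j) (hEmem j)).2
      intro hc; exact hd _ h1 (hc ▸ h2')
    · show (F (E i) (hEmem i)).2 ≠ (F (E j) (hEmem j)).1
      intro hc; exact hd _ h2 (hc ▸ h1')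
    · show (F (E i) (hEmem i)).2 ≠ (F (E j) (hEmem j)).2
      intro hc; exact hd _ h2 (hc ▸ h2')
  · intro v
    constructor
    · rintro ⟨e, he, hv⟩
      have he' : E (M.equivFin ⟨e, he⟩) = e := by
        simp only [E, Equiv.symm_apply_apply]
      exact ⟨M.equivFin ⟨e, he⟩, hv2 _ (hEmem _) v (by rw [he']; exact hv)⟩
    · rintro ⟨i, h | h⟩
      · exact ⟨E i, hEmem i, by rw [h]; exact (hmem1 (E i) (hEmem i)).1⟩
      · exact ⟨E i, hEmem i, by rw [h]; exact (hmem1 (E i) (hEmem i)).2⟩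

/- ### box(G) ≤ ν(complement) -/

lemma hasBoxRep_of_compl_matching {V : Type*} [Fintype V] [DecidableEq V]
    (G : SimpleGraph V) (M : Finset (Sym2 V)) (hM : IsMaximalMatchingSet Gᶜ M) :
    HasBoxRep G M.card := by
  classical
  obtain ⟨p, q, hadjf, hinj, hcov⟩ := matching_pairs hM
  have hpq : ∀ i, p i ≠ q i := fun i => (hadjf i).ne
  have hnadj : ∀ i, ¬ G.Adj (p i) (q i) := fun i => ((G.compl_adj _ _).mp (hadjf i)).2
  have hkey : ∀ u v : V, u ≠ v → ¬ G.Adj u v →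
      ∃ i, u = p i ∨ u = q i ∨ v = p i ∨ v = q i := by
    intro u v hne hna
    by_cases hm : s(u,v) ∈ M
    · obtain ⟨i, h⟩ := (hcov u).mp ⟨s(u,v), hm, by simp [Sym2.mem_iff]⟩
      rcases h with h | h
      · exact ⟨i, Or.inl h⟩
      · exact ⟨i, Or.inr (Or.inl h)⟩
    · have hGc : s(u,v) ∈ Gᶜ.edgeSet := (Gᶜ.mem_edgeSet).mpr ((G.compl_adj u v).mpr ⟨hne, hna⟩)
      have hnm := hM.2 _ hGc hm
      by_contra hcon
      push_neg at hcon
      apply hnm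
      constructor
      · intro e he
        rcases Finset.mem_coe.mp he |> Finset.mem_insert.mp with rfl | he'
        · exact hGc
        · exact hM.1.1 (Finset.mem_coe.mpr he')
      · intro e he e' he' hee x hx hx'
        rcases Finset.mem_insert.mp he with rfl | heM
        · rcases Finset.mem_insert.mp he' with rfl | he'M
          · exact hee rfl
          · rcases Sym2.mem_iff.mp hx with rfl | rfl
            · obtain ⟨i, h⟩ := (hcov x).mp ⟨e', he'M, hx'⟩
              rcases h with h | h
              · exact (hcon i).1 h
              · exact (hcon i).2.1 h
            · obtain ⟨i, h⟩ := (hcov x).mp ⟨e', he'M, hx'⟩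
              rcases h with h | h
              · exact (hcon i).2.2.1 h
              · exact (hcon i).2.2.2 h
        · rcases Finset.mem_insert.mp he' with rfl | he'M
          · rcases Sym2.mem_iff.mp hx' with rfl | rfl
            · obtain ⟨i, h⟩ := (hcov x).mp ⟨e, heM, hx⟩
              rcases h with h | h
              · exact (hcon i).1 h
              · exact (hcon i).2.1 h
            · obtain ⟨i, h⟩ := (hcov x).mp ⟨e, heM, hx⟩
              rcases h with h | h
              · exact (hcon i).2.2.1 h
              · exact (hcon i).2.2.2 h
          · exact hM.1.2 e heM e' he'M hee x hx hx'
  set A : V → Fin M.card → ℝ := fun v i =>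
    if v = p i then 0 else if v = q i then 3 else if G.Adj v (p i) then 0 else 1 with hA
  set B : V → Fin M.card → ℝ := fun v i =>
    if v = p i then 0 else if v = q i then 3 else if G.Adj v (q i) then 3 else 2 with hB
  have hAB : ∀ v i, A v i ≤ B v i := by
    intro v i
    simp only [hA, hB]
    split_ifs <;> norm_num
  have hmeet : ∀ u v : V, G.Adj u v → ∀ i, A u i ≤ B v i := by
    intro u v huv i
    have hBv3 : B v i = 0 ∨ B v i = 2 ∨ B v i = 3 := by
      simp only [hB]; split_ifs <;> norm_num
    by_cases hup : u = p i
    · have h0 : A u i = 0 := by simp only [hA]; rw [if_pos hup]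
      rw [h0]
      rcases hBv3 with h | h | h <;> rw [h] <;> norm_num
    · by_cases huq : u = q i
      · have hA3 : A u i = 3 := by simp only [hA]; rw [if_neg hup, if_pos huq]
        have hvp : v ≠ p i := by
          intro hc
          exact hnadj i (by rw [← hc, ← huq]; exact huv.symm)
        have hB3 : B v i = 3 := by
          simp only [hB]
          rw [if_neg hvp]
          by_cases hvq : v = q i
          · rw [if_pos hvq]
          · rw [if_neg hvq, if_pos (by rw [← huq]; exact huv.symm)]
        rw [hA3, hB3]
      · have hA1 : A u i ≤ 1 := by
          simp only [hA]; rw [if_neg hup, if_neg huq]; split_ifs <;> norm_num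
        by_cases hvp : v = p i
        · have h0 : A u i = 0 := by
            simp only [hA]; rw [if_neg hup, if_neg huq, if_pos (by rw [← hvp]; exact huv)]
          have hB0 : B v i = 0 := by simp only [hB]; rw [if_pos hvp]
          rw [h0, hB0]
        · have hB2 : (2:ℝ) ≤ B v i := by
            simp only [hB]
            rw [if_neg hvp]
            by_cases hvq : v = q i
            · rw [if_pos hvq]; norm_num
            · rw [if_neg hvq]; split_ifs <;> norm_num
          linarith
  have hsep : ∀ u v : V, u ≠ v → ¬ G.Adj u v → ∃ i, ¬ (A u i ≤ B v i ∧ A v i ≤ B u i) := by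
    intro u v hne hna
    obtain ⟨i, hc⟩ := hkey u v hne hna
    refine ⟨i, ?_⟩
    rintro ⟨h1, h2⟩
    have hval : ∀ w : V, w ≠ p i → ¬ G.Adj w (p i) → (1:ℝ) ≤ A w i := by
      intro w hwp hwa
      simp only [hA]
      rw [if_neg hwp]
      by_cases hwq : w = q i
      · rw [if_pos hwq]; norm_num
      · rw [if_neg hwq, if_neg hwa]
    have hval' : ∀ w : V, w ≠ q i → ¬ G.Adj w (q i) → B w i ≤ 2 := by
      intro w hwq hwa
      simp only [hB]
      by_cases hwp : w = p i
      · rw [if_pos hwp]; norm_num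
      · rw [if_neg hwp, if_neg hwq, if_neg hwa]
    rcases hc with h | h | h | h
    · have hBu : B u i = 0 := by simp only [hB]; rw [if_pos h]
      have hAv := hval v (fun hv => hne (h.trans hv.symm))
        (fun ha => hna (by rw [h]; exact ha.symm))
      rw [hBu] at h2
      linarith
    · have hAu : A u i = 3 := by
        simp only [hA]
        rw [if_neg (by rw [h]; exact fun hc => hpq i hc.symm), if_pos h]
      have hBv := hval' v (fun hv => hne (h.trans hv.symm))
        (fun ha => hna (by rw [h]; exact ha.symm))
      rw [hAu] at h1
      linarith
    · have hBv : B v i = 0 := by simp only [hB]; rw [if_pos h]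
      have hAu := hval u (fun hu => hne (hu.trans h.symm))
        (fun ha => hna (by rw [h]; exact ha))
      rw [hBv] at h1
      linarith
    · have hAv : A v i = 3 := by
        simp only [hA]
        rw [if_neg (by rw [h]; exact fun hc => hpq i hc.symm), if_pos h]
      have hBu := hval' u (fun hu => hne (hu.trans h.symm))
        (fun ha => hna (by rw [h]; exact ha))
      rw [hAv] at h2
      linarith
  refine ⟨A, B, hAB, fun u v hne => ?_⟩
  constructor
  · intro hadj i
    rw [icc_nonempty_iff (hAB u i) (hAB v i)]
    exact ⟨hmeet u v hadj i, hmeet v u hadj.symm i⟩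
  · intro h
    by_contra hna
    obtain ⟨i, hviol⟩ := hsep u v hne hna
    have hi := h i
    rw [icc_nonempty_iff (hAB u i) (hAB v i)] at hi
    exact hviol hi

lemma hasBoxRep_of_matching {V : Type*} [Fintype V] [DecidableEq V]
    (G : SimpleGraph V) (M : Finset (Sym2 V)) (hM : IsMaximalMatchingSet G M) :
    HasBoxRep G (M.card + 1) := by
  classical
  obtain ⟨p0, q0, hadj0, hinj0, hcov0⟩ := matching_pairs hM
  -- independence of uncovered vertices
  have hindep : ∀ u v : V, ¬ (∃ e ∈ M, u ∈ e) → ¬ (∃ e ∈ M, v ∈ e) → u ≠ v → ¬ G.Adj u v := by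
    intro u v hcu hcv hne hadj
    by_cases hm : s(u,v) ∈ M
    · exact hcu ⟨s(u,v), hm, by simp⟩
    · have hGe : s(u,v) ∈ G.edgeSet := G.mem_edgeSet.mpr hadj
      have hnm := hM.2 _ hGe hm
      apply hnm
      constructor
      · intro e he
        rcases Finset.mem_coe.mp he |> Finset.mem_insert.mp with rfl | he'
        · exact hGe
        · exact hM.1.1 (Finset.mem_coe.mpr he')
      · intro e he e' he' hee x hx hx'
        rcases Finset.mem_insert.mp he with rfl | heM
        · rcases Finset.mem_insert.mp he' with rfl | he'M
          · exact hee rfl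
          · rcases Sym2.mem_iff.mp hx with rfl | rfl
            · exact hcu ⟨e', he'M, hx'⟩
            · exact hcv ⟨e', he'M, hx'⟩
        · rcases Finset.mem_insert.mp he' with rfl | he'M
          · rcases Sym2.mem_iff.mp hx' with rfl | rfl
            · exact hcu ⟨e, heM, hx⟩
            · exact hcv ⟨e, heM, hx⟩
          · exact hM.1.2 e heM e' he'M hee x hx hx'
  -- valid re-pairings of the matched vertices
  set Valid : (Fin M.card × Bool → V) → Prop := fun g =>
    Function.Injective g ∧ ∀ v, (∃ x, g x = v) ↔ (∃ e ∈ M, v ∈ e) with hValidDef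
  set cnt : (Fin M.card × Bool → V) → ℕ := fun g =>
    (Finset.univ.filter fun i : Fin M.card => G.Adj (g (i, false)) (g (i, true))).card
    with hcntDef
  have hvalid0 : Valid (fun x => cond x.2 (q0 x.1) (p0 x.1)) := by
    simp only [hValidDef]
    constructor
    · rintro ⟨i, s⟩ ⟨j, s'⟩ h
      change cond s (q0 i) (p0 i) = cond s' (q0 j) (p0 j) at h
      by_cases hij : i = j
      · subst hij
        cases s <;> cases s' <;>
          simp only [Bool.cond_false, Bool.cond_true] at h <;>
          first
            | rfl
            | exact absurd h (hadj0 i).ne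
            | exact absurd h.symm (hadj0 i).ne
      · exfalso
        obtain ⟨h1, h2, h3, h4⟩ := hinj0 i j hij
        cases s <;> cases s' <;>
          simp only [Bool.cond_false, Bool.cond_true] at h
        · exact h1 h
        · exact h2 h
        · exact h3 h
        · exact h4 h
    · intro v
      constructor
      · rintro ⟨⟨i, s⟩, hx⟩
        cases s
        · exact (hcov0 v).mpr ⟨i, Or.inl hx.symm⟩
        · exact (hcov0 v).mpr ⟨i, Or.inr hx.symm⟩
      · intro hv
        obtain ⟨i, h | h⟩ := (hcov0 v).mp hv
        · exact ⟨(i, false), h.symm⟩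
        · exact ⟨(i, true), h.symm⟩
  have hCSne : {n : ℕ | ∃ g : Fin M.card × Bool → V, Valid g ∧ cnt g = n}.Nonempty :=
    ⟨_, _, hvalid0, rfl⟩
  obtain ⟨f, hvf, hcntf⟩ := Nat.sInf_mem hCSne
  have hmin : ∀ g : Fin M.card × Bool → V, Valid g → cnt f ≤ cnt g := by
    intro g hg
    rw [hcntf]
    exact Nat.sInf_le ⟨g, hg, rfl⟩
  have hvf' := hvf
  simp only [hValidDef] at hvf'
  obtain ⟨hfinj, hfcov⟩ := hvf'
  have hIJ : ∀ (i : Fin M.card) (s : Bool) (j : Fin M.card) (s' : Bool),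
      f (i, s) = f (j, s') → i = j ∧ s = s' := by
    intro i s j s' h
    have h2 := hfinj h
    rw [Prod.ext_iff] at h2
    exact h2
  -- composing with an equiv preserves validity
  have hvalid_comp : ∀ (g : Fin M.card × Bool → V), Valid g →
      ∀ σ : (Fin M.card × Bool) ≃ (Fin M.card × Bool), Valid (g ∘ σ) := by
    intro g hg σ
    simp only [hValidDef] at hg ⊢
    refine ⟨hg.1.comp σ.injective, ?_⟩
    intro v
    rw [← hg.2 v]
    constructor
    · rintro ⟨x, hx⟩; exact ⟨σ x, hx⟩
    · rintro ⟨y, hy⟩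
      exact ⟨σ.symm y, by simp only [Function.comp_apply, Equiv.apply_symm_apply]; exact hy⟩
  -- flipping one pair preserves the count
  have hcnt_flip : ∀ (g : Fin M.card × Bool → V) (i0 : Fin M.card),
      cnt (g ∘ Equiv.swap (i0, false) (i0, true)) = cnt g := by
    intro g i0
    simp only [hcntDef, Function.comp_apply]
    apply congrArg
    apply Finset.filter_congr
    intro l _
    by_cases hli : l = i0
    · subst hli
      rw [Equiv.swap_apply_left, Equiv.swap_apply_right]
      exact G.adj_comm _ _
    · rw [Equiv.swap_apply_of_ne_of_ne (fun hc => hli (congrArg Prod.fst hc))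
            (fun hc => Bool.noConfusion (congrArg Prod.snd hc)),
          Equiv.swap_apply_of_ne_of_ne (fun hc => Bool.noConfusion (congrArg Prod.snd hc))
            (fun hc => hli (congrArg Prod.fst hc))]
  -- key swap argument: in a minimal pairing, adjacent pairs are cross-adjacent
  have hstar : ∀ g : Fin M.card × Bool → V, Valid g → cnt g ≤ cnt f →
      ∀ i j : Fin M.card, i ≠ j →
      G.Adj (g (i, false)) (g (i, true)) → G.Adj (g (j, false)) (g (j, true)) →
      G.Adj (g (i, false)) (g (j, false)) := by
    intro g hg hgle i j hij hAi hAj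
    by_contra hnad
    have hvs := hvalid_comp g hg (Equiv.swap (i, true) (j, false))
    have hlt : cnt (g ∘ Equiv.swap (i, true) (j, false)) < cnt g := by
      simp only [hcntDef, Finset.card_filter, Function.comp_apply]
      refine Finset.sum_lt_sum ?_ ⟨i, Finset.mem_univ i, ?_⟩
      · intro l _
        by_cases hli : l = i
        · subst hli
          have e1 : (Equiv.swap ((l : Fin M.card), true) (j, false)) (l, false) = (l, false) :=
            Equiv.swap_apply_of_ne_of_ne (fun hc => Bool.noConfusion (congrArg Prod.snd hc))
              (fun hc => hij (congrArg Prod.fst hc))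
          have e2 : (Equiv.swap ((l : Fin M.card), true) (j, false)) (l, true) = (j, false) :=
            Equiv.swap_apply_left _ _
          simp only [e1, e2]
          rw [if_neg hnad]
          exact Nat.zero_le _
        · by_cases hlj : l = j
          · subst hlj
            have e1 : (Equiv.swap ((i : Fin M.card), true) (l, false)) (l, false) = (i, true) :=
              Equiv.swap_apply_right _ _
            have e2 : (Equiv.swap ((i : Fin M.card), true) (l, false)) (l, true) = (l, true) :=
              Equiv.swap_apply_of_ne_of_ne (fun hc => hij (congrArg Prod.fst hc).symm)
                (fun hc => Bool.noConfusion (congrArg Prod.snd hc))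
            simp only [e1, e2]
            rw [if_pos hAj]
            split_ifs <;> norm_num
          · have e1 : (Equiv.swap ((i : Fin M.card), true) (j, false)) (l, false) = (l, false) :=
              Equiv.swap_apply_of_ne_of_ne (fun hc => Bool.noConfusion (congrArg Prod.snd hc))
                (fun hc => hlj (congrArg Prod.fst hc))
            have e2 : (Equiv.swap ((i : Fin M.card), true) (j, false)) (l, true) = (l, true) :=
              Equiv.swap_apply_of_ne_of_ne (fun hc => hli (congrArg Prod.fst hc))
                (fun hc => Bool.noConfusion (congrArg Prod.snd hc))
            simp only [e1, e2]
            exact le_rfl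
      · have e1 : (Equiv.swap ((i : Fin M.card), true) (j, false)) (i, false) = (i, false) :=
          Equiv.swap_apply_of_ne_of_ne (fun hc => Bool.noConfusion (congrArg Prod.snd hc))
            (fun hc => hij (congrArg Prod.fst hc))
        have e2 : (Equiv.swap ((i : Fin M.card), true) (j, false)) (i, true) = (j, false) :=
          Equiv.swap_apply_left _ _
        simp only [e1, e2]
        rw [if_neg hnad, if_pos hAi]
        norm_num
    have hge := hmin _ hvs
    omega
  -- all cross adjacencies between adjacent pairs
  have hswapi : ∀ (g : Fin M.card × Bool → V) (i0 l : Fin M.card) (s : Bool),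
      l ≠ i0 → (g ∘ Equiv.swap (i0, false) (i0, true)) (l, s) = g (l, s) := by
    intro g i0 l s hl
    simp only [Function.comp_apply]
    rw [Equiv.swap_apply_of_ne_of_ne (fun hc => hl (congrArg Prod.fst hc))
          (fun hc => hl (congrArg Prod.fst hc))]
  have hclique : ∀ (i j : Fin M.card) (s s' : Bool), i ≠ j →
      G.Adj (f (i, false)) (f (i, true)) → G.Adj (f (j, false)) (f (j, true)) →
      G.Adj (f (i, s)) (f (j, s')) := by
    intro i j s s' hij hAi hAj
    cases s
    · cases s'
      · exact hstar f hvf le_rfl i j hij hAi hAj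
      · have hv' := hvalid_comp f hvf (Equiv.swap ((j : Fin M.card), false) (j, true))
        have hc' : cnt (f ∘ Equiv.swap ((j : Fin M.card), false) (j, true)) ≤ cnt f :=
          le_of_eq (hcnt_flip f j)
        have h := hstar _ hv' hc' i j hij
          (by rw [hswapi f j i false hij, hswapi f j i true hij]; exact hAi)
          (by simp only [Function.comp_apply, Equiv.swap_apply_left, Equiv.swap_apply_right]
              exact hAj.symm)
        rw [hswapi f j i false hij] at h
        simp only [Function.comp_apply, Equiv.swap_apply_left] at h
        exact h
    · cases s'
      · have hv' := hvalid_comp f hvf (Equiv.swap ((i : Fin M.card), false) (i, true))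
        have hc' : cnt (f ∘ Equiv.swap ((i : Fin M.card), false) (i, true)) ≤ cnt f :=
          le_of_eq (hcnt_flip f i)
        have h := hstar _ hv' hc' i j hij
          (by simp only [Function.comp_apply, Equiv.swap_apply_left, Equiv.swap_apply_right]
              exact hAi.symm)
          (by rw [hswapi f i j false (Ne.symm hij), hswapi f i j true (Ne.symm hij)]; exact hAj)
        rw [hswapi f i j false (Ne.symm hij)] at h
        simp only [Function.comp_apply, Equiv.swap_apply_left] at h
        exact h
      · have hv1 := hvalid_comp f hvf (Equiv.swap ((i : Fin M.card), false) (i, true))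
        have hv' := hvalid_comp _ hv1 (Equiv.swap ((j : Fin M.card), false) (j, true))
        have hc' : cnt ((f ∘ Equiv.swap ((i : Fin M.card), false) (i, true)) ∘
            Equiv.swap ((j : Fin M.card), false) (j, true)) ≤ cnt f := by
          rw [hcnt_flip _ j, hcnt_flip f i]
        have e1 : ((f ∘ Equiv.swap ((i : Fin M.card), false) (i, true)) ∘
            Equiv.swap ((j : Fin M.card), false) (j, true)) (i, false) = f (i, true) := by
          rw [hswapi _ j i false hij]
          simp only [Function.comp_apply, Equiv.swap_apply_left]
        have e2 : ((f ∘ Equiv.swap ((i : Fin M.card), false) (i, true)) ∘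
            Equiv.swap ((j : Fin M.card), false) (j, true)) (i, true) = f (i, false) := by
          rw [hswapi _ j i true hij]
          simp only [Function.comp_apply, Equiv.swap_apply_right]
        have e3 : ((f ∘ Equiv.swap ((i : Fin M.card), false) (i, true)) ∘
            Equiv.swap ((j : Fin M.card), false) (j, true)) (j, false) = f (j, true) := by
          simp only [Function.comp_apply, Equiv.swap_apply_left]
          rw [show (Equiv.swap ((i : Fin M.card), false) (i, true)) (j, true) = (j, true) from
            Equiv.swap_apply_of_ne_of_ne (fun hc => hij (congrArg Prod.fst hc).symm)
              (fun hc => hij (congrArg Prod.fst hc).symm)]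
        have e4 : ((f ∘ Equiv.swap ((i : Fin M.card), false) (i, true)) ∘
            Equiv.swap ((j : Fin M.card), false) (j, true)) (j, true) = f (j, false) := by
          simp only [Function.comp_apply, Equiv.swap_apply_right]
          rw [show (Equiv.swap ((i : Fin M.card), false) (i, true)) (j, false) = (j, false) from
            Equiv.swap_apply_of_ne_of_ne (fun hc => hij (congrArg Prod.fst hc).symm)
              (fun hc => hij (congrArg Prod.fst hc).symm)]
        have h := hstar _ hv' hc' i j hij
          (by rw [e1, e2]; exact hAi.symm)
          (by rw [e3, e4]; exact hAj.symm)
        rw [e1, e3] at h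
        exact h
  -- the injection of vertices into (1,2] for the last dimension
  set c : V → ℝ := fun v => 1 + 1 / (((Fintype.equivFin V) v : ℕ) + 2) with hcDef
  have hcb : ∀ v, 1 ≤ c v ∧ c v ≤ 2 := by
    intro v
    simp only [hcDef]
    have h2 : (0:ℝ) < (((Fintype.equivFin V) v : ℕ) : ℝ) + 2 := by positivity
    constructor
    · have h3 : (0:ℝ) < 1 / ((((Fintype.equivFin V) v : ℕ) : ℝ) + 2) := by positivity
      linarith
    · have h3 : 1 / ((((Fintype.equivFin V) v : ℕ) : ℝ) + 2) ≤ 1 := by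
        rw [div_le_one h2]
        have h4 : (0:ℝ) ≤ (((Fintype.equivFin V) v : ℕ) : ℝ) := Nat.cast_nonneg _
        linarith
      linarith
  have hcinj : ∀ u v : V, c u = c v → u = v := by
    intro u v h
    simp only [hcDef] at h
    have h2 : (0:ℝ) < (((Fintype.equivFin V) u : ℕ) : ℝ) + 2 := by positivity
    have h3 : (0:ℝ) < (((Fintype.equivFin V) v : ℕ) : ℝ) + 2 := by positivity
    have h2' : ((((Fintype.equivFin V) u : ℕ) : ℝ) + 2) ≠ 0 := ne_of_gt h2
    have h3' : ((((Fintype.equivFin V) v : ℕ) : ℝ) + 2) ≠ 0 := ne_of_gt h3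
    have h5 : 1 / ((((Fintype.equivFin V) u : ℕ) : ℝ) + 2) =
        1 / ((((Fintype.equivFin V) v : ℕ) : ℝ) + 2) := add_left_cancel h
    have h6 : ((Fintype.equivFin V) u : ℕ) = ((Fintype.equivFin V) v : ℕ) := by
      field_simp at h5
      exact_mod_cast (add_right_cancel h5.symm)
    exact (Fintype.equivFin V).injective (Fin.val_injective h6)
  -- the box representation
  set lo : V → Fin (M.card + 1) → ℝ := fun v i =>
    if h : (i : ℕ) < M.card then
      if G.Adj (f (⟨(i:ℕ), h⟩, false)) (f (⟨(i:ℕ), h⟩, true)) then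
        if v = f (⟨(i:ℕ), h⟩, false) then 1
        else if v = f (⟨(i:ℕ), h⟩, true) then 2
        else if (∃ e ∈ M, v ∈ e) then 0
        else if G.Adj v (f (⟨(i:ℕ), h⟩, false)) then 0
        else if G.Adj v (f (⟨(i:ℕ), h⟩, true)) then 3.5
        else 4.5
      else
        if v = f (⟨(i:ℕ), h⟩, false) then 0
        else if v = f (⟨(i:ℕ), h⟩, true) then 3
        else if G.Adj v (f (⟨(i:ℕ), h⟩, false)) then 0
        else 1
    else if (∃ e ∈ M, v ∈ e) then 1 else c v
    with hloDef
  set hi : V → Fin (M.card + 1) → ℝ := fun v i =>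
    if h : (i : ℕ) < M.card then
      if G.Adj (f (⟨(i:ℕ), h⟩, false)) (f (⟨(i:ℕ), h⟩, true)) then
        if v = f (⟨(i:ℕ), h⟩, false) then 3
        else if v = f (⟨(i:ℕ), h⟩, true) then 4
        else if (∃ e ∈ M, v ∈ e) then 5
        else if G.Adj v (f (⟨(i:ℕ), h⟩, true)) then 5
        else if G.Adj v (f (⟨(i:ℕ), h⟩, false)) then 1.5
        else 5
      else
        if v = f (⟨(i:ℕ), h⟩, false) then 0
        else if v = f (⟨(i:ℕ), h⟩, true) then 3
        else if G.Adj v (f (⟨(i:ℕ), h⟩, true)) then 3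
        else 2
    else if (∃ e ∈ M, v ∈ e) then 2 else c v
    with hhiDef
  have hlo_dim : ∀ (j : Fin M.card) (v : V),
      lo v ⟨(j : ℕ), Nat.lt_succ_of_lt j.isLt⟩ =
      (if G.Adj (f (j, false)) (f (j, true)) then
        if v = f (j, false) then 1
        else if v = f (j, true) then 2
        else if (∃ e ∈ M, v ∈ e) then 0
        else if G.Adj v (f (j, false)) then 0
        else if G.Adj v (f (j, true)) then 3.5
        else 4.5
      else
        if v = f (j, false) then 0
        else if v = f (j, true) then 3
        else if G.Adj v (f (j, false)) then 0
        else 1) := by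
    intro j v
    simp only [hloDef]
    rw [dif_pos (show ((⟨(j:ℕ), Nat.lt_succ_of_lt j.isLt⟩ : Fin (M.card+1)) : ℕ) < M.card
      from j.isLt)]
  have hhi_dim : ∀ (j : Fin M.card) (v : V),
      hi v ⟨(j : ℕ), Nat.lt_succ_of_lt j.isLt⟩ =
      (if G.Adj (f (j, false)) (f (j, true)) then
        if v = f (j, false) then 3
        else if v = f (j, true) then 4
        else if (∃ e ∈ M, v ∈ e) then 5
        else if G.Adj v (f (j, true)) then 5
        else if G.Adj v (f (j, false)) then 1.5
        else 5
      else
        if v = f (j, false) then 0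
        else if v = f (j, true) then 3
        else if G.Adj v (f (j, true)) then 3
        else 2) := by
    intro j v
    simp only [hhiDef]
    rw [dif_pos (show ((⟨(j:ℕ), Nat.lt_succ_of_lt j.isLt⟩ : Fin (M.card+1)) : ℕ) < M.card
      from j.isLt)]
  have hlo_last : ∀ v : V, lo v (Fin.last M.card) =
      if (∃ e ∈ M, v ∈ e) then 1 else c v := by
    intro v
    simp only [hloDef]
    rw [dif_neg (show ¬ ((Fin.last M.card : Fin (M.card+1)) : ℕ) < M.card from by
      simp [Fin.val_last])]
  have hhi_last : ∀ v : V, hi v (Fin.last M.card) =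
      if (∃ e ∈ M, v ∈ e) then 2 else c v := by
    intro v
    simp only [hhiDef]
    rw [dif_neg (show ¬ ((Fin.last M.card : Fin (M.card+1)) : ℕ) < M.card from by
      simp [Fin.val_last])]
  have hab : ∀ (v : V) (i : Fin (M.card + 1)), lo v i ≤ hi v i := by
    intro v i
    by_cases hdim : (i : ℕ) < M.card
    · have hieq : i = ⟨((⟨(i:ℕ), hdim⟩ : Fin M.card) : ℕ),
          Nat.lt_succ_of_lt (⟨(i:ℕ), hdim⟩ : Fin M.card).isLt⟩ := Fin.ext rfl
      rw [hieq, hlo_dim, hhi_dim]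
      split_ifs <;> norm_num
    · have hieq : i = Fin.last M.card := Fin.ext (by
        have := i.isLt
        simp only [Fin.val_last]
        omega)
      rw [hieq, hlo_last, hhi_last]
      split_ifs
      · norm_num
      · exact le_rfl
  -- edges meet in every dimension
  have meet : ∀ u v : V, u ≠ v → G.Adj u v → ∀ i : Fin (M.card + 1), lo u i ≤ hi v i := by
    intro u v hne hadj i
    by_cases hdim : (i : ℕ) < M.card
    · have hieq : i = ⟨((⟨(i:ℕ), hdim⟩ : Fin M.card) : ℕ),
          Nat.lt_succ_of_lt (⟨(i:ℕ), hdim⟩ : Fin M.card).isLt⟩ := Fin.ext rfl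
      rw [hieq, hlo_dim, hhi_dim]
      set FP := f (⟨(i:ℕ), hdim⟩, false) with hFP
      set FQ := f (⟨(i:ℕ), hdim⟩, true) with hFQ
      by_cases hA : G.Adj FP FQ
      · rw [if_pos hA, if_pos hA]
        by_cases hup : u = FP
        · rw [if_pos hup]
          split_ifs <;> norm_num
        · rw [if_neg hup]
          by_cases huq : u = FQ
          · rw [if_pos huq]
            by_cases hvp : v = FP
            · rw [if_pos hvp]; norm_num
            · rw [if_neg hvp]
              by_cases hvq : v = FQ
              · rw [if_pos hvq]; norm_num
              · rw [if_neg hvq]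
                by_cases hcv : (∃ e ∈ M, v ∈ e)
                · rw [if_pos hcv]; norm_num
                · rw [if_neg hcv, if_pos (show G.Adj v FQ from by rw [← huq]; exact hadj.symm)]
                  norm_num
          · rw [if_neg huq]
            by_cases hcu : (∃ e ∈ M, u ∈ e)
            · rw [if_pos hcu]
              split_ifs <;> norm_num
            · rw [if_neg hcu]
              by_cases hvp : v = FP
              · rw [if_pos (show G.Adj u FP from by rw [← hvp]; exact hadj), if_pos hvp]
                norm_num
              · rw [if_neg hvp]
                by_cases hvq : v = FQ
                · rw [if_pos hvq]
                  by_cases hup2 : G.Adj u FP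
                  · rw [if_pos hup2]; norm_num
                  · rw [if_neg hup2, if_pos (show G.Adj u FQ from by rw [← hvq]; exact hadj)]
                    norm_num
                · rw [if_neg hvq]
                  by_cases hcv : (∃ e ∈ M, v ∈ e)
                  · rw [if_pos hcv]
                    split_ifs <;> norm_num
                  · exact absurd hadj (hindep u v hcu hcv hne)
      · rw [if_neg hA, if_neg hA]
        by_cases hup : u = FP
        · rw [if_pos hup]
          split_ifs <;> norm_num
        · rw [if_neg hup]
          by_cases huq : u = FQ
          · rw [if_pos huq]
            have hvp : v ≠ FP := fun hc => hA (by rw [← hc, ← huq]; exact hadj.symm)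
            rw [if_neg hvp]
            by_cases hvq : v = FQ
            · rw [if_pos hvq]
            · rw [if_neg hvq, if_pos (show G.Adj v FQ from by rw [← huq]; exact hadj.symm)]
          · rw [if_neg huq]
            by_cases hvp : v = FP
            · rw [if_pos hvp, if_pos (show G.Adj u FP from by rw [← hvp]; exact hadj)]
            · rw [if_neg hvp]
              split_ifs <;> norm_num
    · have hieq : i = Fin.last M.card := Fin.ext (by
        have := i.isLt
        simp only [Fin.val_last]
        omega)
      rw [hieq, hlo_last, hhi_last]
      by_cases hcu : (∃ e ∈ M, u ∈ e)
      · rw [if_pos hcu]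
        by_cases hcv : (∃ e ∈ M, v ∈ e)
        · rw [if_pos hcv]; norm_num
        · rw [if_neg hcv]; exact (hcb v).1
      · by_cases hcv : (∃ e ∈ M, v ∈ e)
        · rw [if_neg hcu, if_pos hcv]; exact (hcb u).2
        · exact absurd hadj (hindep u v hcu hcv hne)
  -- separation at a non-adjacent pair of a type-N dimension
  have sepN : ∀ (j : Fin M.card) (u v : V), u ≠ f (j, false) → u ≠ f (j, true) →
      ¬ G.Adj (f (j, false)) (f (j, true)) → ¬ G.Adj u v →
      (v = f (j, false) ∨ v = f (j, true)) →
      ∃ i : Fin (M.card + 1), ¬ (lo u i ≤ hi v i ∧ lo v i ≤ hi u i) := by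
    intro j u v hup huq hAj hnadj hv
    refine ⟨⟨(j:ℕ), Nat.lt_succ_of_lt j.isLt⟩, ?_⟩
    rw [hlo_dim j u, hhi_dim j v, hlo_dim j v, hhi_dim j u]
    rw [if_neg hAj, if_neg hAj, if_neg hAj, if_neg hAj]
    rcases hv with hv | hv
    · rw [if_pos hv, if_pos hv, if_neg hup, if_neg huq,
          if_neg (show ¬ G.Adj u (f (j, false)) from fun hc => hnadj (by rw [hv]; exact hc))]
      rintro ⟨h1, -⟩
      norm_num at h1
    · have hvFP : v ≠ f (j, false) := by
        rw [hv]
        intro hc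
        exact Bool.noConfusion (hIJ j true j false hc).2
      rw [if_neg hvFP, if_neg hvFP, if_pos hv, if_pos hv, if_neg hup, if_neg hup,
          if_neg huq, if_neg huq,
          if_neg (show ¬ G.Adj u (f (j, true)) from fun hc => hnadj (by rw [hv]; exact hc))]
      rintro ⟨-, h2⟩
      norm_num at h2
  -- separation when u is covered
  have sep1 : ∀ u v : V, u ≠ v → ¬ G.Adj u v → (∃ x, f x = u) →
      ∃ i : Fin (M.card + 1), ¬ (lo u i ≤ hi v i ∧ lo v i ≤ hi u i) := by
    rintro u v hne hnadj ⟨⟨i0, s⟩, hfx⟩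
    by_cases hA : G.Adj (f (i0, false)) (f (i0, true))
    · by_cases hcv : ∃ y, f y = v
      · obtain ⟨⟨j, s'⟩, hfy⟩ := hcv
        by_cases hji : j = i0
        · subst hji
          exfalso
          apply hnadj
          have hss : s ≠ s' := by
            intro hc
            subst hc
            exact hne (by rw [← hfx, ← hfy])
          cases s
          · cases s'
            · exact absurd rfl hss
            · rw [← hfx, ← hfy]; exact hA
          · cases s'
            · rw [← hfx, ← hfy]; exact hA.symm
            · exact absurd rfl hss
        · have hAj : ¬ G.Adj (f (j, false)) (f (j, true)) := by
            intro hAj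
            apply hnadj
            rw [← hfx, ← hfy]
            exact hclique i0 j s s' (fun hc => hji hc.symm) hA hAj
          have hup : u ≠ f (j, false) := by
            intro hc
            rw [← hfx] at hc
            exact hji ((hIJ i0 s j false hc).1).symm
          have huq : u ≠ f (j, true) := by
            intro hc
            rw [← hfx] at hc
            exact hji ((hIJ i0 s j true hc).1).symm
          refine sepN j u v hup huq hAj hnadj ?_
          cases s'
          · exact Or.inl hfy.symm
          · exact Or.inr hfy.symm
      · have hcv' : ¬ (∃ e ∈ M, v ∈ e) := fun hc => hcv ((hfcov v).mpr hc)
        refine ⟨⟨(i0:ℕ), Nat.lt_succ_of_lt i0.isLt⟩, ?_⟩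
        rw [hlo_dim i0 u, hhi_dim i0 v, hlo_dim i0 v, hhi_dim i0 u]
        rw [if_pos hA, if_pos hA, if_pos hA, if_pos hA]
        have hvu : v ≠ u := hne.symm
        cases s
        · rw [if_pos hfx.symm, if_pos hfx.symm]
          have hvp : v ≠ f (i0, false) := fun hc => hvu (hc.trans hfx)
          have hvq : v ≠ f (i0, true) := fun hc => hnadj (by rw [← hfx, hc]; exact hA)
          have hvP : ¬ G.Adj v (f (i0, false)) := fun hc => hnadj (by rw [← hfx]; exact hc.symm)
          rw [if_neg hvp, if_neg hvp, if_neg hvq, if_neg hvq, if_neg hcv', if_neg hcv']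
          rw [if_neg hvP, if_neg hvP]
          by_cases hvQ : G.Adj v (f (i0, true))
          · rw [if_pos hvQ, if_pos hvQ]
            rintro ⟨-, h2⟩
            norm_num at h2
          · rw [if_neg hvQ, if_neg hvQ]
            rintro ⟨-, h2⟩
            norm_num at h2
        · have hupne : u ≠ f (i0, false) := by
            rw [← hfx]
            intro hc
            exact Bool.noConfusion (hIJ i0 true i0 false hc).2
          rw [if_neg hupne, if_neg hupne, if_pos hfx.symm, if_pos hfx.symm]
          have hvp : v ≠ f (i0, false) := fun hc => hnadj (by rw [← hfx, hc]; exact hA.symm)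
          have hvq : v ≠ f (i0, true) := fun hc => hvu (hc.trans hfx)
          have hvQ : ¬ G.Adj v (f (i0, true)) := fun hc => hnadj (by rw [← hfx]; exact hc.symm)
          rw [if_neg hvp, if_neg hvp, if_neg hvq, if_neg hvq, if_neg hcv', if_neg hcv',
              if_neg hvQ, if_neg hvQ]
          by_cases hvP : G.Adj v (f (i0, false))
          · rw [if_pos hvP, if_pos hvP]
            rintro ⟨h1, -⟩
            norm_num at h1
          · rw [if_neg hvP, if_neg hvP]
            rintro ⟨-, h2⟩
            norm_num at h2
    · by_cases hvp : v = f (i0, false)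
      · refine ⟨⟨(i0:ℕ), Nat.lt_succ_of_lt i0.isLt⟩, ?_⟩
        rw [hlo_dim i0 u, hhi_dim i0 v, hlo_dim i0 v, hhi_dim i0 u]
        rw [if_neg hA, if_neg hA, if_neg hA, if_neg hA]
        have hs : s = true := by
          cases s
          · exact absurd (hvp.trans hfx).symm (fun hc => hne hc)
          · rfl
        subst hs
        have hupne : u ≠ f (i0, false) := by
          rw [← hfx]
          intro hc
          exact Bool.noConfusion (hIJ i0 true i0 false hc).2
        rw [if_neg hupne, if_pos hfx.symm, if_pos hvp]
        rintro ⟨h1, -⟩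
        norm_num at h1
      · by_cases hvq : v = f (i0, true)
        · refine ⟨⟨(i0:ℕ), Nat.lt_succ_of_lt i0.isLt⟩, ?_⟩
          rw [hlo_dim i0 u, hhi_dim i0 v, hlo_dim i0 v, hhi_dim i0 u]
          rw [if_neg hA, if_neg hA, if_neg hA, if_neg hA]
          have hs : s = false := by
            cases s
            · rfl
            · exact absurd (hvq.trans hfx).symm (fun hc => hne hc)
          subst hs
          rw [if_pos hfx.symm, if_pos hfx.symm, if_neg hvp, if_neg hvp, if_pos hvq, if_pos hvq]
          rintro ⟨-, h2⟩
          norm_num at h2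
        · obtain ⟨idx, hviol⟩ := sepN i0 v u hvp hvq hA (fun hc => hnadj hc.symm)
            (by cases s
                · exact Or.inl hfx.symm
                · exact Or.inr hfx.symm)
          exact ⟨idx, fun hcon => hviol ⟨hcon.2, hcon.1⟩⟩
  -- full separation
  have sep : ∀ u v : V, u ≠ v → ¬ G.Adj u v →
      ∃ i : Fin (M.card + 1), ¬ (lo u i ≤ hi v i ∧ lo v i ≤ hi u i) := by
    intro u v hne hnadj
    by_cases hcu : ∃ x, f x = u
    · exact sep1 u v hne hnadj hcu
    · by_cases hcv : ∃ x, f x = v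
      · obtain ⟨i, hviol⟩ := sep1 v u hne.symm (fun h => hnadj h.symm) hcv
        exact ⟨i, fun hcon => hviol ⟨hcon.2, hcon.1⟩⟩
      · refine ⟨Fin.last M.card, ?_⟩
        rw [hlo_last u, hhi_last v, hlo_last v, hhi_last u]
        have hcu' : ¬ (∃ e ∈ M, u ∈ e) := fun hc => hcu ((hfcov u).mpr hc)
        have hcv' : ¬ (∃ e ∈ M, v ∈ e) := fun hc => hcv ((hfcov v).mpr hc)
        rw [if_neg hcu', if_neg hcu', if_neg hcv', if_neg hcv']
        rintro ⟨h1, h2⟩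
        exact hne (hcinj u v (le_antisymm h1 h2))
  refine ⟨lo, hi, hab, fun u v hne => ?_⟩
  constructor
  · intro hadj i
    rw [icc_nonempty_iff (hab u i) (hab v i)]
    exact ⟨meet u v hne hadj i, meet v u hne.symm hadj.symm i⟩
  · intro h
    by_contra hnadj
    obtain ⟨i, hviol⟩ := sep u v hne hnadj
    have hi' := h i
    rw [icc_nonempty_iff (hab u i) (hab v i)] at hi'
    exact hviol hi'

/- ### Main theorem -/

/-- `box(G) ≤ min {ν(G) + 1, ν(Ḡ)}`; moreover when the complement `Ḡ` has no edges
(i.e. `G` is complete), `ν(Ḡ) = 0` and indeed `box(G) = 0`. -/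
theorem boxicity_le_min_nu {V : Type*} [Fintype V] [DecidableEq V] [Nonempty V]
    (G : SimpleGraph V) :
    boxicity G ≤ min (minMaximalMatching G + 1) (minMaximalMatching Gᶜ) ∧
    (Gᶜ.edgeSet = ∅ → minMaximalMatching Gᶜ = 0 ∧ boxicity G = 0) := by
  classical
  constructor
  · refine le_min ?_ ?_
    · obtain ⟨M, hM, hcard⟩ := exists_min_maximalMatchingSet G
      exact Nat.sInf_le (hcard ▸ hasBoxRep_of_matching G M hM)
    · obtain ⟨M, hM, hcard⟩ := exists_min_maximalMatchingSet Gᶜ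
      exact Nat.sInf_le (hcard ▸ hasBoxRep_of_compl_matching G M hM)
  · intro hempty
    have h0 : IsMaximalMatchingSet Gᶜ (∅ : Finset (Sym2 V)) := by
      refine ⟨⟨by simp, by simp⟩, ?_⟩
      intro e he
      rw [hempty] at he
      exact absurd he (Set.notMem_empty e)
    have hb : HasBoxRep G 0 := by
      refine ⟨fun _ i => i.elim0, fun _ i => i.elim0, fun v i => i.elim0, ?_⟩
      intro u v hne
      constructor
      · intro _ i; exact i.elim0
      · intro _
        by_contra hna
        have hm : s(u,v) ∈ Gᶜ.edgeSet := (Gᶜ.mem_edgeSet).mpr ((G.compl_adj u v).mpr ⟨hne, hna⟩)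
        rw [hempty] at hm
        exact Set.notMem_empty _ hm
    constructor
    · have hmem : (0:ℕ) ∈ {k : ℕ | ∃ M : Finset (Sym2 V),
          IsMaximalMatchingSet Gᶜ M ∧ M.card = k} := ⟨∅, h0, rfl⟩
      exact Nat.le_zero.mp (Nat.sInf_le hmem)
    · exact Nat.le_zero.mp (Nat.sInf_le hb)
end

section
/- Let G be a finite simple bipartite graph with bipartition (V₁, V₂) (every edge of G has one endpoint in V₁ and the other in V₂), where |V₁| = n₁, |V₂| = n₂ and 3 ≤ n₁ ≤ n₂. Then box(G) ≤ ⌈n₁/2⌉; in particular box(G) ≤ min{⌈n₁/2⌉, ⌈n₂/2⌉}. -/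
set_option maxHeartbeats 1600000 in
theorem boxrep_aux {V : Type*} [Fintype V] [DecidableEq V] (G : SimpleGraph V)
    (V₁ V₂ : Finset V) (hdisj : Disjoint V₁ V₂) (hunion : V₁ ∪ V₂ = Finset.univ)
    (hbip : ∀ ⦃u v : V⦄, G.Adj u v → (u ∈ V₁ ∧ v ∈ V₂) ∨ (u ∈ V₂ ∧ v ∈ V₁))
    (n₁ n₂ : ℕ) (hn₁ : n₁ = V₁.card) (hn₂ : n₂ = V₂.card)
    (h3 : 3 ≤ n₁) (h12 : n₁ ≤ n₂) :
    HasBoxRep G ((n₁ + 1) / 2) := by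
  classical
  set k : ℕ := (n₁ + 1) / 2 with hk
  have hk2 : 2 ≤ k := by omega
  have hkn : n₁ ≤ 2 * k := by omega
  have hkn' : 2 * k ≤ n₁ + 1 := by omega
  have hcn : 2 * k - 2 < n₁ := by omega
  have e₁ : {x // x ∈ V₁} ≃ Fin n₁ :=
    Fintype.equivFinOfCardEq (by rw [Fintype.card_coe]; omega)
  have e₂ : {x // x ∈ V₂} ≃ Fin n₂ :=
    Fintype.equivFinOfCardEq (by rw [Fintype.card_coe]; omega)
  have mem₂ : ∀ {v : V}, v ∉ V₁ → v ∈ V₂ := by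
    intro v h
    have hv := Finset.mem_univ v
    rw [← hunion, Finset.mem_union] at hv
    tauto
  -- index of a V₁ vertex
  set J : V → ℕ := fun v => if h : v ∈ V₁ then (e₁ ⟨v, h⟩).val else n₁ with hJ
  set N : ℕ → V := fun m => if h : m < n₁ then (e₁.symm ⟨m, h⟩).val else (e₁.symm ⟨0, by omega⟩).val with hN
  have hJlt : ∀ {v : V}, v ∈ V₁ → J v < n₁ := by
    intro v h; rw [hJ]; simp only [dif_pos h]; exact (e₁ ⟨v, h⟩).isLt
  have hNmem : ∀ m, N m ∈ V₁ := by
    intro m; rw [hN]; dsimp only; split <;> exact Subtype.coe_prop _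
  have hNJ : ∀ {v : V} (h : v ∈ V₁), N (J v) = v := by
    intro v h
    have h1 : J v = (e₁ ⟨v, h⟩).val := by rw [hJ]; simp only [dif_pos h]
    have h2 : J v < n₁ := hJlt h
    rw [hN]; dsimp only; rw [dif_pos h2]
    have : (⟨J v, h2⟩ : Fin n₁) = e₁ ⟨v, h⟩ := by ext; exact h1
    rw [this, Equiv.symm_apply_apply]
  have hJN : ∀ {m : ℕ}, m < n₁ → J (N m) = m := by
    intro m hm
    have h1 : N m = (e₁.symm ⟨m, hm⟩).val := by rw [hN]; dsimp only; rw [dif_pos hm]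
    have hmem : N m ∈ V₁ := hNmem m
    rw [hJ]; simp only [dif_pos hmem]
    have : (⟨N m, hmem⟩ : {x // x ∈ V₁}) = e₁.symm ⟨m, hm⟩ := Subtype.ext h1
    rw [this, Equiv.apply_symm_apply]
  have hJinj : ∀ {u v : V}, u ∈ V₁ → v ∈ V₁ → J u = J v → u = v := by
    intro u v hu hv h
    have := congrArg N h
    rwa [hNJ hu, hNJ hv] at this
  -- second-part index
  set I₂ : V → ℕ := fun v => if h : v ∈ V₂ then (e₂ ⟨v, h⟩).val else 0 with hI₂
  have hI₂lt : ∀ {v : V}, v ∈ V₂ → I₂ v < n₂ := by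
    intro v h; rw [hI₂]; simp only [dif_pos h]; exact (e₂ ⟨v, h⟩).isLt
  have hI₂inj : ∀ {u v : V}, u ∈ V₂ → v ∈ V₂ → I₂ u = I₂ v → u = v := by
    intro u v hu hv h
    rw [hI₂] at h; simp only [dif_pos hu, dif_pos hv] at h
    have := e₂.injective (Fin.ext h)
    exact congrArg Subtype.val this
  set c : V := N (2 * k - 2) with hc
  set Dadj : V → Prop := fun v => 2 * k - 1 < n₁ ∧ G.Adj (N (2 * k - 1)) v with hD
  set blk : V → ℕ := fun v =>
    if G.Adj c v then (if Dadj v then 1 else 0) else (if Dadj v then 2 else 3) with hblk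
  set P : V → ℕ := fun v => (n₂ + 1) * blk v + I₂ v with hP
  -- the boxes
  set a : V → Fin k → ℝ := fun v i =>
    if (i : ℕ) + 1 < k then
      (if v ∈ V₁ then
        (if J v = 2 * (i : ℕ) then 0
         else if J v = 2 * (i : ℕ) + 1 then 8
         else if (i : ℕ) = 0 ∧ J v = 2 * k - 1 then 5
         else 2)
       else (if G.Adj (N (2 * (i : ℕ))) v then 0 else 2))
    else
      (if v ∈ V₁ then
        (if J v = 2 * k - 2 then 0
         else if J v = 2 * k - 1 then (n₂ : ℝ) + 1
         else -1)
       else (P v : ℝ)) with ha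
  set b : V → Fin k → ℝ := fun v i =>
    if (i : ℕ) + 1 < k then
      (if v ∈ V₁ then
        (if J v = 2 * (i : ℕ) then 1
         else if J v = 2 * (i : ℕ) + 1 then 9
         else if (i : ℕ) = 0 ∧ J v = 2 * k - 2 then 4
         else 7)
       else (if G.Adj (N (2 * (i : ℕ) + 1)) v then 9 else 7))
    else
      (if v ∈ V₁ then
        (if J v = 2 * k - 2 then 2 * ((n₂ : ℝ) + 1) - 1
         else if J v = 2 * k - 1 then 3 * ((n₂ : ℝ) + 1) - 1
         else 4 * ((n₂ : ℝ) + 1))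
       else (P v : ℝ)) with hb
  -- value lemmas, pair dimensions, V₁ vertices
  have pa1 : ∀ {v : V} {i : Fin k}, v ∈ V₁ → (i : ℕ) + 1 < k → J v = 2 * (i : ℕ) →
      a v i = 0 ∧ b v i = 1 := by
    intro v i hv hik hj
    rw [ha, hb]
    simp only [if_pos hik, if_pos hv, if_pos hj]
    norm_num
  have pa2 : ∀ {v : V} {i : Fin k}, v ∈ V₁ → (i : ℕ) + 1 < k → J v = 2 * (i : ℕ) + 1 →
      a v i = 8 ∧ b v i = 9 := by
    intro v i hv hik hj
    have hj' : J v ≠ 2 * (i : ℕ) := by omega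
    rw [ha, hb]
    simp only [if_pos hik, if_pos hv, if_neg hj', if_pos hj]
    norm_num
  have pa3 : ∀ {v : V} {i : Fin k}, v ∈ V₁ → (i : ℕ) + 1 < k →
      J v ≠ 2 * (i : ℕ) → J v ≠ 2 * (i : ℕ) + 1 →
      2 ≤ a v i ∧ a v i ≤ b v i ∧ b v i ≤ 7 := by
    intro v i hv hik hj1 hj2
    rw [ha, hb]
    simp only [if_pos hik, if_pos hv, if_neg hj1, if_neg hj2]
    split_ifs <;> norm_num <;> omega
  have pa4 : ∀ {v : V} {i : Fin k}, v ∈ V₁ → (i : ℕ) + 1 < k → (i : ℕ) = 0 →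
      J v = 2 * k - 2 → a v i = 2 ∧ b v i = 4 := by
    intro v i hv hik hi0 hj
    have hj1 : J v ≠ 2 * (i : ℕ) := by omega
    have hj2 : J v ≠ 2 * (i : ℕ) + 1 := by omega
    have hj3 : ¬((i : ℕ) = 0 ∧ J v = 2 * k - 1) := by omega
    rw [ha, hb]
    simp only [if_pos hik, if_pos hv, if_neg hj1, if_neg hj2, if_neg hj3,
      if_pos (And.intro hi0 hj)]
    norm_num
  have pa5 : ∀ {v : V} {i : Fin k}, v ∈ V₁ → (i : ℕ) + 1 < k → (i : ℕ) = 0 →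
      J v = 2 * k - 1 → a v i = 5 ∧ b v i = 7 := by
    intro v i hv hik hi0 hj
    have hj1 : J v ≠ 2 * (i : ℕ) := by omega
    have hj2 : J v ≠ 2 * (i : ℕ) + 1 := by omega
    have hj3 : ¬((i : ℕ) = 0 ∧ J v = 2 * k - 2) := by omega
    rw [ha, hb]
    simp only [if_pos hik, if_pos hv, if_neg hj1, if_neg hj2, if_neg hj3,
      if_pos (And.intro hi0 hj)]
    norm_num
  -- value lemmas, pair dimensions, V₂ vertices
  have pb1 : ∀ {v : V} {i : Fin k}, v ∉ V₁ → (i : ℕ) + 1 < k →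
      a v i = (if G.Adj (N (2 * (i : ℕ))) v then 0 else 2) ∧
      b v i = (if G.Adj (N (2 * (i : ℕ) + 1)) v then 9 else 7) := by
    intro v i hv hik
    rw [ha, hb]
    simp only [if_pos hik, if_neg hv]
    norm_num
  have pb2 : ∀ {v : V} {i : Fin k}, v ∉ V₁ → (i : ℕ) + 1 < k →
      0 ≤ a v i ∧ a v i ≤ 2 ∧ 7 ≤ b v i ∧ b v i ≤ 9 := by
    intro v i hv hik
    obtain ⟨h1, h2⟩ := pb1 hv hik
    rw [h1, h2]
    split_ifs <;> norm_num
  -- value lemmas, special dimension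
  have sa1 : ∀ {v : V} {i : Fin k}, v ∈ V₁ → ¬((i : ℕ) + 1 < k) → J v = 2 * k - 2 →
      a v i = 0 ∧ b v i = 2 * ((n₂ : ℝ) + 1) - 1 := by
    intro v i hv hik hj
    rw [ha, hb]
    simp only [if_neg hik, if_pos hv, if_pos hj]
    norm_num
  have sa2 : ∀ {v : V} {i : Fin k}, v ∈ V₁ → ¬((i : ℕ) + 1 < k) → J v = 2 * k - 1 →
      a v i = (n₂ : ℝ) + 1 ∧ b v i = 3 * ((n₂ : ℝ) + 1) - 1 := by
    intro v i hv hik hj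
    have hj' : J v ≠ 2 * k - 2 := by omega
    rw [ha, hb]
    simp only [if_neg hik, if_pos hv, if_neg hj', if_pos hj]
    norm_num
  have sa3 : ∀ {v : V} {i : Fin k}, v ∈ V₁ → ¬((i : ℕ) + 1 < k) →
      J v ≠ 2 * k - 2 → J v ≠ 2 * k - 1 →
      a v i = -1 ∧ b v i = 4 * ((n₂ : ℝ) + 1) := by
    intro v i hv hik hj1 hj2
    rw [ha, hb]
    simp only [if_neg hik, if_pos hv, if_neg hj1, if_neg hj2]
    norm_num
  have sb : ∀ {v : V} {i : Fin k}, v ∉ V₁ → ¬((i : ℕ) + 1 < k) →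
      a v i = (P v : ℝ) ∧ b v i = (P v : ℝ) := by
    intro v i hv hik
    rw [ha, hb]
    simp only [if_neg hik, if_neg hv]
    norm_num
  -- blk facts
  have hblk4 : ∀ v, blk v = 0 ∨ blk v = 1 ∨ blk v = 2 ∨ blk v = 3 := by
    intro v; rw [hblk]; dsimp only; split_ifs <;> simp
  have hPc : ∀ {v : V}, v ∈ V₂ → G.Adj c v → P v ≤ 2 * n₂ := by
    intro v hv hadj
    have hI := hI₂lt hv
    rw [hP]; dsimp only
    rw [hblk]; dsimp only
    rw [if_pos hadj]
    split_ifs <;> omega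
  have hPnc : ∀ {v : V}, v ∈ V₂ → ¬ G.Adj c v → 2 * n₂ + 2 ≤ P v := by
    intro v hv hadj
    rw [hP]; dsimp only
    rw [hblk]; dsimp only
    rw [if_neg hadj]
    split_ifs <;> omega
  have hPd : ∀ {v : V}, v ∈ V₂ → Dadj v → n₂ + 1 ≤ P v ∧ P v ≤ 3 * n₂ + 1 := by
    intro v hv hd
    have hI := hI₂lt hv
    rw [hP]; dsimp only
    rw [hblk]; dsimp only
    rw [if_pos hd, if_pos hd]
    split_ifs <;> omega
  have hPnd : ∀ {v : V}, v ∈ V₂ → ¬ Dadj v → P v < n₂ + 1 ∨ 3 * (n₂ + 1) ≤ P v := by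
    intro v hv hd
    have hI := hI₂lt hv
    rw [hP]; dsimp only
    rw [hblk]; dsimp only
    rw [if_neg hd, if_neg hd]
    split_ifs <;> omega
  have hPtop : ∀ {v : V}, v ∈ V₂ → P v ≤ 4 * n₂ + 2 := by
    intro v hv
    have hI := hI₂lt hv
    have h4 := hblk4 v
    rw [hP]; dsimp only
    rcases h4 with h | h | h | h <;> rw [h] <;> omega
  have hPinj : ∀ {u v : V}, u ∈ V₂ → v ∈ V₂ → P u = P v → u = v := by
    intro u v hu hv h
    have hIu := hI₂lt hu
    have hIv := hI₂lt hv
    have h4u := hblk4 u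
    have h4v := hblk4 v
    rw [hP] at h; dsimp only at h
    have hb : blk u = blk v ∧ I₂ u = I₂ v := by
      rcases h4u with h1 | h1 | h1 | h1 <;> rcases h4v with h2 | h2 | h2 | h2 <;>
        rw [h1, h2] at h <;> omega
    exact hI₂inj hu hv hb.2
  -- intersection criterion
  have hiff : ∀ p q r s : ℝ, (Set.Icc p q ∩ Set.Icc r s).Nonempty ↔
      (p ≤ q ∧ r ≤ s ∧ p ≤ s ∧ r ≤ q) := by
    intro p q r s
    rw [Set.Icc_inter_Icc, Set.nonempty_Icc]
    simp only [max_le_iff, le_min_iff]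
    tauto
  have hn₂R : (0:ℝ) ≤ (n₂ : ℝ) := Nat.cast_nonneg _
  have hPcast : ∀ {v : V} {m : ℕ}, P v ≤ m → (P v : ℝ) ≤ (m : ℝ) := by
    intro v m h; exact_mod_cast h
  have hPcast' : ∀ {v : V} {m : ℕ}, m ≤ P v → (m : ℝ) ≤ (P v : ℝ) := by
    intro v m h; exact_mod_cast h
  have hPnn : ∀ v : V, (0:ℝ) ≤ (P v : ℝ) := fun v => Nat.cast_nonneg _
  -- forward: edges intersect everywhere
  have fwd : ∀ u v : V, u ∈ V₁ → G.Adj u v → ∀ i : Fin k,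
      (Set.Icc (a u i) (b u i) ∩ Set.Icc (a v i) (b v i)).Nonempty := by
    intro u v hu hadj i
    have hv : v ∈ V₂ := by
      rcases hbip hadj with ⟨_, h⟩ | ⟨h, _⟩
      · exact h
      · exact absurd hu (Finset.disjoint_right.mp hdisj h)
    have hv' : v ∉ V₁ := Finset.disjoint_right.mp hdisj hv
    rw [hiff]
    by_cases hik : (i : ℕ) + 1 < k
    · obtain ⟨hva, hvb⟩ := pb1 hv' hik
      obtain ⟨hv0, hv2, hv7, hv9⟩ := pb2 hv' hik
      by_cases h1 : J u = 2 * (i : ℕ)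
      · obtain ⟨hua, hub⟩ := pa1 hu hik h1
        have hNu : N (2 * (i : ℕ)) = u := by rw [← h1, hNJ hu]
        have : a v i = 0 := by rw [hva, if_pos (hNu ▸ hadj)]
        refine ⟨?_, ?_, ?_, ?_⟩ <;> simp only [hua, hub, this] <;> linarith
      · by_cases h2 : J u = 2 * (i : ℕ) + 1
        · obtain ⟨hua, hub⟩ := pa2 hu hik h2
          have hNu : N (2 * (i : ℕ) + 1) = u := by rw [← h2, hNJ hu]
          have : b v i = 9 := by rw [hvb, if_pos (hNu ▸ hadj)]
          refine ⟨?_, ?_, ?_, ?_⟩ <;> simp only [hua, hub, this] <;> linarith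
        · obtain ⟨hu2, huab, hu7⟩ := pa3 hu hik h1 h2
          refine ⟨huab, by linarith, by linarith, by linarith⟩
    · obtain ⟨hva, hvb⟩ := sb hv' hik
      by_cases h1 : J u = 2 * k - 2
      · obtain ⟨hua, hub⟩ := sa1 hu hik h1
        have hcu : c = u := by rw [hc, ← h1, hNJ hu]
        have hPb := hPcast (hPc hv (hcu ▸ hadj))
        push_cast at hPb
        refine ⟨?_, ?_, ?_, ?_⟩ <;> simp only [hua, hub, hva, hvb] <;> linarith [hPnn v]
      · by_cases h2 : J u = 2 * k - 1
        · obtain ⟨hua, hub⟩ := sa2 hu hik h2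
          have hdu : N (2 * k - 1) = u := by rw [← h2, hNJ hu]
          have hdn : 2 * k - 1 < n₁ := h2 ▸ hJlt hu
          have hDv : Dadj v := by rw [hD]; exact ⟨hdn, hdu ▸ hadj⟩
          obtain ⟨hp1, hp2⟩ := hPd hv hDv
          have hp1' := hPcast' hp1
          have hp2' := hPcast hp2
          push_cast at hp1' hp2'
          refine ⟨?_, ?_, ?_, ?_⟩ <;> simp only [hua, hub, hva, hvb] <;> linarith
        · obtain ⟨hua, hub⟩ := sa3 hu hik h1 h2
          have hp := hPcast (hPtop hv)
          push_cast at hp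
          refine ⟨?_, ?_, ?_, ?_⟩ <;> simp only [hua, hub, hva, hvb] <;>
            linarith [hPnn v]
  have hdis : ∀ {p q r s : ℝ}, ¬(p ≤ s ∧ r ≤ q) →
      ¬(Set.Icc p q ∩ Set.Icc r s).Nonempty := by
    intro p q r s h hne
    rw [hiff] at hne
    exact h ⟨hne.2.2.1, hne.2.2.2⟩
  -- separation for a V₁ vertex with small index vs another V₁ vertex
  have sepA : ∀ u v : V, u ∈ V₁ → v ∈ V₁ → u ≠ v → J u < 2 * k - 2 →
      ∃ i : Fin k, ¬(Set.Icc (a u i) (b u i) ∩ Set.Icc (a v i) (b v i)).Nonempty := by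
    intro u v hu hv hne hju
    have hik' : J u / 2 < k := by omega
    refine ⟨⟨J u / 2, hik'⟩, ?_⟩
    set i : Fin k := ⟨J u / 2, hik'⟩ with hi
    have hival : (i : ℕ) = J u / 2 := rfl
    have hik : (i : ℕ) + 1 < k := by omega
    have hjv : J v ≠ J u := fun h => hne (hJinj hu hv h.symm)
    rcases (by omega : J u = 2 * (i : ℕ) ∨ J u = 2 * (i : ℕ) + 1) with h1 | h1
    · obtain ⟨hua, hub⟩ := pa1 hu hik h1
      by_cases h2 : J v = 2 * (i : ℕ) + 1
      · obtain ⟨hva, hvb⟩ := pa2 hv hik h2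
        exact hdis (by rw [hua, hub, hva, hvb]; push_neg; intro; norm_num)
      · have h3 : J v ≠ 2 * (i : ℕ) := by omega
        obtain ⟨hv2, hvab, hv7⟩ := pa3 hv hik h3 h2
        exact hdis (by rw [hub]; push_neg; intro; linarith)
    · obtain ⟨hua, hub⟩ := pa2 hu hik h1
      by_cases h2 : J v = 2 * (i : ℕ)
      · obtain ⟨hva, hvb⟩ := pa1 hv hik h2
        exact hdis (by rw [hua, hub, hva, hvb]; intro h; exact absurd h.1 (by norm_num))
      · have h3 : J v ≠ 2 * (i : ℕ) + 1 := by omega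
        obtain ⟨hv2, hvab, hv7⟩ := pa3 hv hik h2 h3
        exact hdis (by rw [hua]; push_neg; intro; linarith)
  -- separation for a V₁ vertex vs a non-adjacent V₂ vertex
  have sepAB : ∀ u v : V, u ∈ V₁ → v ∉ V₁ → ¬ G.Adj u v →
      ∃ i : Fin k, ¬(Set.Icc (a u i) (b u i) ∩ Set.Icc (a v i) (b v i)).Nonempty := by
    intro u v hu hv hnadj
    have hv2 : v ∈ V₂ := mem₂ hv
    have hjun : J u < n₁ := hJlt hu
    by_cases hju : J u < 2 * k - 2
    · have hik' : J u / 2 < k := by omega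
      refine ⟨⟨J u / 2, hik'⟩, ?_⟩
      set i : Fin k := ⟨J u / 2, hik'⟩ with hi
      have hival : (i : ℕ) = J u / 2 := rfl
      have hik : (i : ℕ) + 1 < k := by omega
      obtain ⟨hva, hvb⟩ := pb1 hv hik
      obtain ⟨hv0, hv2', hv7, hv9⟩ := pb2 hv hik
      rcases (by omega : J u = 2 * (i : ℕ) ∨ J u = 2 * (i : ℕ) + 1) with h1 | h1
      · obtain ⟨hua, hub⟩ := pa1 hu hik h1
        have hNu : N (2 * (i : ℕ)) = u := by rw [← h1, hNJ hu]
        have hva' : a v i = 2 := by rw [hva, if_neg (hNu ▸ hnadj)]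
        exact hdis (by rw [hub, hva']; push_neg; intro; norm_num)
      · obtain ⟨hua, hub⟩ := pa2 hu hik h1
        have hNu : N (2 * (i : ℕ) + 1) = u := by rw [← h1, hNJ hu]
        have hvb' : b v i = 7 := by rw [hvb, if_neg (hNu ▸ hnadj)]
        exact hdis (by rw [hua, hvb']; intro h; exact absurd h.1 (by norm_num))
    · have hik0 : k - 1 < k := by omega
      refine ⟨⟨k - 1, hik0⟩, ?_⟩
      set i : Fin k := ⟨k - 1, hik0⟩ with hi
      have hik : ¬((i : ℕ) + 1 < k) := by
        have : (i : ℕ) = k - 1 := rfl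
        omega
      obtain ⟨hva, hvb⟩ := sb hv hik
      rcases (by omega : J u = 2 * k - 2 ∨ J u = 2 * k - 1) with h1 | h1
      · obtain ⟨hua, hub⟩ := sa1 hu hik h1
        have hcu : c = u := by rw [hc, ← h1, hNJ hu]
        have hp := hPcast' (hPnc hv2 (hcu ▸ hnadj))
        push_cast at hp
        exact hdis (by rw [hua, hub, hva, hvb]; push_neg; intro; linarith)
      · obtain ⟨hua, hub⟩ := sa2 hu hik h1
        have hdu : N (2 * k - 1) = u := by rw [← h1, hNJ hu]
        have hnD : ¬ Dadj v := by
          rw [hD]; rintro ⟨_, hadj⟩; exact hnadj (hdu ▸ hadj)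
        rcases hPnd hv2 hnD with hp | hp
        · have hp' : (P v : ℝ) < (n₂ : ℝ) + 1 := by exact_mod_cast hp
          exact hdis (by rw [hua, hub, hva, hvb]; push_neg; intro; linarith)
        · have hp' : 3 * ((n₂:ℝ) + 1) ≤ (P v : ℝ) := by exact_mod_cast hp
          exact hdis (by rw [hua, hub, hva, hvb]; push_neg; intro h; linarith)
  -- a ≤ b everywhere
  have hab : ∀ v i, a v i ≤ b v i := by
    intro v i
    by_cases hik : (i : ℕ) + 1 < k
    · by_cases hv : v ∈ V₁
      · by_cases h1 : J v = 2 * (i : ℕ)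
        · obtain ⟨h, h'⟩ := pa1 hv hik h1; rw [h, h']; norm_num
        · by_cases h2 : J v = 2 * (i : ℕ) + 1
          · obtain ⟨h, h'⟩ := pa2 hv hik h2; rw [h, h']; norm_num
          · exact (pa3 hv hik h1 h2).2.1
      · obtain ⟨h0, h2, h7, h9⟩ := pb2 hv hik; linarith
    · by_cases hv : v ∈ V₁
      · by_cases h1 : J v = 2 * k - 2
        · obtain ⟨h, h'⟩ := sa1 hv hik h1; rw [h, h']; linarith
        · by_cases h2 : J v = 2 * k - 1
          · obtain ⟨h, h'⟩ := sa2 hv hik h2; rw [h, h']; linarith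
          · obtain ⟨h, h'⟩ := sa3 hv hik h1 h2; rw [h, h']; linarith
      · obtain ⟨h, h'⟩ := sb hv hik; rw [h, h']
  refine ⟨a, b, hab, ?_⟩
  intro u v hne
  constructor
  · intro hadj i
    rcases hbip hadj with ⟨hu, _⟩ | ⟨_, hv⟩
    · exact fwd u v hu hadj i
    · have := fwd v u hv hadj.symm i
      rwa [Set.inter_comm] at this
  · intro hall
    by_contra hnadj
    by_cases hu : u ∈ V₁ <;> by_cases hv : v ∈ V₁
    · -- both in V₁
      by_cases hju : J u < 2 * k - 2
      · obtain ⟨i, hi⟩ := sepA u v hu hv hne hju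
        exact hi (hall i)
      · by_cases hjv : J v < 2 * k - 2
        · obtain ⟨i, hi⟩ := sepA v u hv hu (Ne.symm hne) hjv
          apply hi
          rw [Set.inter_comm]
          exact hall i
        · have hjun : J u < n₁ := hJlt hu
          have hjvn : J v < n₁ := hJlt hv
          have hjne : J u ≠ J v := fun h => hne (hJinj hu hv h)
          have hik0 : (0 : ℕ) < k := by omega
          set i : Fin k := ⟨0, hik0⟩ with hi
          have hi0 : (i : ℕ) = 0 := rfl
          have hik : (i : ℕ) + 1 < k := by omega
          have hcd : (J u = 2 * k - 2 ∧ J v = 2 * k - 1) ∨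
              (J u = 2 * k - 1 ∧ J v = 2 * k - 2) := by omega
          have h4 := hall i
          rw [hiff] at h4
          rcases hcd with ⟨h1, h2⟩ | ⟨h1, h2⟩
          · obtain ⟨hua, hub⟩ := pa4 hu hik hi0 h1
            obtain ⟨hva, hvb⟩ := pa5 hv hik hi0 h2
            have h5 : a v i ≤ b u i := h4.2.2.2
            rw [hva, hub] at h5
            norm_num at h5
          · obtain ⟨hua, hub⟩ := pa5 hu hik hi0 h1
            obtain ⟨hva, hvb⟩ := pa4 hv hik hi0 h2
            have h5 : a u i ≤ b v i := h4.2.2.1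
            rw [hua, hvb] at h5
            norm_num at h5
    · obtain ⟨i, hi⟩ := sepAB u v hu hv hnadj
      exact hi (hall i)
    · obtain ⟨i, hi⟩ := sepAB v u hv hu (fun h => hnadj h.symm)
      apply hi
      rw [Set.inter_comm]
      exact hall i
    · have hu2 : u ∈ V₂ := mem₂ hu
      have hv2 : v ∈ V₂ := mem₂ hv
      have hik0 : k - 1 < k := by omega
      set i : Fin k := ⟨k - 1, hik0⟩ with hi
      have hik : ¬((i : ℕ) + 1 < k) := by
        have : (i : ℕ) = k - 1 := rfl
        omega
      obtain ⟨hua, hub⟩ := sb hu hik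
      obtain ⟨hva, hvb⟩ := sb hv hik
      have h4 := hall i
      rw [hiff] at h4
      rw [hua, hub] at h4
      rw [hva, hvb] at h4
      have : (P u : ℝ) = (P v : ℝ) := le_antisymm h4.2.2.1 h4.2.2.2
      exact hne (hPinj hu2 hv2 (by exact_mod_cast this))

/-- For a bipartite graph `G` with bipartition `(V₁, V₂)`, `|V₁| = n₁`, `|V₂| = n₂`,
`3 ≤ n₁ ≤ n₂`, we have `box(G) ≤ ⌈n₁/2⌉`, and in particular
`box(G) ≤ min {⌈n₁/2⌉, ⌈n₂/2⌉}`. -/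
theorem boxicity_bipartite {V : Type*} [Fintype V] [DecidableEq V] (G : SimpleGraph V)
    (V₁ V₂ : Finset V) (hdisj : Disjoint V₁ V₂) (hunion : V₁ ∪ V₂ = Finset.univ)
    (hbip : ∀ ⦃u v : V⦄, G.Adj u v → (u ∈ V₁ ∧ v ∈ V₂) ∨ (u ∈ V₂ ∧ v ∈ V₁))
    (n₁ n₂ : ℕ) (hn₁ : n₁ = V₁.card) (hn₂ : n₂ = V₂.card)
    (h3 : 3 ≤ n₁) (h12 : n₁ ≤ n₂) :
    boxicity G ≤ (n₁ + 1) / 2 ∧ boxicity G ≤ min ((n₁ + 1) / 2) ((n₂ + 1) / 2) := by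
  have key : HasBoxRep G ((n₁ + 1) / 2) :=
    boxrep_aux G V₁ V₂ hdisj hunion hbip n₁ n₂ hn₁ hn₂ h3 h12
  have h1 : boxicity G ≤ (n₁ + 1) / 2 := Nat.sInf_le key
  exact ⟨h1, le_min h1 (h1.trans (Nat.div_le_div_right (by omega)))⟩
end

section
/- Let G be a finite simple graph on n ≥ 1 vertices with 2·box(G) ≤ n, and write box(G) = n/2 − s with s ≥ 0. Then χ(G) ≥ n/(2s + 2); equivalently, (n − 2·box(G) + 2) · χ(G) ≥ n. -/
namespace BoxAux

variable {V : Type*}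

lemma icc_meet {a b c d t : ℝ} (h1 : a ≤ t) (h2 : t ≤ b) (h3 : c ≤ t) (h4 : t ≤ d) :
    (Set.Icc a b ∩ Set.Icc c d).Nonempty := ⟨t, ⟨h1, h2⟩, ⟨h3, h4⟩⟩

lemma icc_empty {a b c d : ℝ} (h : b < c) : Set.Icc a b ∩ Set.Icc c d = ∅ := by
  ext x
  simp only [Set.mem_inter_iff, Set.mem_Icc, Set.mem_empty_iff_false, iff_false, not_and]
  rintro ⟨_, h1⟩ h2
  intro h3
  linarith

lemma icc_empty' {a b c d : ℝ} (h : d < a) : Set.Icc a b ∩ Set.Icc c d = ∅ := by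
  rw [Set.inter_comm]; exact icc_empty h

/-- Partial box representation: all adjacent pairs meet in every coordinate, and
every non-edge whose (first) endpoint is outside `A ∪ R` is separated in some
coordinate. -/
def PR (G : SimpleGraph V) (A R : Finset V) (k : ℕ) : Prop :=
  ∃ a b : V → Fin k → ℝ,
    (∀ v i, a v i ≤ b v i) ∧
    (∀ u v, G.Adj u v → ∀ i, (Set.Icc (a u i) (b u i) ∩ Set.Icc (a v i) (b v i)).Nonempty) ∧
    (∀ u v, u ≠ v → ¬G.Adj u v → u ∉ A → u ∉ R →
      ∃ i, Set.Icc (a u i) (b u i) ∩ Set.Icc (a v i) (b v i) = ∅)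

lemma PR.extend {G : SimpleGraph V} {A R R' : Finset V} {k : ℕ}
    (h : PR G A R k) (p q : V → ℝ)
    (hpq : ∀ v, p v ≤ q v)
    (hadj : ∀ u v, G.Adj u v → (Set.Icc (p u) (q u) ∩ Set.Icc (p v) (q v)).Nonempty)
    (hkill : ∀ u v, u ≠ v → ¬G.Adj u v → u ∉ A → u ∉ R' →
      Set.Icc (p u) (q u) ∩ Set.Icc (p v) (q v) = ∅ ∨ u ∉ R ∨ (v ∉ A ∧ v ∉ R)) :
    PR G A R' (k + 1) := by
  obtain ⟨a, b, hab, hAdj, hK⟩ := h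
  refine ⟨fun v => Fin.snoc (a v) (p v), fun v => Fin.snoc (b v) (q v), ?_, ?_, ?_⟩
  · intro v i
    refine Fin.lastCases ?_ ?_ i
    · simpa using hpq v
    · intro j; simpa using hab v j
  · intro u v huv i
    refine Fin.lastCases ?_ ?_ i
    · simpa using hadj u v huv
    · intro j; simpa using hAdj u v huv j
  · intro u v hne hnadj hA' hR'
    rcases hkill u v hne hnadj hA' hR' with hk | hk | hk
    · exact ⟨Fin.last k, by simpa using hk⟩
    · obtain ⟨i, hi⟩ := hK u v hne hnadj hA' hk
      exact ⟨i.castSucc, by simpa using hi⟩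
    · obtain ⟨i, hi⟩ := hK v u hne.symm (fun h' => hnadj h'.symm) hk.1 hk.2
      exact ⟨i.castSucc, by rw [Set.inter_comm]; simpa using hi⟩

lemma PR.finish {G : SimpleGraph V} {A R : Finset V} {k : ℕ}
    (h : PR G A R k) (p q : V → ℝ)
    (hpq : ∀ v, p v ≤ q v)
    (hadj : ∀ u v, G.Adj u v → (Set.Icc (p u) (q u) ∩ Set.Icc (p v) (q v)).Nonempty)
    (hkill : ∀ u v, u ≠ v → ¬G.Adj u v →
      Set.Icc (p u) (q u) ∩ Set.Icc (p v) (q v) = ∅ ∨ (u ∉ A ∧ u ∉ R) ∨ (v ∉ A ∧ v ∉ R)) :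
    HasBoxRep G (k + 1) := by
  obtain ⟨a, b, hab, hAdj, hK⟩ := h
  refine ⟨fun v => Fin.snoc (a v) (p v), fun v => Fin.snoc (b v) (q v), ?_, ?_⟩
  · intro v i
    refine Fin.lastCases ?_ ?_ i
    · simpa using hpq v
    · intro j; simpa using hab v j
  · intro u v hne
    constructor
    · intro huv i
      refine Fin.lastCases ?_ ?_ i
      · simpa using hadj u v huv
      · intro j; simpa using hAdj u v huv j
    · intro hall
      by_contra hnadj
      have hex : ∃ i : Fin (k + 1),
          Set.Icc ((Fin.snoc (a u) (p u) : Fin (k+1) → ℝ) i) ((Fin.snoc (b u) (q u) : Fin (k+1) → ℝ) i) ∩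
            Set.Icc ((Fin.snoc (a v) (p v) : Fin (k+1) → ℝ) i) ((Fin.snoc (b v) (q v) : Fin (k+1) → ℝ) i) = ∅ := by
        rcases hkill u v hne hnadj with hk | hk | hk
        · exact ⟨Fin.last k, by simpa using hk⟩
        · obtain ⟨i, hi⟩ := hK u v hne hnadj hk.1 hk.2
          exact ⟨i.castSucc, by simpa using hi⟩
        · obtain ⟨i, hi⟩ := hK v u hne.symm (fun h' => hnadj h'.symm) hk.1 hk.2
          exact ⟨i.castSucc, by rw [Set.inter_comm]; simpa using hi⟩
      obtain ⟨i, hi⟩ := hex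
      have := hall i
      rw [hi] at this
      exact Set.not_nonempty_empty this


section Steps
variable [DecidableEq V] {G : SimpleGraph V} {A R : Finset V} {k : ℕ} {x y : V}

/-- Step for a non-adjacent pair `x, y`: one extra dimension kills every
non-edge incident to `x` or `y`. -/
lemma step1 (hne : x ≠ y) (hnadj : ¬G.Adj x y)
    (h : PR G A R k) : PR G A ((R.erase x).erase y) (k + 1) := by
  classical
  set p : V → ℝ := fun v =>
    if v = x then 0 else if v = y then 3 else if G.Adj v x then 1 else 2 with hp
  set q : V → ℝ := fun v =>
    if v = x then 1 else if v = y then 4 else if G.Adj v y then 3 else 2 with hq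
  have hpx : p x = 0 := by simp [hp]
  have hqx : q x = 1 := by simp [hq, hne]
  have hpy : p y = 3 := by simp [hp, hne.symm]
  have hqy : q y = 4 := by simp [hq, hne.symm]
  have hpv : ∀ v, v ≠ x → v ≠ y → 1 ≤ p v ∧ p v ≤ 2 := by
    intro v h1 h2
    simp only [hp, if_neg h1, if_neg h2]
    split_ifs <;> norm_num
  have hqv : ∀ v, v ≠ x → v ≠ y → 2 ≤ q v ∧ q v ≤ 3 := by
    intro v h1 h2
    simp only [hq, if_neg h1, if_neg h2]
    split_ifs <;> norm_num
  have hpadj : ∀ v, v ≠ x → v ≠ y → G.Adj v x → p v = 1 := by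
    intro v h1 h2 h3
    simp only [hp, if_neg h1, if_neg h2, if_pos h3]
  have hpnadj : ∀ v, v ≠ x → v ≠ y → ¬G.Adj v x → p v = 2 := by
    intro v h1 h2 h3
    simp only [hp, if_neg h1, if_neg h2, if_neg h3]
  have hqadj : ∀ v, v ≠ x → v ≠ y → G.Adj v y → q v = 3 := by
    intro v h1 h2 h3
    simp only [hq, if_neg h1, if_neg h2, if_pos h3]
  have hqnadj : ∀ v, v ≠ x → v ≠ y → ¬G.Adj v y → q v = 2 := by
    intro v h1 h2 h3
    simp only [hq, if_neg h1, if_neg h2, if_neg h3]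
  refine h.extend p q ?_ ?_ ?_
  · intro v
    by_cases h1 : v = x
    · subst h1; rw [hpx, hqx]; norm_num
    by_cases h2 : v = y
    · subst h2; rw [hpy, hqy]; norm_num
    · exact le_trans (hpv v h1 h2).2 (hqv v h1 h2).1
  · intro u v huv
    by_cases hux : x = u
    · subst hux
      have hvx : v ≠ x := huv.ne'
      have hvy : v ≠ y := fun h' => hnadj (h' ▸ huv)
      rw [hpx, hqx, hpadj v hvx hvy huv.symm]
      exact icc_meet (by norm_num) le_rfl le_rfl (le_trans (by norm_num) (hqv v hvx hvy).1)
    by_cases huy : y = u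
    · subst huy
      have hvy : v ≠ y := huv.ne'
      have hvx : v ≠ x := fun h' => hnadj ((h' ▸ huv) : G.Adj y x).symm
      rw [hpy, hqy, hqadj v hvx hvy huv.symm]
      exact icc_meet le_rfl (by norm_num) (le_trans (hpv v hvx hvy).2 (by norm_num)) le_rfl
    by_cases hvx : x = v
    · subst hvx
      rw [hpx, hqx, hpadj u (Ne.symm hux) (Ne.symm huy) huv]
      exact icc_meet le_rfl (le_trans (by norm_num) (hqv u (Ne.symm hux) (Ne.symm huy)).1)
        (by norm_num) le_rfl
    by_cases hvy : y = v
    · subst hvy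
      rw [hpy, hqy, hqadj u (Ne.symm hux) (Ne.symm huy) huv]
      exact icc_meet (le_trans (hpv u (Ne.symm hux) (Ne.symm huy)).2 (by norm_num)) le_rfl
        le_rfl (by norm_num)
    · exact icc_meet (hpv u (Ne.symm hux) (Ne.symm huy)).2 (hqv u (Ne.symm hux) (Ne.symm huy)).1
        (hpv v (Ne.symm hvx) (Ne.symm hvy)).2 (hqv v (Ne.symm hvx) (Ne.symm hvy)).1
  · intro u v hne' hnadj' hA' hR'
    by_cases hux : x = u
    · subst hux
      left
      by_cases hvy : y = v
      · subst hvy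
        rw [hpx, hqx, hpy, hqy]
        exact icc_empty (by norm_num)
      · have hvx : v ≠ x := hne'.symm
        rw [hqx, hpnadj v hvx (Ne.symm hvy) (fun h' => hnadj' h'.symm)]
        exact icc_empty (by norm_num)
    by_cases huy : y = u
    · subst huy
      left
      by_cases hvx : x = v
      · subst hvx
        rw [hpy, hqy, hqx]
        exact icc_empty' (by norm_num)
      · have hvy : v ≠ y := hne'.symm
        rw [hpy, hqnadj v (Ne.symm hvx) hvy (fun h' => hnadj' h'.symm)]
        exact icc_empty' (by norm_num)
    · right; left
      intro huR
      exact hR' (Finset.mem_erase.mpr ⟨Ne.symm huy, Finset.mem_erase.mpr ⟨Ne.symm hux, huR⟩⟩)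


/-- Step for an adjacent pair `x, y` such that every other vertex of `R` is
adjacent to both: one extra dimension kills the non-edges from `x` and `y`
to the independent set `A`. -/
lemma step2 (hne : x ≠ y) (hadjxy : G.Adj x y)
    (hind : ∀ u ∈ A, ∀ v ∈ A, ¬G.Adj u v)
    (hall : ∀ v ∈ R, v ≠ x → v ≠ y → G.Adj v x ∧ G.Adj v y)
    (h : PR G A R k) : PR G A ((R.erase x).erase y) (k + 1) := by
  classical
  set p : V → ℝ := fun v =>
    if v = x then 0 else if v = y then 2 else
      if v ∈ A then
        (if G.Adj v x then (if G.Adj v y then -9 else 0) else if G.Adj v y then 4 else 7)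
      else -9 with hp
  set q : V → ℝ := fun v =>
    if v = x then 3 else if v = y then 5 else
      if v ∈ A then
        (if G.Adj v x then (if G.Adj v y then 9 else 1) else if G.Adj v y then 5 else 7)
      else 9 with hq
  have hpx : p x = 0 := by simp [hp]
  have hqx : q x = 3 := by simp [hq]
  have hpy : p y = 2 := by simp [hp, hne.symm]
  have hqy : q y = 5 := by simp [hq, hne.symm]
  have hbounds : ∀ v, v ≠ x → v ≠ y → -9 ≤ p v ∧ p v ≤ q v ∧ q v ≤ 9 := by
    intro v h1 h2
    simp only [hp, hq, if_neg h1, if_neg h2]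
    split_ifs <;> norm_num
  have hadjx : ∀ v, v ≠ x → v ≠ y → G.Adj v x → p v ≤ 0 ∧ 0 ≤ q v := by
    intro v h1 h2 h3
    simp only [hp, hq, if_neg h1, if_neg h2]
    split_ifs <;> first | norm_num | exact absurd h3 (by assumption)
  have hadjy : ∀ v, v ≠ x → v ≠ y → G.Adj v y → p v ≤ 5 ∧ 5 ≤ q v := by
    intro v h1 h2 h3
    simp only [hp, hq, if_neg h1, if_neg h2]
    split_ifs <;> first | norm_num | exact absurd h3 (by assumption)
  have hnadjx : ∀ v, v ≠ x → v ≠ y → v ∈ A → ¬G.Adj v x → 4 ≤ p v := by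
    intro v h1 h2 h3 h4
    simp only [hp, if_neg h1, if_neg h2, if_pos h3]
    split_ifs <;> first | norm_num | exact absurd (by assumption) h4
  have hnadjy : ∀ v, v ≠ x → v ≠ y → v ∈ A → ¬G.Adj v y → (p v = 0 ∧ q v = 1) ∨ (p v = 7 ∧ q v = 7) := by
    intro v h1 h2 h3 h4
    simp only [hp, hq, if_neg h1, if_neg h2, if_pos h3]
    split_ifs <;> first | exact absurd (by assumption) h4 | (left; exact ⟨rfl, rfl⟩) | (right; exact ⟨rfl, rfl⟩)
  have hbig : ∀ v, v ≠ x → v ≠ y → v ∉ A → p v = -9 ∧ q v = 9 := by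
    intro v h1 h2 h3
    exact ⟨by simp [hp, h1, h2, h3], by simp [hq, h1, h2, h3]⟩
  refine h.extend p q ?_ ?_ ?_
  · intro v
    by_cases h1 : v = x
    · subst h1; rw [hpx, hqx]; norm_num
    by_cases h2 : v = y
    · subst h2; rw [hpy, hqy]; norm_num
    · exact (hbounds v h1 h2).2.1
  · intro u v huv
    by_cases hux : x = u
    · subst hux
      by_cases hvy : y = v
      · subst hvy
        rw [hpx, hqx, hpy, hqy]
        exact icc_meet (t := 2) (by norm_num) (by norm_num) (by norm_num) (by norm_num)
      · have hvx : v ≠ x := huv.ne'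
        have h0 := hadjx v hvx (Ne.symm hvy) huv.symm
        rw [hpx, hqx]
        exact icc_meet le_rfl (by norm_num) h0.1 h0.2
    by_cases huy : y = u
    · subst huy
      by_cases hvx : x = v
      · subst hvx
        rw [hpy, hqy, hpx, hqx]
        exact icc_meet (t := 2) (by norm_num) (by norm_num) (by norm_num) (by norm_num)
      · have hvy : v ≠ y := huv.ne'
        have h0 := hadjy v (Ne.symm hvx) hvy huv.symm
        rw [hpy, hqy]
        exact icc_meet (by norm_num) le_rfl h0.1 h0.2
    by_cases hvx : x = v
    · subst hvx
      have h0 := hadjx u (Ne.symm hux) (Ne.symm huy) huv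
      rw [hpx, hqx]
      exact icc_meet h0.1 h0.2 le_rfl (by norm_num)
    by_cases hvy : y = v
    · subst hvy
      have h0 := hadjy u (Ne.symm hux) (Ne.symm huy) huv
      rw [hpy, hqy]
      exact icc_meet h0.1 h0.2 (by norm_num) le_rfl
    · -- both u, v differ from x, y; not both can be in A
      have hu := hbounds u (Ne.symm hux) (Ne.symm huy)
      have hv := hbounds v (Ne.symm hvx) (Ne.symm hvy)
      by_cases huA : u ∈ A
      · by_cases hvA : v ∈ A
        · exact absurd huv (hind u huA v hvA)
        · have h0 := hbig v (Ne.symm hvx) (Ne.symm hvy) hvA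
          rw [h0.1, h0.2]
          exact icc_meet le_rfl hu.2.1 hu.1 (le_trans hu.2.1 hu.2.2)
      · have h0 := hbig u (Ne.symm hux) (Ne.symm huy) huA
        rw [h0.1, h0.2]
        exact icc_meet hv.1 (le_trans hv.2.1 hv.2.2) le_rfl hv.2.1
  · intro u v hne' hnadj' hA' hR'
    by_cases hux : x = u
    · subst hux
      by_cases hvy : y = v
      · subst hvy; exact absurd hadjxy hnadj'
      have hvx : v ≠ x := hne'.symm
      by_cases hvA : v ∈ A
      · left
        have hnvx : ¬G.Adj v x := fun h' => hnadj' h'.symm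
        have h4 := hnadjx v hvx (Ne.symm hvy) hvA hnvx
        rw [hpx, hqx]
        exact icc_empty (by linarith)
      · by_cases hvR : v ∈ R
        · exact absurd (hall v hvR hvx (Ne.symm hvy)).1 (fun h' => hnadj' h'.symm)
        · exact Or.inr (Or.inr ⟨hvA, hvR⟩)
    by_cases huy : y = u
    · subst huy
      by_cases hvx : x = v
      · subst hvx; exact absurd hadjxy.symm hnadj'
      have hvy : v ≠ y := hne'.symm
      by_cases hvA : v ∈ A
      · left
        have hnvy : ¬G.Adj v y := fun h' => hnadj' h'.symm
        rw [hpy, hqy]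
        rcases hnadjy v (Ne.symm hvx) hvy hvA hnvy with ⟨h1, h2⟩ | ⟨h1, h2⟩
        · rw [h1, h2]; exact icc_empty' (by norm_num)
        · rw [h1, h2]; exact icc_empty (by norm_num)
      · by_cases hvR : v ∈ R
        · exact absurd (hall v hvR (Ne.symm hvx) hvy).2 (fun h' => hnadj' h'.symm)
        · exact Or.inr (Or.inr ⟨hvA, hvR⟩)
    · right; left
      intro huR
      exact hR' (Finset.mem_erase.mpr ⟨Ne.symm huy, Finset.mem_erase.mpr ⟨Ne.symm hux, huR⟩⟩)


lemma final [Fintype V] (hcard : R.card ≤ 1)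
    (hind : ∀ u ∈ A, ∀ v ∈ A, ¬G.Adj u v)
    (hRA : ∀ v ∈ R, v ∉ A) (h : PR G A R k) : HasBoxRep G (k + 1) := by
  classical
  set N : ℝ := (Fintype.card V : ℝ) with hN
  obtain ⟨f, hf1, hfn, hfinj⟩ :
      ∃ f : V → ℝ, (∀ v, 1 ≤ f v) ∧ (∀ v, f v ≤ N) ∧ (∀ u v : V, u ≠ v → f u ≠ f v) := by
    refine ⟨fun v => ((Fintype.equivFin V v : ℕ) : ℝ) + 1, ?_, ?_, ?_⟩
    · intro v
      have : (0 : ℝ) ≤ ((Fintype.equivFin V v : ℕ) : ℝ) := Nat.cast_nonneg _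
      show (1 : ℝ) ≤ ((Fintype.equivFin V v : ℕ) : ℝ) + 1
      linarith
    · intro v
      have h2 := (Fintype.equivFin V v).2
      have : ((Fintype.equivFin V v : ℕ) : ℝ) + 1 ≤ (Fintype.card V : ℝ) := by
        exact_mod_cast Nat.succ_le_of_lt h2
      simpa [hN] using this
    · intro u v hne' heq
      apply hne'
      have heq' : ((Fintype.equivFin V u : ℕ) : ℝ) + 1 = ((Fintype.equivFin V v : ℕ) : ℝ) + 1 := heq
      have h3 : ((Fintype.equivFin V u : ℕ) : ℝ) = ((Fintype.equivFin V v : ℕ) : ℝ) := by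
        linarith
      have : (Fintype.equivFin V u) = (Fintype.equivFin V v) := Fin.ext (by exact_mod_cast h3)
      exact (Fintype.equivFin V).injective this
  rcases R.eq_empty_or_nonempty with hR0 | ⟨z, hzR⟩
  · -- R is empty
    set p : V → ℝ := fun v => if v ∈ A then f v else -(N + 2) with hp
    set q : V → ℝ := fun v => if v ∈ A then f v else (N + 2) with hq
    have hApt : ∀ v, v ∈ A → p v = f v ∧ q v = f v := by
      intro v hv; exact ⟨by simp [hp, hv], by simp [hq, hv]⟩
    have hbig : ∀ v, v ∉ A → p v = -(N + 2) ∧ q v = N + 2 := by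
      intro v hv; exact ⟨by simp [hp, hv], by simp [hq, hv]⟩
    have hNpos : (0 : ℝ) ≤ N := Nat.cast_nonneg _
    refine h.finish p q ?_ ?_ ?_
    · intro v
      by_cases hv : v ∈ A
      · rw [(hApt v hv).1, (hApt v hv).2]
      · rw [(hbig v hv).1, (hbig v hv).2]; linarith
    · intro u v huv
      by_cases huA : u ∈ A
      · by_cases hvA : v ∈ A
        · exact absurd huv (hind u huA v hvA)
        · rw [(hApt u huA).1, (hApt u huA).2, (hbig v hvA).1, (hbig v hvA).2]
          exact icc_meet le_rfl le_rfl (by have := hf1 u; linarith) (by have := hfn u; linarith)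
      · rw [(hbig u huA).1, (hbig u huA).2]
        by_cases hvA : v ∈ A
        · rw [(hApt v hvA).1, (hApt v hvA).2]
          exact icc_meet (by have := hf1 v; linarith) (by have := hfn v; linarith) le_rfl le_rfl
        · rw [(hbig v hvA).1, (hbig v hvA).2]
          exact icc_meet (t := 0) (by linarith) (by linarith) (by linarith) (by linarith)
    · intro u v hne' hnadj'
      by_cases huA : u ∈ A
      · by_cases hvA : v ∈ A
        · left
          rw [(hApt u huA).1, (hApt u huA).2, (hApt v hvA).1, (hApt v hvA).2]
          rcases (hfinj u v hne').lt_or_gt with hlt | hlt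
          · exact icc_empty hlt
          · exact icc_empty' hlt
        · exact Or.inr (Or.inr ⟨hvA, by simp [hR0]⟩)
      · exact Or.inr (Or.inl ⟨huA, by simp [hR0]⟩)
  · -- R = {z}
    have hRz : R = {z} := by
      apply Finset.eq_singleton_iff_unique_mem.mpr
      exact ⟨hzR, fun w hw => Finset.card_le_one.mp hcard w hw z hzR⟩
    have hzA : z ∉ A := hRA z hzR
    set pt : V → ℝ := fun v => if G.Adj v z then -(f v) else f v with hptdef
    set p : V → ℝ := fun v =>
      if v = z then -(N + 2) else if v ∈ A then pt v else -(N + 2) with hp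
    set q : V → ℝ := fun v =>
      if v = z then -(1/2) else if v ∈ A then pt v else (N + 2) with hq
    have hNpos : (0 : ℝ) ≤ N := Nat.cast_nonneg _
    have hptb : ∀ v, -(N + 2) ≤ pt v ∧ pt v ≤ N + 2 := by
      intro v
      have h1 := hf1 v; have h2 := hfn v
      simp only [hptdef]
      split_ifs <;> constructor <;> linarith
    have hptne : ∀ u v : V, u ≠ v → pt u ≠ pt v := by
      intro u v hne'
      have h1u := hf1 u; have h1v := hf1 v
      have hfe := hfinj u v hne'
      simp only [hptdef]
      split_ifs <;> intro heq <;> first | (exact hfe (by linarith)) | linarith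
    have hpz : p z = -(N + 2) := by simp [hp]
    have hqz : q z = -(1/2) := by simp [hq]
    have hApt : ∀ v, v ≠ z → v ∈ A → p v = pt v ∧ q v = pt v := by
      intro v h1 h2; exact ⟨by simp [hp, h1, h2], by simp [hq, h1, h2]⟩
    have hbig : ∀ v, v ≠ z → v ∉ A → p v = -(N + 2) ∧ q v = N + 2 := by
      intro v h1 h2; exact ⟨by simp [hp, h1, h2], by simp [hq, h1, h2]⟩
    refine h.finish p q ?_ ?_ ?_
    · intro v
      by_cases h1 : v = z
      · subst h1; rw [hpz, hqz]; linarith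
      by_cases h2 : v ∈ A
      · rw [(hApt v h1 h2).1, (hApt v h1 h2).2]
      · rw [(hbig v h1 h2).1, (hbig v h1 h2).2]; linarith
    · intro u v huv
      by_cases huz : z = u
      · subst huz
        have hvz : v ≠ z := huv.ne'
        rw [hpz, hqz]
        by_cases hvA : v ∈ A
        · rw [(hApt v hvz hvA).1, (hApt v hvz hvA).2]
          have : pt v = -(f v) := by simp [hptdef, huv.symm]
          rw [this]
          have h1 := hf1 v; have h2 := hfn v
          exact icc_meet (by linarith) (by linarith) le_rfl le_rfl
        · rw [(hbig v hvz hvA).1, (hbig v hvz hvA).2]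
          exact icc_meet (t := -1) (by linarith) (by norm_num) (by linarith) (by linarith)
      by_cases hvz : z = v
      · subst hvz
        have huz' : u ≠ z := huv.ne
        rw [hpz, hqz]
        by_cases huA : u ∈ A
        · rw [(hApt u huz' huA).1, (hApt u huz' huA).2]
          have : pt u = -(f u) := by simp [hptdef, huv]
          rw [this]
          have h1 := hf1 u; have h2 := hfn u
          exact icc_meet le_rfl le_rfl (by linarith) (by linarith)
        · rw [(hbig u huz' huA).1, (hbig u huz' huA).2]
          exact icc_meet (t := -1) (by linarith) (by linarith) (by linarith) (by norm_num)
      · have huz' : u ≠ z := Ne.symm huz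
        have hvz' : v ≠ z := Ne.symm hvz
        by_cases huA : u ∈ A
        · by_cases hvA : v ∈ A
          · exact absurd huv (hind u huA v hvA)
          · rw [(hApt u huz' huA).1, (hApt u huz' huA).2,
              (hbig v hvz' hvA).1, (hbig v hvz' hvA).2]
            exact icc_meet le_rfl le_rfl (hptb u).1 (hptb u).2
        · rw [(hbig u huz' huA).1, (hbig u huz' huA).2]
          by_cases hvA : v ∈ A
          · rw [(hApt v hvz' hvA).1, (hApt v hvz' hvA).2]
            exact icc_meet (hptb v).1 (hptb v).2 le_rfl le_rfl
          · rw [(hbig v hvz' hvA).1, (hbig v hvz' hvA).2]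
            exact icc_meet (t := 0) (by linarith) (by linarith) (by linarith) (by linarith)
    · intro u v hne' hnadj'
      by_cases huz : z = u
      · subst huz
        have hvz : v ≠ z := hne'.symm
        by_cases hvA : v ∈ A
        · left
          rw [hpz, hqz, (hApt v hvz hvA).1, (hApt v hvz hvA).2]
          have hnvz : ¬G.Adj v z := fun h' => hnadj' h'.symm
          have : pt v = f v := by simp [hptdef, hnvz]
          rw [this]
          have h1 := hf1 v
          exact icc_empty (by linarith)
        · exact Or.inr (Or.inr ⟨hvA, by simp [hRz, hvz]⟩)
      by_cases hvz : z = v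
      · subst hvz
        have huz' : u ≠ z := hne'
        by_cases huA : u ∈ A
        · left
          rw [hpz, hqz, (hApt u huz' huA).1, (hApt u huz' huA).2]
          have : pt u = f u := by simp [hptdef, hnadj']
          rw [this]
          have h1 := hf1 u
          exact icc_empty' (by linarith)
        · exact Or.inr (Or.inl ⟨huA, by simp [hRz, huz']⟩)
      · have huz' : u ≠ z := Ne.symm huz
        have hvz' : v ≠ z := Ne.symm hvz
        by_cases huA : u ∈ A
        · by_cases hvA : v ∈ A
          · left
            rw [(hApt u huz' huA).1, (hApt u huz' huA).2,
              (hApt v hvz' hvA).1, (hApt v hvz' hvA).2]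
            rcases (hptne u v hne').lt_or_gt with hlt | hlt
            · exact icc_empty hlt
            · exact icc_empty' hlt
          · exact Or.inr (Or.inr ⟨hvA, by simp [hRz, hvz']⟩)
        · exact Or.inr (Or.inl ⟨huA, by simp [hRz, huz']⟩)

end Steps
lemma pr_start [Fintype V] [DecidableEq V] (G : SimpleGraph V) (A : Finset V) :
    PR G A (Finset.univ \ A) 0 := by
  refine ⟨fun _ i => i.elim0, fun _ i => i.elim0, ?_, ?_, ?_⟩
  · intro v i; exact i.elim0
  · intro u v _ i; exact i.elim0
  · intro u v _ _ hA hR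
    exact (hR (Finset.mem_sdiff.mpr ⟨Finset.mem_univ u, hA⟩)).elim

lemma main [Fintype V] [DecidableEq V] {G : SimpleGraph V} {A : Finset V}
    (hind : ∀ u ∈ A, ∀ v ∈ A, ¬G.Adj u v) :
    ∀ N (R : Finset V) (k : ℕ), R.card = N → (∀ v ∈ R, v ∉ A) → PR G A R k →
      HasBoxRep G (k + N / 2 + 1) := by
  intro N
  induction N using Nat.strong_induction_on with
  | _ N ih =>
    intro R k hcard hRA hPR
    by_cases hN : N ≤ 1
    · have h0 : N / 2 = 0 := by omega
      rw [h0]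
      exact final (by omega : R.card ≤ 1) hind hRA hPR
    · have h2 : 1 < R.card := by omega
      have key : ∀ x y : V, x ∈ R → y ∈ R → x ≠ y →
          PR G A ((R.erase x).erase y) (k + 1) → HasBoxRep G (k + N / 2 + 1) := by
        intro x y hx hy hxy hPR'
        have hyx : y ∈ R.erase x := Finset.mem_erase.mpr ⟨hxy.symm, hy⟩
        have hc : ((R.erase x).erase y).card = N - 2 := by
          rw [Finset.card_erase_of_mem hyx, Finset.card_erase_of_mem hx]
          omega
        have hsub : ∀ v ∈ (R.erase x).erase y, v ∉ A := fun v hv =>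
          hRA v (Finset.mem_of_mem_erase (Finset.mem_of_mem_erase hv))
        have hres := ih (N - 2) (by omega) _ (k + 1) hc hsub hPR'
        have harith : k + 1 + (N - 2) / 2 + 1 = k + N / 2 + 1 := by omega
        rwa [harith] at hres
      by_cases hex : ∃ u ∈ R, ∃ v ∈ R, u ≠ v ∧ ¬G.Adj u v
      · obtain ⟨u, hu, v, hv, huv, hnadj⟩ := hex
        exact key u v hu hv huv (step1 huv hnadj hPR)
      · push_neg at hex
        obtain ⟨x, hx, y, hy, hxy⟩ := Finset.one_lt_card.mp h2
        have hadjxy : G.Adj x y := hex x hx y hy hxy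
        have hall : ∀ v ∈ R, v ≠ x → v ≠ y → G.Adj v x ∧ G.Adj v y :=
          fun v hv hx' hy' => ⟨hex v hv x hx hx', hex v hv y hy hy'⟩
        exact key x y hx hy hxy (step2 hxy hadjxy hind hall hPR)

lemma box_le [Fintype V] (G : SimpleGraph V) (A : Finset V)
    (hind : ∀ u ∈ A, ∀ v ∈ A, ¬G.Adj u v) :
    boxicity G ≤ (Fintype.card V - A.card) / 2 + 1 := by
  classical
  have hc : (Finset.univ \ A).card = Fintype.card V - A.card := by
    rw [Finset.card_sdiff_of_subset (Finset.subset_univ A), Finset.card_univ]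
  have hrep := main hind (Fintype.card V - A.card) (Finset.univ \ A) 0 hc
    (fun v hv => (Finset.mem_sdiff.mp hv).2) (pr_start G A)
  apply Nat.sInf_le
  simpa using hrep

lemma exists_color_class [Fintype V] [Nonempty V] (G : SimpleGraph V) :
    ∃ A : Finset V, (∀ u ∈ A, ∀ v ∈ A, ¬G.Adj u v) ∧
      Fintype.card V ≤ (G.chromaticNumber.toNat) * A.card := by
  classical
  have hcol : G.Colorable (G.chromaticNumber.toNat) := G.colorable_chromaticNumber_of_fintype
  obtain ⟨C⟩ := hcol
  set t := G.chromaticNumber.toNat with ht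
  have htpos : 0 < t := (C (Classical.arbitrary V)).pos
  obtain ⟨c, -, hc⟩ := Finset.exists_max_image (Finset.univ : Finset (Fin t))
      (fun c => (Finset.univ.filter fun v => C v = c).card) ⟨⟨0, htpos⟩, Finset.mem_univ _⟩
  refine ⟨Finset.univ.filter fun v => C v = c, ?_, ?_⟩
  · intro u hu v hv hadj
    have hval := C.valid hadj
    rw [Finset.mem_filter] at hu hv
    exact hval (hu.2.trans hv.2.symm)
  · have hsum : Fintype.card V = ∑ c' : Fin t, (Finset.univ.filter fun v => C v = c').card := by
      rw [← Finset.card_univ]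
      exact Finset.card_eq_sum_card_fiberwise (fun v _ => Finset.mem_univ (C v))
    calc Fintype.card V
        = ∑ c' : Fin t, (Finset.univ.filter fun v => C v = c').card := hsum
      _ ≤ ∑ _c' : Fin t, (Finset.univ.filter fun v => C v = c).card :=
          Finset.sum_le_sum (fun i _ => hc i (Finset.mem_univ i))
      _ = t * (Finset.univ.filter fun v => C v = c).card := by
          rw [Finset.sum_const, Finset.card_univ, Fintype.card_fin, smul_eq_mul]

end BoxAux

/-- If `box(G) = n/2 - s` then `χ(G) ≥ n/(2s + 2)`; equivalently, for `2·box(G) ≤ n`,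
`(n - 2·box(G) + 2) · χ(G) ≥ n`. -/
theorem chromaticNumber_ge_of_boxicity {V : Type*} [Fintype V] [Nonempty V]
    (G : SimpleGraph V) (n : ℕ) (hn : n = Fintype.card V)
    (hbox : 2 * boxicity G ≤ n) :
    (n : ℕ∞) ≤ ((n - 2 * boxicity G + 2 : ℕ) : ℕ∞) * G.chromaticNumber := by
  classical
  obtain ⟨A, hind, hcard⟩ := BoxAux.exists_color_class G
  set t := G.chromaticNumber.toNat with ht
  have hne_top : G.chromaticNumber ≠ ⊤ :=
    SimpleGraph.chromaticNumber_ne_top_iff_exists.mpr ⟨Fintype.card V, G.colorable_of_fintype⟩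
  have hχ : G.chromaticNumber = (t : ℕ∞) := (ENat.coe_toNat hne_top).symm
  have hb : boxicity G ≤ (Fintype.card V - A.card) / 2 + 1 := BoxAux.box_le G A hind
  have hAle : A.card ≤ Fintype.card V := by
    simpa using Finset.card_le_card (Finset.subset_univ A)
  have h1 : A.card ≤ n - 2 * boxicity G + 2 := by omega
  have key : n ≤ (n - 2 * boxicity G + 2) * t := by
    calc n ≤ t * A.card := by rw [hn]; exact hcard
      _ ≤ t * (n - 2 * boxicity G + 2) := Nat.mul_le_mul_left t h1
      _ = (n - 2 * boxicity G + 2) * t := Nat.mul_comm _ _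
  rw [hχ]
  exact_mod_cast key
end

section
/- For every m ≥ 1, the star graph K_{1,m} (one center vertex adjacent to m leaves, with no edges among the leaves) satisfies cub(K_{1,m}) = ⌈log₂ m⌉. -/
lemma star_rep_of_le (m k : ℕ) (h : m ≤ 2 ^ k) :
    HasCubeRep (completeBipartiteGraph (Fin 1) (Fin m)) k := by
  refine ⟨Sum.elim (fun _ _ => 0) (fun j i => if (j : ℕ).testBit i then 1 else -1), ?_⟩
  rintro (a | j) (b | j') huv
  · exact absurd (congrArg Sum.inl (Subsingleton.elim a b)) huv
  · simp only [completeBipartiteGraph_adj, Sum.isLeft_inl, Sum.isRight_inr, Sum.elim_inl,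
      Sum.elim_inr, Sum.isRight_inl, Sum.isLeft_inr]
    constructor
    · intro _ i
      split <;> norm_num
    · intro _; simp
  · simp only [completeBipartiteGraph_adj, Sum.isLeft_inl, Sum.isRight_inr, Sum.elim_inl,
      Sum.elim_inr, Sum.isRight_inl, Sum.isLeft_inr]
    constructor
    · intro _ i
      split <;> norm_num
    · intro _; simp
  · simp only [completeBipartiteGraph_adj, Sum.isRight_inr, Sum.isLeft_inr, Sum.elim_inr]
    have hjj : (j : ℕ) ≠ (j' : ℕ) := by
      intro he; exact huv (congrArg Sum.inr (Fin.ext he))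
    have : ∃ i, i < k ∧ (j : ℕ).testBit i ≠ (j' : ℕ).testBit i := by
      by_contra hcon
      push_neg at hcon
      apply hjj
      apply Nat.eq_of_testBit_eq
      intro i
      rcases lt_or_ge i k with hi | hi
      · exact hcon i hi
      · rw [Nat.testBit_eq_false_of_lt (lt_of_lt_of_le j.2 (h.trans (Nat.pow_le_pow_right (by norm_num) hi))),
          Nat.testBit_eq_false_of_lt (lt_of_lt_of_le j'.2 (h.trans (Nat.pow_le_pow_right (by norm_num) hi)))]
    obtain ⟨i, hik, hbit⟩ := this
    constructor
    · simp
    · intro hall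
      have := hall ⟨i, hik⟩
      rcases Bool.eq_false_or_eq_true ((j : ℕ).testBit i) with hb | hb <;>
        rcases Bool.eq_false_or_eq_true ((j' : ℕ).testBit i) with hb' | hb' <;>
        simp [hb, hb'] at this hbit <;> norm_num at this

lemma le_of_star_rep (m k : ℕ) (h : HasCubeRep (completeBipartiteGraph (Fin 1) (Fin m)) k) :
    m ≤ 2 ^ k := by
  obtain ⟨c, hc⟩ := h
  have hadj : ∀ j : Fin m, ∀ i, |c (Sum.inl 0) i - c (Sum.inr j) i| ≤ 1 := fun j =>
    (hc (Sum.inl 0) (Sum.inr j) (by simp)).mp (by simp)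
  have hinj : Function.Injective
      (fun j : Fin m => fun i : Fin k => decide (c (Sum.inl 0) i ≤ c (Sum.inr j) i)) := by
    intro j j' hjj'
    by_contra hne
    have hne' : (Sum.inr j : Fin 1 ⊕ Fin m) ≠ Sum.inr j' := by
      simpa using hne
    have hnadj : ¬ (completeBipartiteGraph (Fin 1) (Fin m)).Adj (Sum.inr j) (Sum.inr j') := by
      simp
    have h2 : ¬ ∀ i, |c (Sum.inr j) i - c (Sum.inr j') i| ≤ 1 :=
      fun hall => hnadj ((hc _ _ hne').mpr hall)
    push_neg at h2
    obtain ⟨i, hi⟩ := h2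
    have h1 := hadj j i
    have h1' := hadj j' i
    have hd : decide (c (Sum.inl 0) i ≤ c (Sum.inr j) i)
        = decide (c (Sum.inl 0) i ≤ c (Sum.inr j') i) := congrFun hjj' i
    rw [decide_eq_decide] at hd
    rw [abs_le] at h1 h1'
    rcases le_or_gt (c (Sum.inl 0) i) (c (Sum.inr j) i) with hle | hlt
    · have := hd.mp hle
      rcases abs_cases (c (Sum.inr j) i - c (Sum.inr j') i) with ⟨he, _⟩ | ⟨he, _⟩ <;> linarith
    · have : ¬ c (Sum.inl 0) i ≤ c (Sum.inr j') i := fun hx => absurd (hd.mpr hx) (not_le.mpr hlt)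
      rcases abs_cases (c (Sum.inr j) i - c (Sum.inr j') i) with ⟨he, _⟩ | ⟨he, _⟩ <;>
        push_neg at this <;> linarith
  calc m = Fintype.card (Fin m) := (Fintype.card_fin m).symm
    _ ≤ Fintype.card (Fin k → Bool) := Fintype.card_le_of_injective _ hinj
    _ = 2 ^ k := by simp

/-- The star `K_{1,m}` has cubicity `⌈log₂ m⌉`. -/
theorem cubicity_star (m : ℕ) (hm : 1 ≤ m) :
    cubicity (completeBipartiteGraph (Fin 1) (Fin m)) = Nat.clog 2 m := by
  have hset : {k : ℕ | HasCubeRep (completeBipartiteGraph (Fin 1) (Fin m)) k}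
      = Set.Ici (Nat.clog 2 m) := by
    ext k
    simp only [Set.mem_setOf_eq, Set.mem_Ici]
    constructor
    · intro h
      exact (Nat.clog_le_iff_le_pow (by norm_num)).mpr (le_of_star_rep m k h)
    · intro h
      exact star_rep_of_le m k ((Nat.clog_le_iff_le_pow (by norm_num)).mp h)
  rw [cubicity, hset, csInf_Ici]
end

section
/- For every m ≥ 1, the crown graph H_m satisfies box(H_m) ≥ ⌈m/2⌉. -/
/-- The crown graph `H_m` (`K_{m,m}` minus a perfect matching): `(s, i)` and `(t, j)`
are adjacent iff `s ≠ t` and `i ≠ j`. -/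
def crownGraph (m : ℕ) : SimpleGraph (Fin 2 × Fin m) :=
  SimpleGraph.fromRel (fun p q => p.1 ≠ q.1 ∧ p.2 ≠ q.2)

open Classical in
/-- Every graph on a finite vertex type has some box representation. -/
lemma hasBoxRep_card {V : Type*} [Fintype V] (G : SimpleGraph V) :
    HasBoxRep G (Fintype.card (V × V)) := by
  classical
  set e := (Fintype.equivFin (V × V)).symm with he
  refine ⟨fun v i => if (e i).1 ≠ (e i).2 ∧ ¬ G.Adj (e i).1 (e i).2 ∧ v = (e i).2 then 1 else 0,
          fun v i => if (e i).1 ≠ (e i).2 ∧ ¬ G.Adj (e i).1 (e i).2 ∧ v = (e i).1 then 0 else 1,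
          ?_, ?_⟩
  · intro v i
    dsimp only
    by_cases h1 : (e i).1 ≠ (e i).2 ∧ ¬ G.Adj (e i).1 (e i).2 ∧ v = (e i).2
    · rw [if_pos h1, if_neg]
      rintro ⟨hne, -, hv⟩
      exact hne (hv.symm.trans h1.2.2)
    · rw [if_neg h1]
      split <;> norm_num
  · intro u v huv
    dsimp only
    constructor
    · intro hadj i
      by_cases hu : (e i).1 ≠ (e i).2 ∧ ¬ G.Adj (e i).1 (e i).2 ∧ u = (e i).2
      · -- u's interval is [1,1]; v can't be (e i).1 else adjacency contradiction
        have hv1 : v ≠ (e i).1 := by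
          rintro rfl
          exact hu.2.1 (hu.2.2 ▸ hadj).symm
        refine ⟨1, ?_, ?_⟩ <;> simp only [Set.mem_Icc]
        · constructor
          · rw [if_pos hu]
          · rw [if_neg]; rintro ⟨hne, -, h⟩; exact hne ((hu.2.2 ▸ h : (e i).2 = (e i).1).symm)
        · constructor
          · split <;> norm_num
          · rw [if_neg]; rintro ⟨-, -, h⟩; exact hv1 h
      · by_cases hv : (e i).1 ≠ (e i).2 ∧ ¬ G.Adj (e i).1 (e i).2 ∧ v = (e i).2
        · have hu1 : u ≠ (e i).1 := by
            rintro rfl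
            exact hv.2.1 (hv.2.2 ▸ hadj.symm).symm
          refine ⟨1, ?_, ?_⟩ <;> simp only [Set.mem_Icc]
          · constructor
            · split <;> norm_num
            · rw [if_neg]; rintro ⟨-, -, h⟩; exact hu1 h
          · constructor
            · rw [if_pos hv]
            · rw [if_neg]; rintro ⟨hne, -, h⟩; exact hne ((hv.2.2 ▸ h : (e i).2 = (e i).1).symm)
        · -- both lower corners are 0, and we claim both upper corners are ≥ 0
          refine ⟨0, ?_, ?_⟩ <;> simp only [Set.mem_Icc]
          · exact ⟨by rw [if_neg hu], by split <;> norm_num⟩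
          · exact ⟨by rw [if_neg hv], by split <;> norm_num⟩
    · intro h
      by_contra hadj
      have key := h (e.symm (u, v))
      have he0 : e (e.symm (u, v)) = (u, v) := Equiv.apply_symm_apply _ _
      rw [he0] at key
      obtain ⟨x, hx1, hx2⟩ := key
      simp only [Set.mem_Icc] at hx1 hx2
      have hub : x ≤ 0 := by
        have := hx1.2
        rwa [if_pos ⟨huv, hadj, trivial⟩] at this
      have hva : (1 : ℝ) ≤ x := by
        have := hx2.1
        rwa [if_pos ⟨huv, hadj, trivial⟩] at this
      linarith

lemma crownGraph_adj (m : ℕ) (p q : Fin 2 × Fin m) :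
    (crownGraph m).Adj p q ↔ p ≠ q ∧ p.1 ≠ q.1 ∧ p.2 ≠ q.2 := by
  simp only [crownGraph, SimpleGraph.fromRel_adj]
  constructor
  · rintro ⟨h, ⟨h1, h2⟩ | ⟨h1, h2⟩⟩
    · exact ⟨h, h1, h2⟩
    · exact ⟨h, h1.symm, h2.symm⟩
  · rintro ⟨h, h1, h2⟩
    exact ⟨h, Or.inl ⟨h1, h2⟩⟩

/-- The crown graph `H_m` has boxicity at least `⌈m/2⌉`. -/
theorem boxicity_crownGraph_ge (m : ℕ) (hm : 1 ≤ m) :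
    (m + 1) / 2 ≤ boxicity (crownGraph m) := by
  classical
  refine le_csInf ⟨_, hasBoxRep_card (crownGraph m)⟩ ?_
  rintro k ⟨a, b, hab, hadj⟩
  -- For each i, the matching pair (0,i),(1,i) is non-adjacent, so some coordinate separates
  have key : ∀ i : Fin m, ∃ c : Fin k,
      b (0, i) c < a (1, i) c ∨ b (1, i) c < a (0, i) c := by
    intro i
    have hne : ((0 : Fin 2), i) ≠ ((1 : Fin 2), i) := by simp
    have hnadj : ¬ (crownGraph m).Adj (0, i) (1, i) := by
      rw [crownGraph_adj]; simp
    have hx := (hadj _ _ hne).not.mp hnadj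
    push_neg at hx
    obtain ⟨c, hc⟩ := hx
    rw [Set.eq_empty_iff_forall_notMem] at hc
    refine ⟨c, ?_⟩
    by_contra h
    push_neg at h
    exact hc (max (a (0, i) c) (a (1, i) c))
      ⟨Set.mem_Icc.mpr ⟨le_max_left _ _, max_le (hab _ _) h.1⟩,
       Set.mem_Icc.mpr ⟨le_max_right _ _, max_le h.2 (hab _ _)⟩⟩
  choose c hc using key
  -- crossing pairs are adjacent, so intervals intersect everywhere
  have cross : ∀ i j : Fin m, i ≠ j → ∀ d : Fin k,
      ∃ x, a (0, i) d ≤ x ∧ x ≤ b (0, i) d ∧ a (1, j) d ≤ x ∧ x ≤ b (1, j) d := by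
    intro i j hij d
    have hne : ((0 : Fin 2), i) ≠ ((1 : Fin 2), j) := by simp
    have hadj' : (crownGraph m).Adj (0, i) (1, j) := by
      rw [crownGraph_adj]; exact ⟨hne, by simp, hij⟩
    obtain ⟨x, hx1, hx2⟩ := (hadj _ _ hne).mp hadj' d
    exact ⟨x, hx1.1, hx1.2, hx2.1, hx2.2⟩
  -- the injection
  have hinj : Function.Injective
      (fun i : Fin m => (c i, decide (b (0, i) (c i) < a (1, i) (c i)))) := by
    intro i j hij
    by_contra hne
    simp only [Prod.mk.injEq, decide_eq_decide] at hij
    obtain ⟨hcc, hbb⟩ := hij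
    obtain ⟨x, hx1, hx2, hx3, hx4⟩ := cross i j hne (c i)
    obtain ⟨y, hy1, hy2, hy3, hy4⟩ := cross j i (Ne.symm hne) (c i)
    rcases hc i with h1 | h1
    · have h2 : b (0, j) (c j) < a (1, j) (c j) := hbb.mp h1
      rw [← hcc] at h2
      linarith
    · have h2 : b (1, j) (c j) < a (0, j) (c j) := by
        rcases hc j with h | h
        · exfalso
          have h1' := hbb.mpr h
          have h3 := hab (0, i) (c i)
          have h4 := hab (1, i) (c i)
          linarith
        · exact h
      rw [← hcc] at h2
      linarith
  have hcard := Fintype.card_le_of_injective _ hinj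
  simp only [Fintype.card_fin, Fintype.card_prod, Fintype.card_bool] at hcard
  omega
end
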